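/- arXiv:1507.02883 — 6 statements merged into one kernel-verified Lean document; each statement's English description precedes it below -/
import Mathlib

section
/- Lagrange–Jacobi identity: if y is an isolated collision solution at the origin, then there exist continuous functions B₁, B₂ : [−δ, δ] → ℝ such that for all t ∈ [−δ, δ] \ {0}: Ï(t) = (4 − 2α)·½|ẏ(t)|² + B₁(t) = (4 − 2α)·(h + V(y(t))) + B₁(t) = (4 − 2α)·m₁/(α|y(t)|^α) + B₂(t), where I(t) = |y(t)|². -/
open Filter Topology Set

noncomputable def ipc (z w : ℂ) : ℝ := z.re * w.re + z.im * w.im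

lemma ipc_self (z : ℂ) : ipc z z = ‖z‖ ^ 2 := by
  rw [Complex.sq_norm, Complex.normSq_apply, ipc]

lemma hasDerivAt_norm_sq {f : ℝ → ℂ} {f' : ℂ} {s : ℝ} (hf : HasDerivAt f f' s) :
    HasDerivAt (fun u => ‖f u‖ ^ 2) (2 * ipc (f s) f') s := by
  have hre : HasDerivAt (fun u => (f u).re) f'.re s := by
    exact Complex.reCLM.hasFDerivAt.comp_hasDerivAt s hf
  have him : HasDerivAt (fun u => (f u).im) f'.im s := by
    exact Complex.imCLM.hasFDerivAt.comp_hasDerivAt s hf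
  have h1 := (hre.mul hre).add (him.mul him)
  have heq : (fun u => ‖f u‖ ^ 2) = fun u => (f u).re * (f u).re + (f u).im * (f u).im := by
    funext u
    rw [Complex.sq_norm, Complex.normSq_apply]
  rw [heq]
  refine h1.congr_deriv ?_
  simp [ipc]; ring

lemma key_second_deriv (f : ℝ → ℂ) (t : ℝ) (S : Set ℝ)
    (hf : DifferentiableAt ℝ f t)
    (hf' : DifferentiableAt ℝ (deriv f) t)
    (hS : UniqueDiffWithinAt ℝ S t)
    (hnb : ∀ᶠ s in 𝓝[S] t, DifferentiableAt ℝ f s) :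
    deriv (deriv (fun s => ‖f s‖ ^ 2)) t
      = 2 * ‖deriv f t‖ ^ 2 + 2 * ipc (deriv (deriv f) t) (f t) := by
  set g : ℝ → ℝ := fun s => ‖f s‖ ^ 2 with hg
  set φ : ℝ → ℝ := fun s => 2 * ipc (f s) (deriv f s) with hφdef
  set D : ℝ := 2 * ‖deriv f t‖ ^ 2 + 2 * ipc (deriv (deriv f) t) (f t) with hD
  -- φ has derivative D at t
  have hre : HasDerivAt (fun u => (f u).re) ((deriv f t).re) t := by
    exact Complex.reCLM.hasFDerivAt.comp_hasDerivAt t hf.hasDerivAt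
  have him : HasDerivAt (fun u => (f u).im) ((deriv f t).im) t := by
    exact Complex.imCLM.hasFDerivAt.comp_hasDerivAt t hf.hasDerivAt
  have hre' : HasDerivAt (fun u => (deriv f u).re) ((deriv (deriv f) t).re) t := by
    exact Complex.reCLM.hasFDerivAt.comp_hasDerivAt t hf'.hasDerivAt
  have him' : HasDerivAt (fun u => (deriv f u).im) ((deriv (deriv f) t).im) t := by
    exact Complex.imCLM.hasFDerivAt.comp_hasDerivAt t hf'.hasDerivAt
  have hφ : HasDerivAt φ D t := by
    have h1 := (((hre.mul hre').add (him.mul him')).const_mul (2 : ℝ))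
    have heq : φ = fun s => 2 * ((f s).re * (deriv f s).re + (f s).im * (deriv f s).im) := by
      funext s; simp [hφdef, ipc]
    rw [heq]
    refine h1.congr_deriv ?_
    rw [hD, ← ipc_self]
    simp [ipc]; ring
  -- deriv g agrees with φ at differentiability points of f
  have hgd : ∀ s : ℝ, DifferentiableAt ℝ f s → deriv g s = φ s := fun s hs =>
    (hasDerivAt_norm_sq hs.hasDerivAt).deriv
  have heqS : deriv g =ᶠ[𝓝[S] t] φ := hnb.mono fun s hs => hgd s hs
  have hW : HasDerivWithinAt (deriv g) D S t :=
    (hφ.hasDerivWithinAt).congr_of_eventuallyEq heqS (hgd t hf)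
  by_cases hd : DifferentiableAt ℝ (deriv g) t
  · have h1 : derivWithin (deriv g) S t = D := hW.derivWithin hS
    have h2 : derivWithin (deriv g) S t = deriv (deriv g) t :=
      (hd.hasDerivAt.hasDerivWithinAt).derivWithin hS
    rw [← h2, h1]
  · -- junk case: show D = 0, i.e. deriv f t = 0 and second deriv = 0
    have hcontra : (∀ᶠ s in 𝓝 t, DifferentiableAt ℝ f s) → False := by
      intro hev
      have heq2 : deriv g =ᶠ[𝓝 t] φ := hev.mono fun s hs => hgd s hs
      exact hd (heq2.differentiableAt_iff.mpr hφ.differentiableAt)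
    have h1 : deriv f t = 0 := by
      by_contra h1
      apply hcontra
      filter_upwards [hf'.continuousAt.eventually_ne h1] with s hs
      by_contra hds
      exact hs (by rw [deriv_zero_of_not_differentiableAt hds])
    have h2 : deriv (deriv f) t = 0 := by
      by_contra h2
      apply hcontra
      have hslope := hasDerivAt_iff_tendsto_slope.mp hf'.hasDerivAt
      have hev : ∀ᶠ s in 𝓝[≠] t, DifferentiableAt ℝ f s := by
        filter_upwards [hslope.eventually_ne h2, self_mem_nhdsWithin] with s hs hs'
        by_contra hds
        apply hs
        rw [slope_def_module, deriv_zero_of_not_differentiableAt hds, h1]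
        simp
      rw [eventually_nhdsWithin_iff] at hev
      filter_upwards [hev] with s hs
      rcases eq_or_ne s t with rfl | hst
      · exact hf
      · exact hs hst
    rw [deriv_zero_of_not_differentiableAt hd, hD, h1, h2]
    simp [ipc]
lemma ipc_neg (z w : ℂ) : ipc (-z) w = -ipc z w := by
  simp [ipc]; ring

lemma ipc_sum {ι : Type*} (s : Finset ι) (z : ι → ℂ) (w : ℂ) :
    ipc (∑ j ∈ s, z j) w = ∑ j ∈ s, ipc (z j) w := by
  simp [ipc, Complex.re_sum, Complex.im_sum, Finset.sum_mul, ← Finset.sum_add_distrib]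

lemma ipc_real_mul (r : ℝ) (z w : ℂ) : ipc ((r : ℂ) * z) w = r * ipc z w := by
  simp [ipc, Complex.mul_re, Complex.ofReal_re, Complex.ofReal_im]; ring

lemma ipc_cast_div (mm r : ℝ) (v w : ℂ) :
    ipc ((mm : ℂ) * v / ((r : ℝ) : ℂ)) w = mm / r * ipc v w := by
  have h : (mm : ℂ) * v / ((r : ℝ) : ℂ) = ((mm / r : ℝ) : ℂ) * v := by
    push_cast; ring
  rw [h, ipc_real_mul]

/-- Lagrange–Jacobi identity at an isolated collision. -/
theorem stmt_2
    (N : ℕ) (hN : 0 < N) (c : Fin N → ℂ) (m : Fin N → ℝ)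
    (hc_inj : Function.Injective c) (hm : ∀ j, 0 < m j)
    (α : ℝ) (hα1 : 1 ≤ α) (hα2 : α < 2)
    (hc1 : c ⟨0, hN⟩ = 0)
    (δ : ℝ) (hδ : 0 < δ) (y : ℝ → ℂ)
    (hy_cont : ContinuousOn y (Set.Icc (-δ) δ))
    (hy0 : y 0 = 0)
    (hy_ne : ∀ t ∈ Set.Icc (-δ) δ, t ≠ 0 → ∀ j, y t ≠ c j)
    (hy_d1 : ∀ t ∈ Set.Icc (-δ) δ, t ≠ 0 → DifferentiableAt ℝ y t)
    (hy_d2 : ∀ t ∈ Set.Icc (-δ) δ, t ≠ 0 → DifferentiableAt ℝ (deriv y) t)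
    (hy_eq : ∀ t ∈ Set.Icc (-δ) δ, t ≠ 0 →
      deriv (deriv y) t = -∑ j, (m j : ℂ) * (y t - c j) / ((‖y t - c j‖ ^ (α + 2) : ℝ) : ℂ))
    (h : ℝ)
    (hy_energy : ∀ t ∈ Set.Icc (-δ) δ, t ≠ 0 →
      (1 / 2) * ‖deriv y t‖ ^ 2 - ∑ j, m j / (α * ‖y t - c j‖ ^ α) = h) :
    ∃ B₁ B₂ : ℝ → ℝ,
      ContinuousOn B₁ (Set.Icc (-δ) δ) ∧ ContinuousOn B₂ (Set.Icc (-δ) δ) ∧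
      ∀ t ∈ Set.Icc (-δ) δ, t ≠ 0 →
        deriv (deriv (fun s => ‖y s‖ ^ 2)) t
            = (4 - 2 * α) * ((1 / 2) * ‖deriv y t‖ ^ 2) + B₁ t ∧
        deriv (deriv (fun s => ‖y s‖ ^ 2)) t
            = (4 - 2 * α) * (h + ∑ j, m j / (α * ‖y t - c j‖ ^ α)) + B₁ t ∧
        deriv (deriv (fun s => ‖y s‖ ^ 2)) t
            = (4 - 2 * α) * (m ⟨0, hN⟩ / (α * ‖y t‖ ^ α)) + B₂ t := by
  classical
  have hα0 : α ≠ 0 := by linarith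
  set j₀ : Fin N := ⟨0, hN⟩ with hj₀
  have hne' : ∀ j, j ≠ j₀ → ∀ t ∈ Set.Icc (-δ) δ, y t - c j ≠ 0 := by
    intro j hj t ht
    rcases eq_or_ne t 0 with rfl | ht0
    · rw [hy0, zero_sub, neg_ne_zero]
      intro hc
      exact hj (hc_inj (by rw [hc, hc1]))
    · exact sub_ne_zero.mpr (hy_ne t ht ht0 j)
  set W : ℝ → ℝ := fun t => ∑ j ∈ Finset.univ.erase j₀, m j / (α * ‖y t - c j‖ ^ α) with hWdef
  set G : ℝ → ℝ := fun t =>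
    ∑ j ∈ Finset.univ.erase j₀, m j * ipc (y t - c j) (y t) / ‖y t - c j‖ ^ (α + 2) with hGdef
  have hWc : ContinuousOn W (Set.Icc (-δ) δ) := by
    apply continuousOn_finset_sum
    intro j hj
    apply ContinuousOn.div continuousOn_const
    · exact continuousOn_const.mul
        (((hy_cont.sub continuousOn_const).norm).rpow_const fun x hx => Or.inr (by linarith))
    · intro x hx
      exact mul_ne_zero hα0
        (Real.rpow_pos_of_pos (norm_pos_iff.mpr (hne' j (Finset.ne_of_mem_erase hj) x hx)) α).ne'
  have hGc : ContinuousOn G (Set.Icc (-δ) δ) := by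
    apply continuousOn_finset_sum
    intro j hj
    apply ContinuousOn.div
    · apply continuousOn_const.mul
      simp only [ipc]
      exact ((Complex.continuous_re.comp_continuousOn (hy_cont.sub continuousOn_const)).mul
          (Complex.continuous_re.comp_continuousOn hy_cont)).add
        ((Complex.continuous_im.comp_continuousOn (hy_cont.sub continuousOn_const)).mul
          (Complex.continuous_im.comp_continuousOn hy_cont))
    · exact ((hy_cont.sub continuousOn_const).norm).rpow_const fun x hx => Or.inr (by linarith)
    · intro x hx
      exact (Real.rpow_pos_of_pos (norm_pos_iff.mpr
        (hne' j (Finset.ne_of_mem_erase hj) x hx)) (α + 2)).ne'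
  refine ⟨fun t => 2 * α * h + 2 * α * W t - 2 * G t,
          fun t => 4 * h + 4 * W t - 2 * G t,
    (continuousOn_const.add (continuousOn_const.mul hWc)).sub (continuousOn_const.mul hGc),
    (continuousOn_const.add (continuousOn_const.mul hWc)).sub (continuousOn_const.mul hGc),
    ?_⟩
  intro t ht ht0
  have hd1 := hy_d1 t ht ht0
  have hd2 := hy_d2 t ht ht0
  have hyt0 : y t ≠ 0 := by
    have := hy_ne t ht ht0 j₀
    rwa [hc1] at this
  have hR : (0 : ℝ) < ‖y t‖ := norm_pos_iff.mpr hyt0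
  -- key second derivative identity
  have hkey : deriv (deriv (fun s => ‖y s‖ ^ 2)) t
      = 2 * ‖deriv y t‖ ^ 2 + 2 * ipc (deriv (deriv y) t) (y t) := by
    rcases lt_or_gt_of_ne ht0 with htneg | htpos
    · apply key_second_deriv y t (Set.Ici t) hd1 hd2 (uniqueDiffOn_Ici t t Set.self_mem_Ici)
      filter_upwards [(isOpen_Iio.eventually_mem htneg).filter_mono nhdsWithin_le_nhds,
        self_mem_nhdsWithin] with s hs1 hs2
      exact hy_d1 s ⟨le_trans ht.1 hs2, le_of_lt (lt_of_lt_of_le hs1 hδ.le)⟩ (ne_of_lt hs1)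
    · apply key_second_deriv y t (Set.Iic t) hd1 hd2 (uniqueDiffOn_Iic t t Set.self_mem_Iic)
      filter_upwards [(isOpen_Ioi.eventually_mem htpos).filter_mono nhdsWithin_le_nhds,
        self_mem_nhdsWithin] with s hs1 hs2
      refine hy_d1 s ⟨?_, le_trans hs2 ht.2⟩ (ne_of_gt hs1)
      have : (0:ℝ) < s := hs1
      linarith
  -- splitting the potential sum
  have hsplit : ∀ t' : ℝ, (∑ j, m j / (α * ‖y t' - c j‖ ^ α))
      = m j₀ / (α * ‖y t'‖ ^ α) + W t' := by
    intro t'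
    rw [← Finset.add_sum_erase Finset.univ _ (Finset.mem_univ j₀), hc1, sub_zero]
  -- the inner product with the force
  have hV : m j₀ / ‖y t‖ ^ α = α * (m j₀ / (α * ‖y t‖ ^ α)) := by
    have hRα' : ‖y t‖ ^ α ≠ 0 := (Real.rpow_pos_of_pos hR α).ne'
    field_simp
  have hFip : ipc (deriv (deriv y) t) (y t)
      = -(α * (m j₀ / (α * ‖y t‖ ^ α))) - G t := by
    rw [hy_eq t ht ht0, ipc_neg, ipc_sum,
      ← Finset.add_sum_erase Finset.univ _ (Finset.mem_univ j₀)]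
    have hterm0 : ipc ((m j₀ : ℂ) * (y t - c j₀) / ((‖y t - c j₀‖ ^ (α + 2) : ℝ) : ℂ)) (y t)
        = m j₀ / ‖y t‖ ^ α := by
      rw [hc1, sub_zero, ipc_cast_div, ipc_self]
      have h2 : (‖y t‖ : ℝ) ^ (2 : ℕ) = ‖y t‖ ^ ((2 : ℕ) : ℝ) := (Real.rpow_natCast _ 2).symm
      rw [h2, div_mul_eq_mul_div, mul_div_assoc, ← Real.rpow_sub hR]
      have h3 : ((2 : ℕ) : ℝ) - (α + 2) = -α := by push_cast; ring
      rw [h3, Real.rpow_neg hR.le, div_eq_mul_inv]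
    rw [hterm0, hV]
    have hrest : ∑ j ∈ Finset.univ.erase j₀,
        ipc ((m j : ℂ) * (y t - c j) / ((‖y t - c j‖ ^ (α + 2) : ℝ) : ℂ)) (y t) = G t := by
      rw [hGdef]
      apply Finset.sum_congr rfl
      intro j hj
      rw [ipc_cast_div]
      ring
    rw [hrest]
    ring
  -- energy relation
  have hE : ‖deriv y t‖ ^ 2 = 2 * (h + (m j₀ / (α * ‖y t‖ ^ α) + W t)) := by
    have := hy_energy t ht ht0
    rw [hsplit t] at this
    linarith
  have hRα : ‖y t‖ ^ α ≠ 0 := (Real.rpow_pos_of_pos hR α).ne'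
  refine ⟨?_, ?_, ?_⟩
  · rw [hkey, hFip, hE]; ring
  · rw [hkey, hFip, hE, hsplit t]; ring
  · rw [hkey, hFip, hE]; ring
end

section
/- Vanishing of the angular momentum at a collision: if y is an isolated collision solution at the origin and J(t) = Im(conj(y(t))·ẏ(t)), then lim_{t → 0} J(t) = 0. -/
open Filter Topology

/-- the angular momentum J(t) = Im(conj(y t) * y'(t)) tends to 0 at the collision. -/
theorem stmt_3
    (N : ℕ) (hN : 0 < N) (c : Fin N → ℂ) (m : Fin N → ℝ)
    (hc_inj : Function.Injective c) (hm : ∀ j, 0 < m j)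
    (α : ℝ) (hα1 : 1 ≤ α) (hα2 : α < 2)
    (hc1 : c ⟨0, hN⟩ = 0)
    (δ : ℝ) (hδ : 0 < δ) (y : ℝ → ℂ)
    (hy_cont : ContinuousOn y (Set.Icc (-δ) δ))
    (hy0 : y 0 = 0)
    (hy_ne : ∀ t ∈ Set.Icc (-δ) δ, t ≠ 0 → ∀ j, y t ≠ c j)
    (hy_d1 : ∀ t ∈ Set.Icc (-δ) δ, t ≠ 0 → DifferentiableAt ℝ y t)
    (hy_d2 : ∀ t ∈ Set.Icc (-δ) δ, t ≠ 0 → DifferentiableAt ℝ (deriv y) t)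
    (hy_eq : ∀ t ∈ Set.Icc (-δ) δ, t ≠ 0 →
      deriv (deriv y) t = -∑ j, (m j : ℂ) * (y t - c j) / ((‖y t - c j‖ ^ (α + 2) : ℝ) : ℂ))
    (h : ℝ)
    (hy_energy : ∀ t ∈ Set.Icc (-δ) δ, t ≠ 0 →
      (1 / 2) * ‖deriv y t‖ ^ 2 - ∑ j, m j / (α * ‖y t - c j‖ ^ α) = h) :
    Filter.Tendsto (fun t : ℝ => ((starRingEnd ℂ) (y t) * deriv y t).im)
      (𝓝[≠] (0 : ℝ)) (𝓝 0) := by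
  have hα0 : (0:ℝ) < α := lt_of_lt_of_le one_pos hα1
  set j0 : Fin N := ⟨0, hN⟩ with hj0
  have hIcc : Set.Icc (-δ) δ ∈ 𝓝 (0:ℝ) := Icc_mem_nhds (by linarith) hδ
  have hmemS : ∀ᶠ t in 𝓝[≠] (0:ℝ), t ∈ Set.Icc (-δ) δ ∧ t ≠ 0 := by
    filter_upwards [nhdsWithin_le_nhds hIcc, self_mem_nhdsWithin] with t h1 h2
    exact ⟨h1, h2⟩
  have hy_tendsto : Tendsto y (𝓝[≠] (0:ℝ)) (𝓝 0) := by
    have hca : ContinuousAt y 0 := (hy_cont 0 ⟨by linarith, by linarith⟩).continuousAt hIcc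
    simpa [hy0] using hca.tendsto.mono_left nhdsWithin_le_nhds
  have hyn : Tendsto (fun t => ‖y t‖) (𝓝[≠] (0:ℝ)) (𝓝 0) := by
    simpa using hy_tendsto.norm
  -- each term tends to 0
  have hterm : ∀ j : Fin N, Tendsto (fun t => ‖y t‖^2 * (m j / (α * ‖y t - c j‖ ^ α)))
      (𝓝[≠] (0:ℝ)) (𝓝 0) := by
    intro j
    by_cases hj : j = j0
    · subst hj
      -- near 0, equals (m j0 / α) * ‖y t‖ ^ (2 - α)
      have hrpow : Tendsto (fun s : ℝ => s ^ (2 - α)) (𝓝 0) (𝓝 0) := by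
        have hc := Real.continuousAt_rpow_const 0 (2 - α) (Or.inr (by linarith))
        have h0 : (0:ℝ) ^ (2 - α) = 0 := Real.zero_rpow (by linarith)
        simpa [h0] using hc.tendsto
      have hmain : Tendsto (fun t => (m j0 / α) * ‖y t‖ ^ (2 - α)) (𝓝[≠] (0:ℝ)) (𝓝 0) := by
        have := (hrpow.comp hyn).const_mul (m j0 / α)
        simpa using this
      refine hmain.congr' ?_
      filter_upwards [hmemS] with t ⟨ht, htne⟩
      have hy_ne0 : y t ≠ 0 := by
        have := hy_ne t ht htne j0
        simpa [hc1] using this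
      have hpos : 0 < ‖y t‖ := norm_pos_iff.mpr hy_ne0
      have hsub : ‖y t‖ ^ (2 - α) = ‖y t‖ ^ (2:ℝ) / ‖y t‖ ^ α := Real.rpow_sub hpos 2 α
      have h2 : ‖y t‖ ^ (2:ℝ) = ‖y t‖ ^ (2:ℕ) := by
        rw [← Real.rpow_natCast (‖y t‖) 2]; norm_num
      have hα_ne : α ≠ 0 := ne_of_gt hα0
      have hpα : ‖y t‖ ^ α ≠ 0 := ne_of_gt (Real.rpow_pos_of_pos hpos α)
      rw [hsub, h2, hc1]
      simp only [sub_zero]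
      field_simp
    · have hcj : c j ≠ 0 := by
        intro hcj
        exact hj (hc_inj (hcj.trans hc1.symm))
      have hnorm : Tendsto (fun t => ‖y t - c j‖) (𝓝[≠] (0:ℝ)) (𝓝 ‖c j‖) := by
        have h1 : Tendsto (fun t => y t - c j) (𝓝[≠] (0:ℝ)) (𝓝 ((0:ℂ) - c j)) :=
          hy_tendsto.sub tendsto_const_nhds
        simpa using h1.norm
      have hncj : (0:ℝ) < ‖c j‖ := norm_pos_iff.mpr hcj
      have hrpow : Tendsto (fun t => ‖y t - c j‖ ^ α) (𝓝[≠] (0:ℝ)) (𝓝 (‖c j‖ ^ α)) := by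
        have hc := Real.continuousAt_rpow_const (‖c j‖) α (Or.inl (ne_of_gt hncj))
        exact hc.tendsto.comp hnorm
      have hden : Tendsto (fun t => α * ‖y t - c j‖ ^ α) (𝓝[≠] (0:ℝ)) (𝓝 (α * ‖c j‖ ^ α)) :=
        tendsto_const_nhds.mul hrpow
      have hden_ne : α * ‖c j‖ ^ α ≠ 0 :=
        ne_of_gt (mul_pos hα0 (Real.rpow_pos_of_pos hncj α))
      have hdiv : Tendsto (fun t => m j / (α * ‖y t - c j‖ ^ α)) (𝓝[≠] (0:ℝ))
          (𝓝 (m j / (α * ‖c j‖ ^ α))) := tendsto_const_nhds.div hden hden_ne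
      have hsq : Tendsto (fun t => ‖y t‖^2) (𝓝[≠] (0:ℝ)) (𝓝 0) := by
        simpa using hyn.pow 2
      simpa using hsq.mul hdiv
  -- the product of norms squared tends to 0
  have hsum : Tendsto (fun t => ∑ j, ‖y t‖^2 * (m j / (α * ‖y t - c j‖ ^ α)))
      (𝓝[≠] (0:ℝ)) (𝓝 0) := by
    have := tendsto_finset_sum Finset.univ (fun j _ => hterm j)
    simpa using this
  have hsq : Tendsto (fun t => ‖y t‖^2) (𝓝[≠] (0:ℝ)) (𝓝 0) := by
    simpa using hyn.pow 2
  have hf : Tendsto (fun t => ‖y t‖^2 * (2 * (h + ∑ j, m j / (α * ‖y t - c j‖ ^ α))))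
      (𝓝[≠] (0:ℝ)) (𝓝 0) := by
    have hcomb : Tendsto
        (fun t => 2 * h * ‖y t‖^2 + 2 * ∑ j, ‖y t‖^2 * (m j / (α * ‖y t - c j‖ ^ α)))
        (𝓝[≠] (0:ℝ)) (𝓝 0) := by
      have h1 := hsq.const_mul (2 * h)
      have h2 := hsum.const_mul (2:ℝ)
      simpa using h1.add h2
    refine hcomb.congr fun t => ?_
    have hS : ‖y t‖^2 * (∑ j, m j / (α * ‖y t - c j‖ ^ α))
        = ∑ j, ‖y t‖^2 * (m j / (α * ‖y t - c j‖ ^ α)) := Finset.mul_sum _ _ _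
    rw [← hS]; ring
  have hg : Tendsto (fun t => Real.sqrt (‖y t‖^2 * (2 * (h + ∑ j, m j / (α * ‖y t - c j‖ ^ α)))))
      (𝓝[≠] (0:ℝ)) (𝓝 0) := by
    have hg0 := (Real.continuous_sqrt.tendsto 0).comp hf
    simpa only [Function.comp_def, Real.sqrt_zero] using hg0
  refine squeeze_zero_norm' ?_ hg
  filter_upwards [hmemS] with t ⟨ht, htne⟩
  have henergy := hy_energy t ht htne
  have hd2 : ‖deriv y t‖ ^ 2 = 2 * (h + ∑ j, m j / (α * ‖y t - c j‖ ^ α)) := by linarith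
  have heq : ‖y t‖^2 * (2 * (h + ∑ j, m j / (α * ‖y t - c j‖ ^ α)))
      = (‖y t‖ * ‖deriv y t‖)^2 := by
    rw [← hd2]; ring
  rw [heq, Real.sqrt_sq (by positivity)]
  calc ‖((starRingEnd ℂ) (y t) * deriv y t).im‖
      ≤ ‖((starRingEnd ℂ) (y t) * deriv y t)‖ := by
        simpa [Real.norm_eq_abs] using Complex.abs_im_le_norm ((starRingEnd ℂ) (y t) * deriv y t)
    _ = ‖y t‖ * ‖deriv y t‖ := by
        simp [map_mul]
end

section
/- Differential inequalities for the moment of inertia: let y be an isolated collision solution at the origin and I(t) = |y(t)|². Then there exist δ₀ ∈ (0, δ] and constants c ≥ 0, d > 0, e > 0 such that for all t ∈ (0, δ₀]: (i) İ(t) ≥ 0; (ii) İ(t)² ≤ (4/(2−α))·I(t)·Ï(t) + c·I(t); (iii) Ï(t)·I(t)^{α/2} ≥ d; (iv) the third derivative of I exists at t and |I'''(t)| ≤ e·Ï(t)^{3/2 + 1/α}. -/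
open Filter Topology
open scoped RealInnerProductSpace

/-- derivative of `s ↦ m * (‖f s - c‖²)^q`. -/
lemma aux_phi_deriv (f : ℝ → ℂ) (f' cc : ℂ) (q mj : ℝ) (s : ℝ)
    (hf : HasDerivAt f f' s) (hne : f s ≠ cc) :
    HasDerivAt (fun r => mj * ((‖f r - cc‖ ^ 2 : ℝ) ^ q))
      (mj * ((2 * ⟪f s - cc, f'⟫) * q * (‖f s - cc‖ ^ 2 : ℝ) ^ (q - 1))) s := by
  have h1 : HasDerivAt (fun r => (‖f r - cc‖ ^ 2 : ℝ)) (2 * ⟪f s - cc, f'⟫) s :=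
    (hf.sub_const cc).norm_sq
  have hne2 : (‖f s - cc‖ ^ 2 : ℝ) ≠ 0 := by
    have : f s - cc ≠ 0 := sub_ne_zero.2 hne
    exact pow_ne_zero 2 (norm_ne_zero_iff.2 this)
  exact (h1.rpow_const (Or.inl hne2)).const_mul mj

/-- `(x²)^q = x^(2q)` for `0 < x`. -/
lemma aux_sq_rpow (x : ℝ) (hx : 0 < x) (q : ℝ) : ((x ^ 2 : ℝ)) ^ q = x ^ (2 * q) := by
  rw [← Real.rpow_natCast x 2, ← Real.rpow_mul hx.le]
  norm_num

lemma aux_inner_ofReal_mul (x w : ℂ) (r : ℝ) : ⟪x, (r : ℂ) * w⟫ = r * ⟪x, w⟫ := by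
  rw [show (r : ℂ) * w = r • w from by simp [Complex.real_smul], real_inner_smul_right]

lemma aux_ofReal_hasDerivAt (f : ℝ → ℝ) (f' x : ℝ) (hf : HasDerivAt f f' x) :
    HasDerivAt (fun s => ((f s : ℝ) : ℂ)) ((f' : ℝ) : ℂ) x := by
  exact Complex.ofRealCLM.hasFDerivAt.comp_hasDerivAt x hf
lemma aux_wj_norm (mj α q ρ vn : ℝ) (ip : ℝ) (u w : ℂ)
    (hq : q = -(α+2)/2) (hα1 : 1 ≤ α) (hmj : 0 < mj) (hρ : 0 < ρ) (hd : ρ ≤ ‖u‖)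
    (hvn : ‖w‖ ≤ vn) (hip : |ip| ≤ ‖u‖ * vn) :
    ‖((mj * ((2 * ip) * q * ((‖u‖ ^ 2 : ℝ) ^ (q-1))) : ℝ) : ℂ) * u
      + ((mj * ((‖u‖ ^ 2 : ℝ) ^ q) : ℝ) : ℂ) * w‖
      ≤ mj * ((α+3) * ρ ^ (-(α+2)) * vn) := by
  have hd0 : 0 < ‖u‖ := lt_of_lt_of_le hρ hd
  have hvn0 : 0 ≤ vn := le_trans (norm_nonneg w) hvn
  have e1 : ((‖u‖ ^ 2 : ℝ)) ^ (q-1) = ‖u‖ ^ (2*q-2) := by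
    rw [aux_sq_rpow _ hd0]; congr 1; ring
  have e2 : ((‖u‖ ^ 2 : ℝ)) ^ q = ‖u‖ ^ (2*q) := aux_sq_rpow _ hd0 q
  have hqa : |q| = (α+2)/2 := by
    rw [hq, abs_of_nonpos (by linarith : -(α+2)/2 ≤ 0)]; ring
  have hd2q : (0:ℝ) < ‖u‖ ^ (2*q) := Real.rpow_pos_of_pos hd0 _
  have hd2q2 : (0:ℝ) < ‖u‖ ^ (2*q-2) := Real.rpow_pos_of_pos hd0 _
  have hcomb : ‖u‖ ^ (2*q-2) * ‖u‖ * ‖u‖ = ‖u‖ ^ (2*q) := by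
    have e3 : ‖u‖ ^ (2*q) = ‖u‖ ^ (2*q-2) * ‖u‖ ^ (2:ℝ) := by
      rw [← Real.rpow_add hd0]; ring_nf
    rw [e3, show (2:ℝ) = ((2:ℕ):ℝ) by norm_num, Real.rpow_natCast]; ring
  refine le_trans (norm_add_le _ _) ?_
  rw [norm_mul, norm_mul, Complex.norm_real, Complex.norm_real, Real.norm_eq_abs,
    Real.norm_eq_abs, e1, e2]
  have b1 : |mj * ((2*ip) * q * ‖u‖ ^ (2*q-2))| * ‖u‖ ≤ mj * (α+2) * ‖u‖ ^ (2*q) * vn := by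
    rw [abs_mul, abs_of_pos hmj, abs_mul, abs_mul, abs_mul, abs_two, abs_of_pos hd2q2, hqa]
    have c1 : |ip| * (‖u‖^(2*q-2) * ‖u‖) ≤ vn * ‖u‖^(2*q) := by
      calc |ip| * (‖u‖^(2*q-2) * ‖u‖)
          ≤ (‖u‖*vn) * (‖u‖^(2*q-2) * ‖u‖) :=
            mul_le_mul_of_nonneg_right hip (by positivity)
        _ = vn * (‖u‖^(2*q-2) * ‖u‖ * ‖u‖) := by ring
        _ = vn * ‖u‖^(2*q) := by rw [hcomb]
    have c2 := mul_le_mul_of_nonneg_left c1 (mul_nonneg hmj.le (by linarith : (0:ℝ) ≤ α+2))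
    linarith only [c2]
  have b2 : |mj * ‖u‖ ^ (2*q)| * ‖w‖ ≤ mj * ‖u‖ ^ (2*q) * vn := by
    rw [abs_of_pos (mul_pos hmj hd2q)]
    exact mul_le_mul_of_nonneg_left hvn (by positivity)
  have b3 : ‖u‖ ^ (2*q) ≤ ρ ^ (-(α+2)) := by
    have e4 : 2*q = -(α+2) := by rw [hq]; ring
    rw [e4]
    exact Real.rpow_le_rpow_of_nonpos hρ hd (by linarith)
  have b4 : ‖u‖^(2*q) * vn ≤ ρ ^ (-(α+2)) * vn := mul_le_mul_of_nonneg_right b3 hvn0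
  have b5 := mul_le_mul_of_nonneg_left b4 (mul_nonneg hmj.le (by linarith : (0:ℝ) ≤ α+3))
  linarith only [b1, b2, b5]

lemma aux_cs (x w : ℂ) : (⟪x, w⟫) ^ 2 ≤ ‖x‖ ^ 2 * ‖w‖ ^ 2 := by
  have h1 := abs_real_inner_le_norm x w
  nlinarith [abs_nonneg (⟪x, w⟫), sq_abs (⟪x, w⟫), norm_nonneg x, norm_nonneg w]

set_option maxHeartbeats 1600000 in
/-- differential inequalities for the moment of inertia I(t) = |y(t)|². -/
theorem stmt_5
    (N : ℕ) (hN : 0 < N) (c : Fin N → ℂ) (m : Fin N → ℝ)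
    (hc_inj : Function.Injective c) (hm : ∀ j, 0 < m j)
    (α : ℝ) (hα1 : 1 ≤ α) (hα2 : α < 2)
    (hc1 : c ⟨0, hN⟩ = 0)
    (δ : ℝ) (hδ : 0 < δ) (y : ℝ → ℂ)
    (hy_cont : ContinuousOn y (Set.Icc (-δ) δ))
    (hy0 : y 0 = 0)
    (hy_ne : ∀ t ∈ Set.Icc (-δ) δ, t ≠ 0 → ∀ j, y t ≠ c j)
    (hy_d1 : ∀ t ∈ Set.Icc (-δ) δ, t ≠ 0 → DifferentiableAt ℝ y t)
    (hy_d2 : ∀ t ∈ Set.Icc (-δ) δ, t ≠ 0 → DifferentiableAt ℝ (deriv y) t)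
    (hy_eq : ∀ t ∈ Set.Icc (-δ) δ, t ≠ 0 →
      deriv (deriv y) t = -∑ j, (m j : ℂ) * (y t - c j) / ((‖y t - c j‖ ^ (α + 2) : ℝ) : ℂ))
    (h : ℝ)
    (hy_energy : ∀ t ∈ Set.Icc (-δ) δ, t ≠ 0 →
      (1 / 2) * ‖deriv y t‖ ^ 2 - ∑ j, m j / (α * ‖y t - c j‖ ^ α) = h) :
    ∃ δ₀ : ℝ, 0 < δ₀ ∧ δ₀ ≤ δ ∧
      ∃ c₀ : ℝ, 0 ≤ c₀ ∧ ∃ d : ℝ, 0 < d ∧ ∃ e : ℝ, 0 < e ∧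
        ∀ t : ℝ, 0 < t → t ≤ δ₀ →
          0 ≤ deriv (fun s => ‖y s‖ ^ 2) t ∧
          (deriv (fun s => ‖y s‖ ^ 2) t) ^ 2
            ≤ (4 / (2 - α)) * (‖y t‖ ^ 2) * deriv (deriv (fun s => ‖y s‖ ^ 2)) t
              + c₀ * ‖y t‖ ^ 2 ∧
          d ≤ deriv (deriv (fun s => ‖y s‖ ^ 2)) t * ((‖y t‖ ^ 2) ^ (α / 2)) ∧
          DifferentiableAt ℝ (deriv (deriv (fun s => ‖y s‖ ^ 2))) t ∧
          |deriv (deriv (deriv (fun s => ‖y s‖ ^ 2))) t|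
            ≤ e * (deriv (deriv (fun s => ‖y s‖ ^ 2)) t) ^ ((3 : ℝ) / 2 + 1 / α) := by
  classical
  have hα0 : (0:ℝ) < α := lt_of_lt_of_le one_pos hα1
  have h2α : (0:ℝ) < 2 - α := by linarith
  set j₀ : Fin N := ⟨0, hN⟩ with hj₀_def
  have hm₀ : 0 < m j₀ := hm j₀
  haveI : Nonempty (Fin N) := ⟨j₀⟩
  set M := ∑ j, m j with hM_def
  have hM : 0 < M := Finset.sum_pos (fun j _ => hm j) Finset.univ_nonempty
  have hmM : ∀ j : Fin N, m j ≤ M := fun j =>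
    Finset.single_le_sum (fun i _ => (hm i).le) (Finset.mem_univ j)
  -- choice of a protective radius R
  set g : Fin N → ℝ := fun j => if j = j₀ then 1 else min 1 (‖c j‖ / 2) with hg_def
  set R := Finset.univ.inf' Finset.univ_nonempty g with hR_def
  have hgpos : ∀ j, 0 < g j := by
    intro j
    by_cases hj : j = j₀
    · simp [hg_def, hj]
    · have hc0 : c j ≠ 0 := by
        rw [← hc1]
        exact fun hcj => hj (hc_inj hcj)
      have hcpos : 0 < ‖c j‖ := norm_pos_iff.2 hc0
      simp only [hg_def, if_neg hj]
      exact lt_min one_pos (by linarith)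
  have hR0 : 0 < R := by
    rw [hR_def, Finset.lt_inf'_iff]
    exact fun j _ => hgpos j
  have hR1 : R ≤ 1 := by
    have h1 := Finset.inf'_le g (Finset.mem_univ j₀)
    rw [← hR_def] at h1
    simpa [hg_def] using h1
  have hRc : ∀ j, j ≠ j₀ → 2 * R ≤ ‖c j‖ := by
    intro j hj
    have h1 := Finset.inf'_le g (Finset.mem_univ j)
    rw [← hR_def] at h1
    have h2 : g j ≤ ‖c j‖ / 2 := by
      simp only [hg_def, if_neg hj]
      exact min_le_right _ _
    linarith
  -- constants
  set q : ℝ := -(α + 2) / 2 with hq_def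
  set κ := 2 * m j₀ * (2 - α) / α with hκ_def
  have hκ : 0 < κ := div_pos (mul_pos (by positivity) h2α) hα0
  set Q := M / R ^ (α + 3) with hQ_def
  have hQ0 : 0 < Q := div_pos hM (Real.rpow_pos_of_pos hR0 _)
  set B := 4 * |h| + 2 * Q with hB_def
  have hB : 0 < B := by positivity
  set Cv := 2 * M / α + 2 * |h| + 1 with hCv_def
  have hCv : 0 < Cv := by positivity
  set p : ℝ := (3:ℝ)/2 + 1/α with hp_def
  have hp : 0 < p := by positivity
  set c₀ := 8 * |h| + 4 / (2 - α) * B with hc₀_def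
  have hc₀ : 0 ≤ c₀ :=
    add_nonneg (by positivity) (le_of_lt (mul_pos (div_pos (by norm_num) h2α) hB))
  have hκp : (0:ℝ) < (κ/2) ^ p := Real.rpow_pos_of_pos (half_pos hκ) p
  set e := (2 * α + 12) * M * Real.sqrt Cv / (κ/2) ^ p with he_def
  have he : 0 < e :=
    div_pos (mul_pos (mul_pos (by linarith) hM) (Real.sqrt_pos.2 hCv)) hκp
  -- smallness threshold
  set ε := min R (min 1 (κ / (2 * B + 2))) with hε_def
  have hε0 : 0 < ε := lt_min hR0 (lt_min one_pos (div_pos hκ (by linarith)))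
  have hεR : ε ≤ R := min_le_left _ _
  have hε1 : ε ≤ 1 := le_trans (min_le_right _ _) (min_le_left _ _)
  have hεB : ε ≤ κ / (2 * B + 2) := le_trans (min_le_right _ _) (min_le_right _ _)
  -- choose δ₀ by continuity
  obtain ⟨δ₀, hδ₀0, hδ₀δ, hδ₀small⟩ :
      ∃ δ₀ : ℝ, 0 < δ₀ ∧ δ₀ < δ ∧ ∀ s : ℝ, 0 < s → s ≤ δ₀ → ‖y s‖ ≤ ε := by
    have hcw : ContinuousWithinAt y (Set.Icc (-δ) δ) 0 :=
      hy_cont 0 ⟨by linarith, hδ.le⟩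
    rw [Metric.continuousWithinAt_iff] at hcw
    obtain ⟨r, hr0, hr⟩ := hcw ε hε0
    refine ⟨min (r/2) (δ/2), by positivity, ?_, ?_⟩
    · calc min (r/2) (δ/2) ≤ δ/2 := min_le_right _ _
        _ < δ := by linarith
    · intro s hs0 hs1
      have hs2 : s ≤ r/2 := le_trans hs1 (min_le_left _ _)
      have hs3 : s ≤ δ/2 := le_trans hs1 (min_le_right _ _)
      have hsI : s ∈ Set.Icc (-δ) δ := ⟨by linarith, by linarith⟩
      have hdist : dist s 0 < r := by
        rw [Real.dist_eq, sub_zero, abs_of_pos hs0]; linarith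
      have := hr hsI hdist
      rw [hy0] at this
      simpa [dist_eq_norm] using this.le
  -- local definitions
  set v := deriv y with hv_def
  set a := deriv v with ha_def
  set In : ℝ → ℝ := fun s => ‖y s‖ ^ 2 with hIn_def
    -- basic membership
  have hUmem : ∀ s : ℝ, s ∈ Set.Ioo (0:ℝ) δ → s ∈ Set.Icc (-δ) δ ∧ s ≠ 0 := by
    intro s hs
    exact ⟨⟨by linarith [hs.1], hs.2.le⟩, ne_of_gt hs.1⟩
  have hyd : ∀ s ∈ Set.Ioo (0:ℝ) δ, HasDerivAt y (v s) s := fun s hs =>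
    (hy_d1 s (hUmem s hs).1 (hUmem s hs).2).hasDerivAt
  have hvd : ∀ s ∈ Set.Ioo (0:ℝ) δ, HasDerivAt v (a s) s := fun s hs =>
    (hy_d2 s (hUmem s hs).1 (hUmem s hs).2).hasDerivAt
  -- first derivative of In
  have hI1 : ∀ s ∈ Set.Ioo (0:ℝ) δ, HasDerivAt In (2 * ⟪y s, v s⟫) s := fun s hs =>
    (hyd s hs).norm_sq
  have hI1' : ∀ s ∈ Set.Ioo (0:ℝ) δ, deriv In s = 2 * ⟪y s, v s⟫ := fun s hs =>
    (hI1 s hs).deriv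
  -- second derivative of In
  have hI2 : ∀ s ∈ Set.Ioo (0:ℝ) δ,
      HasDerivAt (deriv In) (2 * (⟪y s, a s⟫ + ⟪v s, v s⟫)) s := by
    intro s hs
    have h1 : HasDerivAt (fun r => 2 * ⟪y r, v r⟫) (2 * (⟪y s, a s⟫ + ⟪v s, v s⟫)) s :=
      ((hyd s hs).inner ℝ (hvd s hs)).const_mul 2
    refine h1.congr_of_eventuallyEq ?_
    filter_upwards [isOpen_Ioo.mem_nhds hs] with r hr
    exact hI1' r hr
  have hI2' : ∀ s ∈ Set.Ioo (0:ℝ) δ,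
      deriv (deriv In) s = 2 * (⟪y s, a s⟫ + ⟪v s, v s⟫) := fun s hs => (hI2 s hs).deriv
  -- rewriting the acceleration
  have hA : ∀ s ∈ Set.Ioo (0:ℝ) δ, a s =
      -∑ j, ((m j * ((‖y s - c j‖ ^ 2 : ℝ) ^ q) : ℝ) : ℂ) * (y s - c j) := by
    intro s hs
    have heq := hy_eq s (hUmem s hs).1 (hUmem s hs).2
    rw [heq]
    congr 1
    refine Finset.sum_congr rfl fun j _ => ?_
    have hne : y s - c j ≠ 0 := sub_ne_zero.2 (hy_ne s (hUmem s hs).1 (hUmem s hs).2 j)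
    have hd0 : 0 < ‖y s - c j‖ := norm_pos_iff.2 hne
    have h1 : ((‖y s - c j‖ ^ 2 : ℝ)) ^ q = (‖y s - c j‖ ^ (α + 2) : ℝ)⁻¹ := by
      rw [aux_sq_rpow _ hd0, ← Real.rpow_neg hd0.le]
      congr 1
      rw [hq_def]; ring
    rw [h1]
    push_cast
    ring
    -- pointwise estimates
  have hpoint : ∀ t : ℝ, 0 < t → t ≤ δ₀ →
      0 < ‖y t‖ ∧
      κ / 2 * ‖y t‖ ^ (-α) ≤ deriv (deriv In) t ∧
      0 < deriv (deriv In) t ∧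
      4 * ‖v t‖ ^ 2 ≤ 4 / (2 - α) * deriv (deriv In) t + c₀ ∧
      ‖v t‖ ^ 2 ≤ Cv * ‖y t‖ ^ (-α) ∧
      ‖a t‖ ≤ M * ‖y t‖ ^ (-(α + 1)) := by
    intro t ht0 htδ₀
    have htU : t ∈ Set.Ioo (0:ℝ) δ := ⟨ht0, lt_of_le_of_lt htδ₀ hδ₀δ⟩
    have htI := (hUmem t htU).1
    have htne := (hUmem t htU).2
    have hyne : ∀ j, y t ≠ c j := hy_ne t htI htne
    have hy0' : y t ≠ 0 := by
      have := hyne j₀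
      rwa [hc1] at this
    have hρ0 : 0 < ‖y t‖ := norm_pos_iff.2 hy0'
    have hρε : ‖y t‖ ≤ ε := hδ₀small t ht0 htδ₀
    have hρR : ‖y t‖ ≤ R := hρε.trans hεR
    have hρ1 : ‖y t‖ ≤ 1 := hρε.trans hε1
    have hdjR : ∀ j, j ≠ j₀ → R ≤ ‖y t - c j‖ := by
      intro j hj
      have h2R := hRc j hj
      have h3 : ‖c j‖ - ‖y t‖ ≤ ‖y t - c j‖ := by
        have h4 := norm_sub_norm_le (c j) (y t)
        rw [norm_sub_rev (c j) (y t)] at h4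
        linarith [le_abs_self (‖c j‖ - ‖y t‖), abs_sub_comm ‖c j‖ ‖y t‖]
      linarith
    have hdj : ∀ j, ‖y t‖ ≤ ‖y t - c j‖ := by
      intro j
      by_cases hj : j = j₀
      · rw [hj, hc1, sub_zero]
      · exact le_trans hρR (hdjR j hj)
    have hdj0 : ∀ j, (0:ℝ) < ‖y t - c j‖ := fun j => lt_of_lt_of_le hρ0 (hdj j)
    -- facts about X := ‖y t‖ ^ (-α)
    have hX0 : (0:ℝ) < ‖y t‖ ^ (-α) := Real.rpow_pos_of_pos hρ0 _
    have hXinv : ‖y t‖ ^ (-α) = (‖y t‖ ^ α)⁻¹ := Real.rpow_neg hρ0.le α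
    have hραpos : (0:ℝ) < ‖y t‖ ^ α := Real.rpow_pos_of_pos hρ0 α
    have hX1 : 1 ≤ ‖y t‖ ^ (-α) := by
      have h1 : ‖y t‖ ^ α ≤ 1 := Real.rpow_le_one hρ0.le hρ1 hα0.le
      rw [hXinv]
      exact (one_le_inv₀ hραpos).2 h1
    -- energy
    have henergy := hy_energy t htI htne
    set Vt := ∑ j, m j / (α * ‖y t - c j‖ ^ α) with hVt_def
    have hv2 : ‖v t‖ ^ 2 = 2 * Vt + 2 * h := by linarith only [henergy]
    have hVlow : m j₀ / (α * ‖y t‖ ^ α) ≤ Vt := by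
      have h0 : ∀ j ∈ Finset.univ, (0:ℝ) ≤ m j / (α * ‖y t - c j‖ ^ α) := fun j _ =>
        le_of_lt (div_pos (hm j) (mul_pos hα0 (Real.rpow_pos_of_pos (hdj0 j) α)))
      have h1 := Finset.single_le_sum h0 (Finset.mem_univ j₀)
      rw [hc1, sub_zero] at h1
      exact h1
    have hVpos : 0 < Vt :=
      lt_of_lt_of_le (div_pos hm₀ (mul_pos hα0 hραpos)) hVlow
    have hVlow' : m j₀ * ‖y t‖ ^ (-α) ≤ α * Vt := by
      have h2 : m j₀ ≤ Vt * (α * ‖y t‖ ^ α) := (div_le_iff₀ (mul_pos hα0 hραpos)).1 hVlow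
      rw [hXinv]
      have h3 := mul_le_mul_of_nonneg_right h2 (inv_nonneg.2 hραpos.le)
      have h5 : Vt * (α * ‖y t‖ ^ α) * (‖y t‖ ^ α)⁻¹ = α * Vt := by
        rw [mul_assoc, mul_assoc, mul_inv_cancel₀ hραpos.ne', mul_one, mul_comm]
      rw [h5] at h3
      exact h3
    have hVup : Vt ≤ M / α * ‖y t‖ ^ (-α) := by
      have hterm : ∀ j ∈ Finset.univ, m j / (α * ‖y t - c j‖ ^ α) ≤ m j / (α * ‖y t‖ ^ α) := by
        intro j _
        have h1 : ‖y t‖ ^ α ≤ ‖y t - c j‖ ^ α := Real.rpow_le_rpow hρ0.le (hdj j) hα0.le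
        exact div_le_div_of_nonneg_left (hm j).le (mul_pos hα0 hραpos) (mul_le_mul_of_nonneg_left h1 hα0.le)
      have h2 := Finset.sum_le_sum hterm
      rw [← hVt_def] at h2
      refine h2.trans ?_
      rw [← Finset.sum_div, ← hM_def, hXinv]
      rw [div_eq_mul_inv, div_eq_mul_inv, mul_inv, mul_assoc]
    -- inner product of y with the acceleration
    have hkeyX : ((‖y t‖ ^ 2 : ℝ) ^ q) * (‖y t‖ ^ 2) = ‖y t‖ ^ (-α) := by
      rw [aux_sq_rpow _ hρ0, ← Real.rpow_natCast (‖y t‖) 2, ← Real.rpow_add hρ0]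
      congr 1
      push_cast
      rw [hq_def]; ring
    have hya : ⟪y t, a t⟫ = -(m j₀ * ‖y t‖ ^ (-α)) -
        ∑ j ∈ Finset.univ.erase j₀, m j * ((‖y t - c j‖ ^ 2 : ℝ) ^ q) * ⟪y t, y t - c j⟫ := by
      rw [hA t htU, inner_neg_right, inner_sum]
      have hterm := Finset.sum_congr rfl fun (j : Fin N) (_ : j ∈ Finset.univ) =>
        aux_inner_ofReal_mul (y t) (y t - c j) (m j * ((‖y t - c j‖ ^ 2 : ℝ) ^ q))
      rw [hterm, ← Finset.add_sum_erase Finset.univ _ (Finset.mem_univ j₀)]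
      rw [hc1, sub_zero, real_inner_self_eq_norm_sq]
      rw [mul_assoc, hkeyX]
      ring
    -- error-term bound
    have hSbound : |∑ j ∈ Finset.univ.erase j₀, m j * ((‖y t - c j‖ ^ 2 : ℝ) ^ q) * ⟪y t, y t - c j⟫|
        ≤ Q * ‖y t‖ := by
      refine le_trans (Finset.abs_sum_le_sum_abs _ _) ?_
      have hterm : ∀ j ∈ Finset.univ.erase j₀,
          |m j * ((‖y t - c j‖ ^ 2 : ℝ) ^ q) * ⟪y t, y t - c j⟫|
            ≤ m j * (R ^ (-(α+3)) * ‖y t‖) := by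
        intro j hj
        have hjne : j ≠ j₀ := (Finset.mem_erase.1 hj).1
        have hd0 := hdj0 j
        have h1 : ((‖y t - c j‖ ^ 2 : ℝ) ^ q) = ‖y t - c j‖ ^ (2*q) := aux_sq_rpow _ hd0 q
        have h2 : |⟪y t, y t - c j⟫| ≤ ‖y t‖ * ‖y t - c j‖ := abs_real_inner_le_norm _ _
        rw [abs_mul, abs_mul, h1, abs_of_pos (hm j),
          abs_of_pos (Real.rpow_pos_of_pos hd0 _)]
        have h3 : ‖y t - c j‖ ^ (2*q) * |⟪y t, y t - c j⟫|
            ≤ ‖y t - c j‖ ^ (2*q) * (‖y t‖ * ‖y t - c j‖) :=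
          mul_le_mul_of_nonneg_left h2 (Real.rpow_nonneg hd0.le _)
        have h4 : ‖y t - c j‖ ^ (2*q) * (‖y t‖ * ‖y t - c j‖)
            = ‖y t - c j‖ ^ (2*q+1) * ‖y t‖ := by
          rw [Real.rpow_add hd0 (2*q) 1, Real.rpow_one]; ring
        have h5 : ‖y t - c j‖ ^ (2*q+1) ≤ R ^ (-(α+3)) := by
          have e1 : 2*q+1 = -(α+1) := by rw [hq_def]; ring
          rw [e1]
          have e2 : ‖y t - c j‖ ^ (-(α+1)) ≤ R ^ (-(α+1)) :=
            Real.rpow_le_rpow_of_nonpos hR0 (hdjR j hjne) (by linarith)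
          exact e2.trans (Real.rpow_le_rpow_of_exponent_ge hR0 hR1 (by linarith))
        calc m j * ‖y t - c j‖ ^ (2*q) * |⟪y t, y t - c j⟫|
            = m j * (‖y t - c j‖ ^ (2*q) * |⟪y t, y t - c j⟫|) := by ring
          _ ≤ m j * (‖y t - c j‖ ^ (2*q) * (‖y t‖ * ‖y t - c j‖)) :=
              mul_le_mul_of_nonneg_left h3 (hm j).le
          _ = m j * (‖y t - c j‖ ^ (2*q+1) * ‖y t‖) := by rw [h4]
          _ ≤ m j * (R ^ (-(α+3)) * ‖y t‖) :=
              mul_le_mul_of_nonneg_left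
                (mul_le_mul_of_nonneg_right h5 (norm_nonneg _)) (hm j).le
      refine le_trans (Finset.sum_le_sum hterm) ?_
      rw [← Finset.sum_mul]
      have h6 : ∑ j ∈ Finset.univ.erase j₀, m j ≤ M :=
        Finset.sum_le_sum_of_subset_of_nonneg (Finset.subset_univ _) (fun j _ _ => (hm j).le)
      have h7 : Q = M * R ^ (-(α+3)) := by
        rw [hQ_def, Real.rpow_neg hR0.le, div_eq_mul_inv]
      have h8 : (0:ℝ) ≤ R ^ (-(α+3)) * ‖y t‖ :=
        mul_nonneg (Real.rpow_nonneg hR0.le _) (norm_nonneg _)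
      calc (∑ j ∈ Finset.univ.erase j₀, m j) * (R ^ (-(α+3)) * ‖y t‖)
          ≤ M * (R ^ (-(α+3)) * ‖y t‖) := mul_le_mul_of_nonneg_right h6 h8
        _ = Q * ‖y t‖ := by rw [h7]; ring
    set S := ∑ j ∈ Finset.univ.erase j₀, m j * ((‖y t - c j‖ ^ 2 : ℝ) ^ q) * ⟪y t, y t - c j⟫
      with hS_def
    obtain ⟨hS1, hS2⟩ := abs_le.1 hSbound
    have hQρ : Q * ‖y t‖ ≤ Q := by
      calc Q * ‖y t‖ ≤ Q * 1 := mul_le_mul_of_nonneg_left hρ1 hQ0.le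
        _ = Q := mul_one Q
    -- the smallness relation B ≤ (κ/2) X
    have hεinv : ε⁻¹ ≤ ‖y t‖ ^ (-α) := by
      have h1 : ε ^ (-α) ≤ ‖y t‖ ^ (-α) :=
        Real.rpow_le_rpow_of_nonpos hρ0 hρε (by linarith)
      have h2 : ε ^ (-(1:ℝ)) ≤ ε ^ (-α) :=
        Real.rpow_le_rpow_of_exponent_ge hε0 hε1 (by linarith)
      rw [Real.rpow_neg_one] at h2
      linarith only [h1, h2]
    have hBX : B ≤ κ / 2 * ‖y t‖ ^ (-α) := by
      have h3 : ε * (2 * B + 2) ≤ κ := (le_div_iff₀ (by linarith)).1 hεB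
      have h4 : ε * ε⁻¹ = 1 := mul_inv_cancel₀ hε0.ne'
      have h5 := mul_le_mul_of_nonneg_right h3 (inv_nonneg.2 hε0.le)
      have h6 : ε * (2 * B + 2) * ε⁻¹ = (2 * B + 2) * (ε * ε⁻¹) := by ring
      rw [h6, h4, mul_one] at h5
      have h7 := mul_le_mul_of_nonneg_left hεinv hκ.le
      linarith only [h5, h7]
    -- value of the second derivative
    have hI2t : deriv (deriv In) t = 2 * ((-(m j₀ * ‖y t‖ ^ (-α)) - S) + ‖v t‖^2) := by
      rw [hI2' t htU, hya, real_inner_self_eq_norm_sq]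
    have hκα : κ * α = 2 * m j₀ * (2 - α) := by
      rw [hκ_def]; field_simp
    -- main inequality 1
    have hmain1 : κ / 2 * ‖y t‖ ^ (-α) ≤ deriv (deriv In) t := by
      rw [hI2t]
      have e3 : κ * α * ‖y t‖ ^ (-α) = 2 * m j₀ * (2 - α) * ‖y t‖ ^ (-α) := by
        rw [hκα]
      have e2 := mul_le_mul_of_nonneg_right hVlow' (by norm_num : (0:ℝ) ≤ 4)
      have e1 : 0 ≤ α * (4 * Vt - 2 * (m j₀ * ‖y t‖ ^ (-α)) - κ * ‖y t‖ ^ (-α)) := by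
        linarith only [e2, e3]
      have e4 : α * 0 ≤ α * (4 * Vt - 2 * (m j₀ * ‖y t‖ ^ (-α)) - κ * ‖y t‖ ^ (-α)) := by
        rw [mul_zero]; exact e1
      have e5 := le_of_mul_le_mul_left e4 hα0
      have hγ : κ * ‖y t‖ ^ (-α) ≤ 4 * Vt - 2 * (m j₀ * ‖y t‖ ^ (-α)) := by
        linarith only [e5]
      linarith only [hγ, hv2, hS2, hQρ, hBX, neg_abs_le h, le_abs_self h, hB_def]
    have hI2pos : 0 < deriv (deriv In) t :=
      lt_of_lt_of_le (mul_pos (half_pos hκ) hX0) hmain1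
    -- main inequality 2
    have hmain2 : 4 * ‖v t‖ ^ 2 ≤ 4 / (2 - α) * deriv (deriv In) t + c₀ := by
      have hγ2 : 2 * (2 - α) * Vt ≤ 4 * Vt - 2 * (m j₀ * ‖y t‖ ^ (-α)) := by
        linarith only [hVlow']
      have hd2 : 2*(2-α)*Vt + 4*h - 2*S ≤ deriv (deriv In) t := by
        rw [hI2t]; linarith only [hγ2, hv2]
      have hfrac : (0:ℝ) ≤ 4 / (2 - α) := div_nonneg (by norm_num) h2α.le
      have hc : 4 / (2 - α) * (2*(2-α)*Vt + 4*h - 2*S) ≤ 4 / (2 - α) * deriv (deriv In) t :=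
        mul_le_mul_of_nonneg_left hd2 hfrac
      have hid : 4 / (2 - α) * (2*(2-α)*Vt + 4*h - 2*S) = 8*Vt + 4/(2-α)*(4*h - 2*S) := by
        field_simp
        ring
      have habs2 : -B ≤ 4*h - 2*S := by
        linarith only [neg_abs_le h, hS2, hQρ, hB_def]
      have hge := mul_le_mul_of_nonneg_left habs2 hfrac
      linarith only [hc, hge, hv2, le_abs_self h, hid, hc₀_def]
    -- main inequality 3
    have hCvX : Cv * ‖y t‖^(-α)
        = 2 * (M/α * ‖y t‖^(-α)) + 2 * (|h| * ‖y t‖^(-α)) + ‖y t‖^(-α) := by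
      rw [hCv_def]; ring
    have hmain3 : ‖v t‖ ^ 2 ≤ Cv * ‖y t‖ ^ (-α) := by
      have hint := mul_le_mul_of_nonneg_left hX1 (abs_nonneg h)
      rw [mul_one] at hint
      rw [hCvX]
      linarith only [hv2, hVup, hX0.le, le_abs_self h, hint]
    -- main inequality 4 : bound on the acceleration
    have ha_bound : ‖a t‖ ≤ M * ‖y t‖ ^ (-(α + 1)) := by
      rw [hA t htU, norm_neg]
      refine le_trans (norm_sum_le _ _) ?_
      have hterm : ∀ j ∈ Finset.univ,
          ‖((m j * ((‖y t - c j‖ ^ 2 : ℝ) ^ q) : ℝ) : ℂ) * (y t - c j)‖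
            ≤ m j * ‖y t‖ ^ (-(α+1)) := by
        intro j _
        have hd0 := hdj0 j
        rw [norm_mul, Complex.norm_real, Real.norm_eq_abs, aux_sq_rpow _ hd0]
        rw [abs_of_nonneg (mul_nonneg (hm j).le (Real.rpow_nonneg hd0.le _))]
        have h2 : ‖y t - c j‖ ^ (2*q) * ‖y t - c j‖ = ‖y t - c j‖ ^ (-(α+1)) := by
          nth_rewrite 2 [← Real.rpow_one (‖y t - c j‖)]
          rw [← Real.rpow_add hd0]
          congr 1
          rw [hq_def]; ring
        rw [mul_assoc, h2]
        exact mul_le_mul_of_nonneg_left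
          (Real.rpow_le_rpow_of_nonpos hρ0 (hdj j) (by linarith)) (hm j).le
      refine le_trans (Finset.sum_le_sum hterm) ?_
      rw [← Finset.sum_mul, ← hM_def]
    exact ⟨hρ0, hmain1, hI2pos, hmain2, hmain3, ha_bound⟩
  -- final constants
  refine ⟨δ₀, hδ₀0, hδ₀δ.le, c₀, hc₀, κ/2, half_pos hκ, e, he, ?_⟩
  intro t ht0 htδ₀
  obtain ⟨hρ0, hI2low, hI2pos, hv4, hv2le, ha_le⟩ := hpoint t ht0 htδ₀
  have htU : t ∈ Set.Ioo (0:ℝ) δ := ⟨ht0, lt_of_le_of_lt htδ₀ hδ₀δ⟩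
  have htI := (hUmem t htU).1
  have htne := (hUmem t htU).2
  have hyne : ∀ j, y t ≠ c j := hy_ne t htI htne
  -- machinery for the third derivative
  have hy0' : y t ≠ 0 := by
    have := hyne j₀
    rwa [hc1] at this
  have hρR : ‖y t‖ ≤ R := (hδ₀small t ht0 htδ₀).trans hεR
  have hdjR : ∀ j, j ≠ j₀ → R ≤ ‖y t - c j‖ := by
    intro j hj
    have h2R := hRc j hj
    have h4 := norm_sub_norm_le (c j) (y t)
    rw [norm_sub_rev (c j) (y t)] at h4
    linarith only [h4, h2R, hρR]
  have hdj : ∀ j, ‖y t‖ ≤ ‖y t - c j‖ := by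
    intro j
    by_cases hj : j = j₀
    · rw [hj, hc1, sub_zero]
    · exact le_trans hρR (hdjR j hj)
  have hwj : ∀ j : Fin N, ∃ wj : ℂ,
      HasDerivAt (fun s => ((m j * ((‖y s - c j‖ ^ 2 : ℝ) ^ q) : ℝ) : ℂ) * (y s - c j)) wj t ∧
      ‖wj‖ ≤ m j * ((α+3) * ‖y t‖ ^ (-(α+2)) * ‖v t‖) := by
    intro j
    have hφ := aux_phi_deriv y (v t) (c j) q (m j) t (hyd t htU) (hyne j)
    have hφC := aux_ofReal_hasDerivAt _ _ _ hφ
    have hsub : HasDerivAt (fun s => y s - c j) (v t) t := (hyd t htU).sub_const (c j)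
    refine ⟨_, hφC.mul hsub, ?_⟩
    exact aux_wj_norm (m j) α q (‖y t‖) (‖v t‖) _ (y t - c j) (v t) hq_def hα1 (hm j)
      hρ0 (hdj j) (le_refl _) (abs_real_inner_le_norm _ _)
  choose w hw1 hw2 using hwj
  have hW : HasDerivAt a (-∑ j, w j) t := by
    have hsum := (HasDerivAt.fun_sum (fun (j : Fin N) (_ : j ∈ Finset.univ) => hw1 j)).neg
    refine hsum.congr_of_eventuallyEq ?_
    filter_upwards [isOpen_Ioo.mem_nhds htU] with r hr
    exact hA r hr
  have hWnorm : ‖∑ j, w j‖ ≤ M * ((α+3) * ‖y t‖ ^ (-(α+2)) * ‖v t‖) := by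
    refine le_trans (norm_sum_le _ _) ?_
    refine le_trans (Finset.sum_le_sum (fun j _ => hw2 j)) ?_
    rw [← Finset.sum_mul, ← hM_def]
  have hI3 : HasDerivAt (deriv (deriv In))
      (2 * ((⟪y t, -∑ j, w j⟫ + ⟪v t, a t⟫) + (⟪v t, a t⟫ + ⟪a t, v t⟫))) t := by
    have hJ := (((hyd t htU).inner ℝ hW).add ((hvd t htU).inner ℝ (hvd t htU))).const_mul 2
    refine hJ.congr_of_eventuallyEq ?_
    filter_upwards [isOpen_Ioo.mem_nhds htU] with r hr
    exact hI2' r hr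
  refine ⟨?_, ?_, ?_, ?_, ?_⟩
  · -- (i) monotonicity of In
    by_contra hneg
    push_neg at hneg
    have hmono : StrictMonoOn (deriv In) (Set.Ioc 0 t) := by
      apply strictMonoOn_of_deriv_pos (convex_Ioc 0 t)
      · intro s hs
        have hsU : s ∈ Set.Ioo (0:ℝ) δ :=
          ⟨hs.1, lt_of_le_of_lt (hs.2.trans htδ₀) hδ₀δ⟩
        exact ((hI2 s hsU).differentiableAt.continuousAt).continuousWithinAt
      · intro s hs
        rw [interior_Ioc] at hs
        exact (hpoint s hs.1 ((le_of_lt hs.2).trans htδ₀)).2.2.1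
    have hlt : ∀ s ∈ Set.Ioo (0:ℝ) t, deriv In s < 0 := fun s hs =>
      lt_trans (hmono ⟨hs.1, hs.2.le⟩ ⟨ht0, le_refl t⟩ hs.2) hneg
    have hanti : StrictAntiOn In (Set.Icc 0 t) := by
      apply strictAntiOn_of_deriv_neg (convex_Icc 0 t)
      · have hsub : Set.Icc (0:ℝ) t ⊆ Set.Icc (-δ) δ := fun s hs =>
          ⟨by linarith [hs.1], by linarith [hs.2, htδ₀, hδ₀δ.le]⟩
        exact ((hy_cont.mono hsub).norm.pow 2)
      · intro s hs
        rw [interior_Icc] at hs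
        exact hlt s hs
    have h1 : In t < In 0 := hanti ⟨le_refl 0, ht0.le⟩ ⟨ht0.le, le_refl t⟩ ht0
    have h2 : In 0 = 0 := by rw [hIn_def]; simp [hy0]
    have h3 : 0 < In t := by rw [hIn_def]; positivity
    linarith
  · -- (ii)
    rw [hI1' t htU]
    have hcs : ⟪y t, v t⟫^2 ≤ ‖y t‖^2 * ‖v t‖^2 := aux_cs (y t) (v t)
    have h2 := mul_le_mul_of_nonneg_left hv4 (sq_nonneg ‖y t‖)
    linarith only [hcs, h2]
  · -- (iii)
    have hXα : ((‖y t‖^2 : ℝ))^(α/2) = ‖y t‖^α := by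
      rw [aux_sq_rpow _ hρ0]
      congr 1
      ring
    rw [hXα]
    have hXX : ‖y t‖^(-α) * ‖y t‖^α = 1 := by
      rw [← Real.rpow_add hρ0]
      simp
    have h3 := mul_le_mul_of_nonneg_right hI2low (Real.rpow_nonneg hρ0.le α)
    rw [mul_assoc, hXX, mul_one] at h3
    exact h3
  · -- (iv) part 1 : differentiability
    exact hI3.differentiableAt
  · -- (iv) part 2 : bound
    rw [hI3.deriv]
    have i1 : |⟪y t, -∑ j, w j⟫| ≤ ‖y t‖ * ‖∑ j, w j‖ := by
      rw [inner_neg_right, abs_neg]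
      exact abs_real_inner_le_norm _ _
    have i2 : |⟪v t, a t⟫| ≤ ‖v t‖ * ‖a t‖ := abs_real_inner_le_norm _ _
    have i3 : |⟪a t, v t⟫| ≤ ‖v t‖ * ‖a t‖ := by
      rw [real_inner_comm]
      exact abs_real_inner_le_norm _ _
    have hva : |2 * ((⟪y t, -∑ j, w j⟫ + ⟪v t, a t⟫) + (⟪v t, a t⟫ + ⟪a t, v t⟫))|
        ≤ 2 * (‖y t‖ * ‖∑ j, w j‖ + 3 * (‖v t‖ * ‖a t‖)) := by
      have t1 := abs_add_le (⟪y t, -∑ j, w j⟫ + ⟪v t, a t⟫) (⟪v t, a t⟫ + ⟪a t, v t⟫)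
      have t2 := abs_add_le (⟪y t, -∑ j, w j⟫) (⟪v t, a t⟫)
      have t3 := abs_add_le (⟪v t, a t⟫) (⟪a t, v t⟫)
      rw [abs_mul, abs_two]
      linarith only [t1, t2, t3, i1, i2, i3]
    -- velocity bound
    have hvle : ‖v t‖ ≤ Real.sqrt Cv * ‖y t‖ ^ (-(α/2)) := by
      have h1 : ‖v t‖ = Real.sqrt (‖v t‖^2) := (Real.sqrt_sq (norm_nonneg _)).symm
      rw [h1]
      refine le_trans (Real.sqrt_le_sqrt hv2le) ?_
      rw [Real.sqrt_mul hCv.le]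
      have h2 : Real.sqrt (‖y t‖^(-α)) = ‖y t‖^(-(α/2)) := by
        rw [Real.sqrt_eq_rpow, ← Real.rpow_mul hρ0.le]
        congr 1
        ring
      rw [h2]
    have harec : ‖y t‖ * ‖y t‖ ^ (-(α+2)) = ‖y t‖ ^ (-(α+1)) := by
      nth_rewrite 1 [← Real.rpow_one ‖y t‖]
      rw [← Real.rpow_add hρ0]
      congr 1
      ring
    have hw' : ‖y t‖ * ‖∑ j, w j‖
        ≤ ‖y t‖ * (M * ((α+3) * ‖y t‖ ^ (-(α+2)) * ‖v t‖)) :=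
      mul_le_mul_of_nonneg_left hWnorm (norm_nonneg _)
    have ha' : ‖v t‖ * ‖a t‖ ≤ ‖v t‖ * (M * ‖y t‖ ^ (-(α+1))) :=
      mul_le_mul_of_nonneg_left ha_le (norm_nonneg _)
    have heq1 : 2 * (‖y t‖ * (M * ((α+3) * ‖y t‖ ^ (-(α+2)) * ‖v t‖))
          + 3 * (‖v t‖ * (M * ‖y t‖ ^ (-(α+1)))))
        = (2*α+12) * (M * (‖y t‖ ^ (-(α+1)) * ‖v t‖)) := by
      rw [← harec]
      ring
    have hmono2 : (2*α+12) * (M * (‖y t‖ ^ (-(α+1)) * ‖v t‖))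
        ≤ (2*α+12) * (M * (‖y t‖ ^ (-(α+1)) * (Real.sqrt Cv * ‖y t‖ ^ (-(α/2))))) := by
      refine mul_le_mul_of_nonneg_left ?_ (by linarith : (0:ℝ) ≤ 2*α+12)
      refine mul_le_mul_of_nonneg_left ?_ hM.le
      exact mul_le_mul_of_nonneg_left hvle (Real.rpow_nonneg hρ0.le _)
    have hecan : e * (κ/2)^p = (2*α+12) * M * Real.sqrt Cv := by
      rw [he_def, div_mul_cancel₀]
      exact hκp.ne'
    have hexp : -α * p = (-(α+1)) + (-(α/2)) := by
      rw [hp_def]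
      field_simp
      ring
    have hsplit : (κ/2 * ‖y t‖ ^ (-α))^p
        = (κ/2)^p * (‖y t‖ ^ (-(α+1)) * ‖y t‖ ^ (-(α/2))) := by
      rw [Real.mul_rpow (half_pos hκ).le (Real.rpow_nonneg hρ0.le _),
        ← Real.rpow_mul hρ0.le, hexp, Real.rpow_add hρ0]
    have hfin : (2*α+12) * (M * (‖y t‖ ^ (-(α+1)) * (Real.sqrt Cv * ‖y t‖ ^ (-(α/2)))))
        = e * (κ/2 * ‖y t‖ ^ (-α))^p := by
      rw [hsplit, ← mul_assoc e ((κ/2)^p) _, hecan]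
      ring
    have hmup : (κ/2 * ‖y t‖ ^ (-α))^p ≤ (deriv (deriv In) t)^p :=
      Real.rpow_le_rpow (mul_nonneg (half_pos hκ).le (Real.rpow_nonneg hρ0.le _))
        hI2low hp.le
    have hlast := mul_le_mul_of_nonneg_left hmup he.le
    calc |2 * ((⟪y t, -∑ j, w j⟫ + ⟪v t, a t⟫) + (⟪v t, a t⟫ + ⟪a t, v t⟫))|
        ≤ 2 * (‖y t‖ * ‖∑ j, w j‖ + 3 * (‖v t‖ * ‖a t‖)) := hva
      _ ≤ 2 * (‖y t‖ * (M * ((α+3) * ‖y t‖ ^ (-(α+2)) * ‖v t‖))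
            + 3 * (‖v t‖ * (M * ‖y t‖ ^ (-(α+1))))) := by linarith only [hw', ha']
      _ = (2*α+12) * (M * (‖y t‖ ^ (-(α+1)) * ‖v t‖)) := heq1
      _ ≤ (2*α+12) * (M * (‖y t‖ ^ (-(α+1)) * (Real.sqrt Cv * ‖y t‖ ^ (-(α/2))))) := hmono2
      _ = e * (κ/2 * ‖y t‖ ^ (-α))^p := hfin
      _ ≤ e * (deriv (deriv In) t)^p := hlast
end

section
/- Decay rate of the angular momentum at a collision: if y is an isolated collision solution at the origin and J(t) = Im(conj(y(t))·ẏ(t)), then there exist C > 0 and δ₀ ∈ (0, δ] such that |J(t)| ≤ C·|t|^{(4+α)/(2+α)} for all t ∈ [−δ₀, δ₀] \ {0}. -/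
open Filter Topology

private lemma aux_bound {f : ℝ → ℝ} {M β T : ℝ} (hT : 0 < T) (hβ : 0 ≤ β)
    (hcont : ContinuousOn f (Set.Icc 0 T)) (h0 : f 0 = 0)
    (hd : ∀ s ∈ Set.Ioo 0 T, DifferentiableAt ℝ f s)
    (hb : ∀ s ∈ Set.Ioo 0 T, |deriv f s| ≤ M * s ^ β) :
    |f T| ≤ (M / (β + 1)) * T ^ (β + 1) := by
  have hβ1 : (1:ℝ) ≤ β + 1 := by linarith
  have hβ0 : β + 1 ≠ 0 := by positivity
  set G : ℝ → ℝ := fun s => (M / (β + 1)) * s ^ (β + 1) with hG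
  have hGd : ∀ s : ℝ, HasDerivAt G (M * s ^ β) s := by
    intro s
    have := (Real.hasDerivAt_rpow_const (x := s) (p := β + 1) (Or.inr hβ1)).const_mul
      (M / (β + 1))
    refine this.congr_deriv ?_
    rw [add_sub_cancel_right]
    field_simp
  have hGcont : ContinuousOn G (Set.Icc 0 T) := fun s _ =>
    ((hGd s).differentiableAt.continuousAt).continuousWithinAt
  have hG0 : G 0 = 0 := by simp [hG, Real.zero_rpow hβ0]
  have key : ∀ σ : ℝ, (σ = 1 ∨ σ = -1) → (σ * f T) ≤ G T := by
    intro σ hσ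
    have habs : |σ| = 1 := by rcases hσ with rfl | rfl <;> norm_num
    have hmono : MonotoneOn (fun s => G s - σ * f s) (Set.Icc 0 T) := by
      apply monotoneOn_of_deriv_nonneg (convex_Icc 0 T)
      · exact hGcont.sub (continuousOn_const.mul hcont)
      · rw [interior_Icc]
        intro s hs
        exact ((hGd s).differentiableAt.sub (((hd s hs).const_mul σ))).differentiableWithinAt
      · rw [interior_Icc]
        intro s hs
        have hds : HasDerivAt (fun s => G s - σ * f s) (M * s ^ β - σ * deriv f s) s :=
          (hGd s).sub (((hd s hs).hasDerivAt).const_mul σ)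
        rw [hds.deriv]
        have h1 : |σ * deriv f s| ≤ M * s ^ β := by
          rw [abs_mul, habs, one_mul]; exact hb s hs
        have := (abs_le.1 h1).2
        linarith
    have := hmono (Set.left_mem_Icc.2 hT.le) (Set.right_mem_Icc.2 hT.le) hT.le
    simp only [h0, hG0, mul_zero, sub_zero, zero_sub] at this
    linarith
  have hGT : G T = M / (β + 1) * T ^ (β + 1) := rfl
  have h1 := key 1 (Or.inl rfl)
  have h2 := key (-1) (Or.inr rfl)
  rw [abs_le]
  constructor <;> [linarith [h2, hGT]; linarith [h1, hGT]]

private lemma aux_bound' {f : ℝ → ℝ} {M β δ₁ : ℝ} (hβ : 0 ≤ β)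
    (hcont : ContinuousOn f (Set.Icc (-δ₁) δ₁)) (h0 : f 0 = 0)
    (hd : ∀ s ∈ Set.Icc (-δ₁) δ₁, s ≠ 0 → DifferentiableAt ℝ f s)
    (hb : ∀ s ∈ Set.Icc (-δ₁) δ₁, s ≠ 0 → |deriv f s| ≤ M * |s| ^ β) :
    ∀ t ∈ Set.Icc (-δ₁) δ₁, |f t| ≤ (M / (β + 1)) * |t| ^ (β + 1) := by
  have hβ0 : β + 1 ≠ 0 := by positivity
  intro t ht
  rcases lt_trichotomy t 0 with htneg | rfl | htpos
  · -- reflect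
    set F : ℝ → ℝ := fun s => f (-s) with hF
    have hsub : ∀ s ∈ Set.Icc (0:ℝ) (-t), (-s) ∈ Set.Icc (-δ₁) δ₁ := by
      intro s hs
      simp only [Set.mem_Icc] at *
      constructor <;> nlinarith [ht.1, ht.2, hs.1, hs.2]
    have hFd : ∀ s ∈ Set.Ioo (0:ℝ) (-t), HasDerivAt F (deriv f (-s) * (-1)) s := by
      intro s hs
      have hmem : (-s) ∈ Set.Icc (-δ₁) δ₁ := hsub s (Set.mem_Icc.2 ⟨hs.1.le, hs.2.le⟩)
      have hne : (-s) ≠ 0 := neg_ne_zero.2 (ne_of_gt hs.1)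
      have h1 : HasDerivAt (fun u : ℝ => -u) (-1) s := (hasDerivAt_id s).neg
      exact ((hd (-s) hmem hne).hasDerivAt).comp s h1
    have := aux_bound (f := F) (M := M) (β := β) (T := -t) (by linarith) hβ
      (hcont.comp continuous_neg.continuousOn (fun s hs => hsub s hs))
      (by simp [hF, h0])
      (fun s hs => (hFd s hs).differentiableAt)
      (fun s hs => by
        rw [(hFd s hs).deriv]
        have hmem : (-s) ∈ Set.Icc (-δ₁) δ₁ := hsub s (Set.mem_Icc.2 ⟨hs.1.le, hs.2.le⟩)
        have hne : (-s) ≠ 0 := neg_ne_zero.2 (ne_of_gt hs.1)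
        have := hb (-s) hmem hne
        rw [abs_neg, abs_of_pos hs.1] at this
        calc |deriv f (-s) * (-1)| = |deriv f (-s)| := by rw [abs_mul]; simp
          _ ≤ M * s ^ β := this)
    have hFt : F (-t) = f t := by simp [hF]
    rw [hFt] at this
    rwa [abs_of_neg htneg]
  · simp [h0, Real.zero_rpow hβ0]
  · have hsub : Set.Icc (0:ℝ) t ⊆ Set.Icc (-δ₁) δ₁ := by
      intro s hs
      simp only [Set.mem_Icc] at *
      constructor <;> nlinarith [ht.1, ht.2, hs.1, hs.2]
    have := aux_bound (f := f) (M := M) (β := β) (T := t) htpos hβ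
      (hcont.mono hsub) h0
      (fun s hs => hd s (hsub (Set.mem_Icc.2 ⟨hs.1.le, hs.2.le⟩)) (ne_of_gt hs.1))
      (fun s hs => by
        have := hb s (hsub (Set.mem_Icc.2 ⟨hs.1.le, hs.2.le⟩)) (ne_of_gt hs.1)
        rwa [abs_of_pos hs.1] at this)
    rwa [abs_of_pos htpos]

set_option maxHeartbeats 1000000 in
/-- decay rate of the angular momentum at a collision. -/
theorem stmt_7
    (N : ℕ) (hN : 0 < N) (c : Fin N → ℂ) (m : Fin N → ℝ)
    (hc_inj : Function.Injective c) (hm : ∀ j, 0 < m j)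
    (α : ℝ) (hα1 : 1 ≤ α) (hα2 : α < 2)
    (hc1 : c ⟨0, hN⟩ = 0)
    (δ : ℝ) (hδ : 0 < δ) (y : ℝ → ℂ)
    (hy_cont : ContinuousOn y (Set.Icc (-δ) δ))
    (hy0 : y 0 = 0)
    (hy_ne : ∀ t ∈ Set.Icc (-δ) δ, t ≠ 0 → ∀ j, y t ≠ c j)
    (hy_d1 : ∀ t ∈ Set.Icc (-δ) δ, t ≠ 0 → DifferentiableAt ℝ y t)
    (hy_d2 : ∀ t ∈ Set.Icc (-δ) δ, t ≠ 0 → DifferentiableAt ℝ (deriv y) t)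
    (hy_eq : ∀ t ∈ Set.Icc (-δ) δ, t ≠ 0 →
      deriv (deriv y) t = -∑ j, (m j : ℂ) * (y t - c j) / ((‖y t - c j‖ ^ (α + 2) : ℝ) : ℂ))
    (h : ℝ)
    (hy_energy : ∀ t ∈ Set.Icc (-δ) δ, t ≠ 0 →
      (1 / 2) * ‖deriv y t‖ ^ 2 - ∑ j, m j / (α * ‖y t - c j‖ ^ α) = h) :
    ∃ C : ℝ, 0 < C ∧ ∃ δ₀ : ℝ, 0 < δ₀ ∧ δ₀ ≤ δ ∧
      ∀ t ∈ Set.Icc (-δ₀) δ₀, t ≠ 0 →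
        |((starRingEnd ℂ) (y t) * deriv y t).im| ≤ C * |t| ^ ((4 + α) / (2 + α)) := by
  have hα0 : (0:ℝ) < α := lt_of_lt_of_le one_pos hα1
  have h2α : (0:ℝ) < 2 + α := by linarith
  set j0 : Fin N := ⟨0, hN⟩ with hj0
  -- lower bound on the distances to the other centers
  have hneF : (Finset.univ : Finset (Fin N)).Nonempty := ⟨j0, Finset.mem_univ _⟩
  set f0 : Fin N → ℝ := fun j => if j = j0 then 1 else ‖c j‖ with hf0
  set b : ℝ := Finset.univ.inf' hneF f0 with hbdef
  have hb_pos : 0 < b := by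
    rw [hbdef, Finset.lt_inf'_iff]
    intro j _
    by_cases hj : j = j0
    · simp [hf0, hj]
    · simp only [hf0, if_neg hj]
      have hcj : c j ≠ 0 := by
        rw [← hc1]
        exact fun hc => hj (hc_inj hc)
      exact norm_pos_iff.2 hcj
  have hb_le : ∀ j, j ≠ j0 → b ≤ ‖c j‖ := by
    intro j hj
    have h1 : b ≤ f0 j := Finset.inf'_le f0 (Finset.mem_univ j)
    simpa [hf0, if_neg hj] using h1
  have hb1 : b ≤ 1 := by
    have h1 : b ≤ f0 j0 := Finset.inf'_le f0 (Finset.mem_univ j0)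
    simpa [hf0] using h1
  -- find δ₁ such that ‖y t‖ ≤ b/2 on [-δ₁, δ₁]
  have h0mem : (0:ℝ) ∈ Set.Icc (-δ) δ := ⟨by linarith, hδ.le⟩
  have hyc0 : ContinuousAt y 0 :=
    (hy_cont 0 h0mem).continuousAt (Icc_mem_nhds (by linarith) hδ)
  have hev : ∀ᶠ t in 𝓝 (0:ℝ), dist (y t) 0 < b/2 := by
    have h1 : Tendsto y (𝓝 0) (𝓝 0) := by
      have := hyc0.tendsto
      rwa [hy0] at this
    exact Metric.tendsto_nhds.1 h1 (b/2) (by positivity)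
  obtain ⟨η, hη, hball⟩ := Metric.eventually_nhds_iff.1 hev
  set δ₁ : ℝ := min (η/2) δ with hδ₁def
  have hδ₁pos : 0 < δ₁ := lt_min (by linarith) hδ
  have hδ₁δ : δ₁ ≤ δ := min_le_right _ _
  have hIsub : Set.Icc (-δ₁) δ₁ ⊆ Set.Icc (-δ) δ := Set.Icc_subset_Icc (by linarith) hδ₁δ
  have hsmall : ∀ t ∈ Set.Icc (-δ₁) δ₁, ‖y t‖ ≤ b/2 := by
    intro t ht
    have h1 : dist t 0 < η := by
      rw [Real.dist_eq, sub_zero]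
      have h2 : |t| ≤ δ₁ := abs_le.2 ⟨ht.1, ht.2⟩
      have h3 : δ₁ ≤ η/2 := min_le_left _ _
      linarith
    have h2 := hball h1
    rw [dist_zero_right] at h2
    exact h2.le
  have hy_ne0 : ∀ t ∈ Set.Icc (-δ₁) δ₁, t ≠ 0 → y t ≠ 0 := by
    intro t ht htne
    have h1 := hy_ne t (hIsub ht) htne j0
    rwa [hc1] at h1
  have hdist : ∀ t ∈ Set.Icc (-δ₁) δ₁, ∀ j, j ≠ j0 → b/2 ≤ ‖y t - c j‖ := by
    intro t ht j hj
    have h1 := hb_le j hj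
    have h2 := hsmall t ht
    have h3 : ‖c j‖ - ‖y t‖ ≤ ‖c j - y t‖ := norm_sub_norm_le _ _
    rw [norm_sub_rev] at h3
    linarith
  -- Step 1: velocity bound
  set A : ℝ := 2*|h| + 2 * ∑ j, m j / (α * (b/2) ^ α) with hA
  set B : ℝ := 2 * m j0 / α with hB
  have hA0 : 0 ≤ A := by
    have h1 : (0:ℝ) ≤ ∑ j, m j / (α * (b/2) ^ α) :=
      Finset.sum_nonneg fun j _ => by
        have := (hm j).le
        positivity
    have := abs_nonneg h
    rw [hA]; linarith
  have hB0 : 0 < B := by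
    have := hm j0
    rw [hB]; positivity
  set K : ℝ := Real.sqrt (A + B) with hKdef
  have hK0 : 0 < K := Real.sqrt_pos.2 (by linarith)
  have hKsq : K^2 = A + B := Real.sq_sqrt (by linarith)
  have hvel : ∀ t ∈ Set.Icc (-δ₁) δ₁, t ≠ 0 → ‖deriv y t‖ ≤ K * ‖y t‖ ^ (-(α/2)) := by
    intro t ht htne
    have hen := hy_energy t (hIsub ht) htne
    have hr0 : 0 < ‖y t‖ := norm_pos_iff.2 (hy_ne0 t ht htne)
    have hr1 : ‖y t‖ ≤ 1 := le_trans (hsmall t ht) (by linarith)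
    have hsum : ∑ j, m j / (α * ‖y t - c j‖ ^ α)
        ≤ m j0 / (α * ‖y t - c j0‖ ^ α) + ∑ j, m j / (α * (b/2) ^ α) := by
      rw [← Finset.add_sum_erase _ _ (Finset.mem_univ j0)]
      have hstep : ∑ j ∈ Finset.univ.erase j0, m j / (α * ‖y t - c j‖ ^ α)
          ≤ ∑ j ∈ Finset.univ.erase j0, m j / (α * (b/2) ^ α) := by
        apply Finset.sum_le_sum
        intro j hj
        have hjne : j ≠ j0 := Finset.ne_of_mem_erase hj
        have h1 := hdist t ht j hjne
        have h2 : (b/2) ^ α ≤ ‖y t - c j‖ ^ α :=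
          Real.rpow_le_rpow (by positivity) h1 hα0.le
        have h3 : (0:ℝ) < (b/2) ^ α := Real.rpow_pos_of_pos (by positivity) α
        exact div_le_div_of_nonneg_left (hm j).le (by positivity) (by nlinarith)
      have hstep2 : ∑ j ∈ Finset.univ.erase j0, m j / (α * (b/2) ^ α)
          ≤ ∑ j, m j / (α * (b/2) ^ α) := by
        apply Finset.sum_le_sum_of_subset_of_nonneg (Finset.subset_univ _)
        intro j _ _
        have := (hm j).le
        positivity
      exact add_le_add_right (hstep.trans hstep2) _
    have hcj0 : ‖y t - c j0‖ = ‖y t‖ := by rw [hc1, sub_zero]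
    rw [hcj0] at hsum
    have hrneg : 1 ≤ ‖y t‖ ^ (-α) :=
      Real.one_le_rpow_of_pos_of_le_one_of_nonpos hr0 hr1 (by linarith)
    have h2 : 2 * (m j0 / (α * ‖y t‖ ^ α)) = B * ‖y t‖^(-α) := by
      rw [Real.rpow_neg hr0.le, hB]
      have hne1 : ‖y t‖ ^ α ≠ 0 := ne_of_gt (Real.rpow_pos_of_pos hr0 α)
      field_simp
    have hup : ‖deriv y t‖^2 ≤ (A + B) * ‖y t‖ ^ (-α) := by
      have hA_r : A * 1 ≤ A * ‖y t‖^(-α) := mul_le_mul_of_nonneg_left hrneg hA0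
      have habs : 2*h ≤ 2*|h| := by have := le_abs_self h; linarith
      have hAB : (A+B) * ‖y t‖^(-α) = A * ‖y t‖^(-α) + B * ‖y t‖^(-α) := add_mul _ _ _
      clear_value A B K
      linarith [hsum, h2, hen, hA_r, habs, hAB]
    have hrhs : (K * ‖y t‖ ^ (-(α/2)))^2 = (A+B) * ‖y t‖^(-α) := by
      rw [mul_pow, hKsq, ← Real.rpow_natCast (‖y t‖ ^ (-(α/2))) 2, ← Real.rpow_mul hr0.le]
      norm_num
    have h0l : 0 ≤ K * ‖y t‖ ^ (-(α/2)) := by positivity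
    have h3 : ‖deriv y t‖^2 ≤ (K * ‖y t‖ ^ (-(α/2)))^2 := by rw [hrhs]; exact hup
    have h4 := Real.sqrt_le_sqrt h3
    rwa [Real.sqrt_sq (norm_nonneg _), Real.sqrt_sq h0l] at h4
  -- Step 2: Sundman estimate ‖y t‖ ≤ C₁ |t|^(2/(2+α))
  set q : ℝ := (2+α)/4 with hq
  have hq0 : 0 < q := by rw [hq]; positivity
  set g : ℝ → ℝ := fun t => Complex.normSq (y t) ^ q with hg
  have hgr : ∀ t, g t = ‖y t‖ ^ ((2+α)/2) := by
    intro t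
    have h1 : Complex.normSq (y t) = ‖y t‖ ^ (2:ℕ) := by
      rw [Complex.normSq_eq_norm_sq]
    rw [hg]
    simp only []
    rw [h1, ← Real.rpow_natCast ‖y t‖ 2, ← Real.rpow_mul (norm_nonneg _)]
    norm_num [hq]
    ring_nf
  have hgd : ∀ t ∈ Set.Icc (-δ₁) δ₁, t ≠ 0 → HasDerivAt g
      (q * Complex.normSq (y t) ^ (q - 1) * (2 * ((starRingEnd ℂ) (y t) * deriv y t).re)) t := by
    intro t ht htne
    have hYd : HasDerivAt y (deriv y t) t := (hy_d1 t (hIsub ht) htne).hasDerivAt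
    have hre : HasDerivAt (fun s => (y s).re) ((deriv y t).re) t :=
      Complex.reCLM.hasFDerivAt.comp_hasDerivAt t hYd
    have him : HasDerivAt (fun s => (y s).im) ((deriv y t).im) t :=
      Complex.imCLM.hasFDerivAt.comp_hasDerivAt t hYd
    have hnsq : HasDerivAt (fun s => Complex.normSq (y s))
        (2 * ((starRingEnd ℂ) (y t) * deriv y t).re) t := by
      have h1 : HasDerivAt (fun s => (y s).re * (y s).re + (y s).im * (y s).im)
          ((deriv y t).re * (y t).re + (y t).re * (deriv y t).re +
            ((deriv y t).im * (y t).im + (y t).im * (deriv y t).im)) t :=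
        (hre.mul hre).add (him.mul him)
      refine (h1.congr_deriv ?_).congr_of_eventuallyEq (Filter.Eventually.of_forall fun s => Complex.normSq_apply (y s))
      simp only [Complex.mul_re, Complex.conj_re, Complex.conj_im]
      ring
    have hpos : Complex.normSq (y t) ≠ 0 :=
      fun hcon => (hy_ne0 t ht htne) (Complex.normSq_eq_zero.1 hcon)
    have h5 := hnsq.rpow_const (p := q) (Or.inl hpos)
    rw [hg]
    convert h5 using 1
    ring
  set L : ℝ := 2 * q * K with hL
  have hL0 : 0 < L := by
    have := hq0; have := hK0
    rw [hL]; positivity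
  have hgb : ∀ t ∈ Set.Icc (-δ₁) δ₁, t ≠ 0 → |deriv g t| ≤ L * |t| ^ (0:ℝ) := by
    intro t ht htne
    rw [(hgd t ht htne).deriv]
    have hr0 : 0 < ‖y t‖ := norm_pos_iff.2 (hy_ne0 t ht htne)
    have hnsq : Complex.normSq (y t) = ‖y t‖ ^ (2:ℕ) := by
      rw [Complex.normSq_eq_norm_sq]
    have hre_bound : |((starRingEnd ℂ) (y t) * deriv y t).re| ≤ ‖y t‖ * ‖deriv y t‖ := by
      calc |((starRingEnd ℂ) (y t) * deriv y t).re|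
          ≤ ‖(starRingEnd ℂ) (y t) * deriv y t‖ := by
            exact Complex.abs_re_le_norm _
        _ = ‖y t‖ * ‖deriv y t‖ := by rw [norm_mul, RCLike.norm_conj]
    have hvel' := hvel t ht htne
    have hnsq_pow : Complex.normSq (y t) ^ (q-1) = ‖y t‖ ^ (2*(q-1)) := by
      rw [hnsq, ← Real.rpow_natCast ‖y t‖ 2, ← Real.rpow_mul (norm_nonneg _)]
      norm_num
    have hmain : |q * Complex.normSq (y t) ^ (q - 1) *
        (2 * ((starRingEnd ℂ) (y t) * deriv y t).re)| ≤ L := by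
      rw [abs_mul, abs_mul]
      have h1 : |q| = q := abs_of_pos hq0
      have h2 : |Complex.normSq (y t) ^ (q-1)| = ‖y t‖ ^ (2*(q-1)) := by
        rw [hnsq_pow]; exact abs_of_nonneg (Real.rpow_nonneg (norm_nonneg _) _)
      have h3 : |2 * ((starRingEnd ℂ) (y t) * deriv y t).re|
          ≤ 2 * (‖y t‖ * (K * ‖y t‖ ^ (-(α/2)))) := by
        rw [abs_mul, abs_two]
        have h4 : ‖y t‖ * ‖deriv y t‖ ≤ ‖y t‖ * (K * ‖y t‖ ^ (-(α/2))) :=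
          mul_le_mul_of_nonneg_left hvel' (norm_nonneg _)
        have h5 := hre_bound.trans h4
        linarith
      calc |q| * |Complex.normSq (y t) ^ (q - 1)| *
            |2 * ((starRingEnd ℂ) (y t) * deriv y t).re|
          ≤ q * ‖y t‖ ^ (2*(q-1)) * (2 * (‖y t‖ * (K * ‖y t‖ ^ (-(α/2))))) := by
            rw [h1, h2]
            exact mul_le_mul_of_nonneg_left h3
              (mul_nonneg hq0.le (Real.rpow_nonneg (norm_nonneg _) _))
        _ = 2 * q * K * (‖y t‖ ^ (2*(q-1)) * (‖y t‖ ^ (1:ℝ) * ‖y t‖ ^ (-(α/2)))) := by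
            rw [Real.rpow_one]; ring
        _ = 2 * q * K * ‖y t‖ ^ (2*(q-1) + (1 + -(α/2))) := by
            rw [← Real.rpow_add hr0, ← Real.rpow_add hr0]
        _ = L := by
            have hexp : 2*(q-1) + (1 + -(α/2)) = 0 := by rw [hq]; ring
            rw [hexp, Real.rpow_zero, mul_one, hL]
    calc |q * Complex.normSq (y t) ^ (q - 1) *
          (2 * ((starRingEnd ℂ) (y t) * deriv y t).re)| ≤ L := hmain
      _ = L * |t| ^ (0:ℝ) := by rw [Real.rpow_zero, mul_one]
  have hgcont : ContinuousOn g (Set.Icc (-δ₁) δ₁) := by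
    intro t ht
    have h1 : ContinuousWithinAt (fun s => Complex.normSq (y s)) (Set.Icc (-δ₁) δ₁) t :=
      Complex.continuous_normSq.continuousAt.comp_continuousWithinAt
        ((hy_cont.mono hIsub) t ht)
    exact h1.rpow_const (Or.inr hq0.le)
  have hg0 : g 0 = 0 := by
    rw [hg]
    simp only []
    rw [hy0]
    simp [Real.zero_rpow (ne_of_gt hq0)]
  have hgbnd := aux_bound' (M := L) (β := 0) le_rfl hgcont hg0
    (fun s hs hsne => (hgd s hs hsne).differentiableAt) hgb
  have hr_bound : ∀ t ∈ Set.Icc (-δ₁) δ₁, ‖y t‖ ≤ L ^ (2/(2+α)) * |t| ^ (2/(2+α)) := by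
    intro t ht
    have h1 := hgbnd t ht
    rw [hgr t] at h1
    have h1' : ‖y t‖ ^ ((2+α)/2) ≤ L * |t| := by
      have h2 := (abs_of_nonneg (Real.rpow_nonneg (norm_nonneg (y t)) ((2+α)/2))) ▸ h1
      simpa [Real.rpow_one] using h2
    have h2 : (‖y t‖ ^ ((2+α)/2)) ^ (2/(2+α)) ≤ (L * |t|) ^ (2/(2+α)) :=
      Real.rpow_le_rpow (Real.rpow_nonneg (norm_nonneg _) _) h1' (by positivity)
    rw [← Real.rpow_mul (norm_nonneg _)] at h2
    have h3 : (2+α)/2 * (2/(2+α)) = 1 := by field_simp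
    rw [h3, Real.rpow_one, Real.mul_rpow hL0.le (abs_nonneg t)] at h2
    exact h2
  -- Step 3: the angular momentum and its derivative
  set J : ℝ → ℝ := fun t => ((starRingEnd ℂ) (y t) * deriv y t).im with hJdef
  have hJ0 : J 0 = 0 := by rw [hJdef]; simp [hy0]
  set M₀ : ℝ := ∑ j, m j * ‖c j‖ * (2/b) ^ (α+2) with hM₀
  have hM₀0 : 0 ≤ M₀ :=
    Finset.sum_nonneg fun j _ => by
      have := (hm j).le
      positivity
  have hJd : ∀ t ∈ Set.Icc (-δ₁) δ₁, t ≠ 0 →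
      HasDerivAt J (((starRingEnd ℂ) (y t) * deriv (deriv y) t).im) t := by
    intro t ht htne
    have hYd : HasDerivAt y (deriv y t) t := (hy_d1 t (hIsub ht) htne).hasDerivAt
    have hY'd : HasDerivAt (deriv y) (deriv (deriv y) t) t :=
      (hy_d2 t (hIsub ht) htne).hasDerivAt
    have hconj : HasDerivAt (fun s => (starRingEnd ℂ) (y s)) ((starRingEnd ℂ) (deriv y t)) t := by
      have h1 := Complex.conjCLE.hasFDerivAt.comp_hasDerivAt t hYd
      exact h1
    have hFd : HasDerivAt (fun s => (starRingEnd ℂ) (y s) * deriv y s)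
        ((starRingEnd ℂ) (deriv y t) * deriv y t + (starRingEnd ℂ) (y t) * deriv (deriv y) t) t :=
      hconj.mul hY'd
    have h2 := Complex.imCLM.hasFDerivAt.comp_hasDerivAt t hFd
    have h0im : ((starRingEnd ℂ) (deriv y t) * deriv y t).im = 0 := by
      simp only [Complex.mul_im, Complex.conj_re, Complex.conj_im]
      ring
    rw [hJdef]
    refine h2.congr_deriv ?_
    simp [h0im]
  have hJb : ∀ t ∈ Set.Icc (-δ₁) δ₁, t ≠ 0 →
      |deriv J t| ≤ (M₀ * L ^ (2/(2+α))) * |t| ^ (2/(2+α)) := by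
    intro t ht htne
    rw [(hJd t ht htne).deriv, hy_eq t (hIsub ht) htne]
    have key : |((starRingEnd ℂ) (y t) *
        (-∑ j, (m j : ℂ) * (y t - c j) / ((‖y t - c j‖ ^ (α+2) : ℝ) : ℂ))).im|
        ≤ M₀ * ‖y t‖ := by
      rw [mul_neg, Complex.neg_im, abs_neg, Finset.mul_sum, Complex.im_sum]
      have hterm : ∀ j, |((starRingEnd ℂ) (y t) *
          ((m j : ℂ) * (y t - c j) / ((‖y t - c j‖ ^ (α+2) : ℝ) : ℂ))).im|
          ≤ (m j * ‖c j‖ * (2/b) ^ (α+2)) * ‖y t‖ := by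
        intro j
        have hDpos : (0:ℝ) < ‖y t - c j‖ ^ (α+2) :=
          Real.rpow_pos_of_pos (norm_pos_iff.2 (sub_ne_zero.2
            (hy_ne t (hIsub ht) htne j))) _
        set D : ℝ := ‖y t - c j‖ ^ (α+2) with hD
        have hfact : (starRingEnd ℂ) (y t) * ((m j : ℂ) * (y t - c j) / (D : ℂ))
            = ((m j / D : ℝ) : ℂ) * ((starRingEnd ℂ) (y t) * (y t - c j)) := by
          have hDne : (D : ℂ) ≠ 0 := Complex.ofReal_ne_zero.2 (ne_of_gt hDpos)
          push_cast
          field_simp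
        have him2 : ((starRingEnd ℂ) (y t) * (y t - c j)).im
            = -((starRingEnd ℂ) (y t) * c j).im := by
          rw [mul_sub, Complex.sub_im]
          have : ((starRingEnd ℂ) (y t) * y t).im = 0 := by
            simp only [Complex.mul_im, Complex.conj_re, Complex.conj_im]
            ring
          rw [this]
          ring
        rw [hfact, Complex.im_ofReal_mul, him2, abs_mul, abs_neg]
        have h3 : |((starRingEnd ℂ) (y t) * c j).im| ≤ ‖y t‖ * ‖c j‖ := by
          calc |((starRingEnd ℂ) (y t) * c j).im|
              ≤ ‖(starRingEnd ℂ) (y t) * c j‖ := by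
                exact Complex.abs_im_le_norm _
            _ = ‖y t‖ * ‖c j‖ := by rw [norm_mul, RCLike.norm_conj]
        have h4 : |m j / D| = m j / D := abs_of_nonneg (div_nonneg (hm j).le hDpos.le)
        rw [h4]
        by_cases hj : j = j0
        · subst hj
          rw [hc1]
          simp
        · have h5 : (b/2) ^ (α+2) ≤ D := by
            rw [hD]
            exact Real.rpow_le_rpow (by positivity) (hdist t ht j hj) (by linarith)
          have h6 : m j / D ≤ m j * (2/b) ^ (α+2) := by
            have h7 : ((b/2:ℝ)) ^ (α+2) > 0 := Real.rpow_pos_of_pos (by positivity) _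
            have h8 : (2/b:ℝ) ^ (α+2) = ((b/2) ^ (α+2))⁻¹ := by
              rw [show (2/b:ℝ) = (b/2)⁻¹ from (inv_div b 2).symm,
                Real.inv_rpow (by positivity)]
            rw [h8, div_eq_mul_inv]
            exact mul_le_mul_of_nonneg_left (by
              exact inv_anti₀ h7 h5) (hm j).le
          calc m j / D * |((starRingEnd ℂ) (y t) * c j).im|
              ≤ m j / D * (‖y t‖ * ‖c j‖) :=
                mul_le_mul_of_nonneg_left h3 (div_nonneg (hm j).le hDpos.le)
            _ ≤ m j * (2/b) ^ (α+2) * (‖y t‖ * ‖c j‖) := by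
                apply mul_le_mul_of_nonneg_right h6
                positivity
            _ = (m j * ‖c j‖ * (2/b) ^ (α+2)) * ‖y t‖ := by ring
      calc |∑ j, ((starRingEnd ℂ) (y t) *
            ((m j : ℂ) * (y t - c j) / ((‖y t - c j‖ ^ (α+2) : ℝ) : ℂ))).im|
          ≤ ∑ j, |((starRingEnd ℂ) (y t) *
            ((m j : ℂ) * (y t - c j) / ((‖y t - c j‖ ^ (α+2) : ℝ) : ℂ))).im| :=
            Finset.abs_sum_le_sum_abs _ _
        _ ≤ ∑ j, (m j * ‖c j‖ * (2/b) ^ (α+2)) * ‖y t‖ :=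
            Finset.sum_le_sum fun j _ => hterm j
        _ = M₀ * ‖y t‖ := by rw [hM₀, Finset.sum_mul]
    calc |((starRingEnd ℂ) (y t) *
          (-∑ j, (m j : ℂ) * (y t - c j) / ((‖y t - c j‖ ^ (α+2) : ℝ) : ℂ))).im|
        ≤ M₀ * ‖y t‖ := key
      _ ≤ M₀ * (L ^ (2/(2+α)) * |t| ^ (2/(2+α))) :=
          mul_le_mul_of_nonneg_left (hr_bound t ht) hM₀0
      _ = (M₀ * L ^ (2/(2+α))) * |t| ^ (2/(2+α)) := by ring
  -- Step 4: continuity of J on [-δ₁, δ₁]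
  have hJcont : ContinuousOn J (Set.Icc (-δ₁) δ₁) := by
    intro t ht
    by_cases htne : t = 0
    · subst htne
      have hbt : ∀ s ∈ Set.Icc (-δ₁) δ₁, |J s| ≤ K * ‖y s‖ ^ (1 - α/2) := by
        intro s hs
        by_cases hsne : s = 0
        · subst hsne
          rw [hJ0, hy0, norm_zero, Real.zero_rpow (by intro hcon; linarith : 1 - α/2 ≠ 0)]
          simp
        · have hr0 : 0 < ‖y s‖ := norm_pos_iff.2 (hy_ne0 s hs hsne)
          have hcalc : |J s| ≤ ‖y s‖ * ‖deriv y s‖ := by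
            rw [hJdef]
            calc |((starRingEnd ℂ) (y s) * deriv y s).im|
                ≤ ‖(starRingEnd ℂ) (y s) * deriv y s‖ := by
                  exact Complex.abs_im_le_norm _
              _ = ‖y s‖ * ‖deriv y s‖ := by rw [norm_mul, RCLike.norm_conj]
          have h4 : ‖y s‖ * ‖deriv y s‖ ≤ ‖y s‖ * (K * ‖y s‖ ^ (-(α/2))) :=
            mul_le_mul_of_nonneg_left (hvel s hs hsne) (norm_nonneg _)
          have h5 : ‖y s‖ * (K * ‖y s‖ ^ (-(α/2))) = K * ‖y s‖ ^ (1 - α/2) := by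
            rw [show ‖y s‖ * (K * ‖y s‖ ^ (-(α/2)))
                = K * (‖y s‖ ^ (1:ℝ) * ‖y s‖ ^ (-(α/2))) by rw [Real.rpow_one]; ring,
              ← Real.rpow_add hr0, sub_eq_add_neg]
          linarith [hcalc, h4, h5.le, h5.ge]
      have hφ : Tendsto (fun s => K * ‖y s‖ ^ (1 - α/2)) (𝓝[Set.Icc (-δ₁) δ₁] 0) (𝓝 0) := by
        have h1 : ContinuousWithinAt y (Set.Icc (-δ₁) δ₁) 0 :=
          (hy_cont.mono hIsub) 0 ⟨by linarith, hδ₁pos.le⟩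
        have h2 : Tendsto (fun s => ‖y s‖) (𝓝[Set.Icc (-δ₁) δ₁] 0) (𝓝 0) := by
          have h3 := h1.norm
          simp only [ContinuousWithinAt, hy0, norm_zero] at h3
          exact h3
        have h3 : ContinuousAt (fun x : ℝ => x ^ (1 - α/2)) 0 :=
          Real.continuousAt_rpow_const 0 _ (Or.inr (by linarith))
        have h4 := h3.tendsto.comp h2
        rw [Real.zero_rpow (by intro hcon; linarith : 1 - α/2 ≠ 0)] at h4
        have h5 := h4.const_mul K
        simpa using h5
      have hsq : Tendsto J (𝓝[Set.Icc (-δ₁) δ₁] 0) (𝓝 0) := by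
        apply squeeze_zero_norm' _ hφ
        filter_upwards [eventually_mem_nhdsWithin] with s hs
        rw [Real.norm_eq_abs]
        exact hbt s hs
      unfold ContinuousWithinAt
      rwa [hJ0]
    · have hyc : ContinuousAt y t := (hy_d1 t (hIsub ht) htne).continuousAt
      have hy'c : ContinuousAt (deriv y) t := (hy_d2 t (hIsub ht) htne).continuousAt
      have hcj : ContinuousAt (fun s => (starRingEnd ℂ) (y s)) t :=
        Complex.continuous_conj.continuousAt.comp hyc
      exact ((Complex.continuous_im.continuousAt.comp
        (hcj.mul hy'c))).continuousWithinAt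
  -- Final assembly
  have hβ0 : (0:ℝ) ≤ 2/(2+α) := by positivity
  have hJfinal := aux_bound' (M := M₀ * L ^ (2/(2+α))) (β := 2/(2+α)) hβ0 hJcont hJ0
    (fun s hs hsne => (hJd s hs hsne).differentiableAt) hJb
  have hexp : 2/(2+α) + 1 = (4+α)/(2+α) := by field_simp; ring
  have hCnn : 0 ≤ (M₀ * L ^ (2/(2+α))) / (2/(2+α) + 1) :=
    div_nonneg (mul_nonneg hM₀0 (Real.rpow_nonneg hL0.le _)) (by positivity)
  refine ⟨(M₀ * L ^ (2/(2+α))) / (2/(2+α) + 1) + 1, by linarith, δ₁, hδ₁pos, hδ₁δ, ?_⟩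
  intro t ht htne
  have h1 := hJfinal t ht
  have h2 : (0:ℝ) ≤ |t| ^ (2/(2+α) + 1) := Real.rpow_nonneg (abs_nonneg t) _
  rw [← hexp]
  have h3 : |J t| ≤ ((M₀ * L ^ (2/(2+α))) / (2/(2+α)+1) + 1) * |t| ^ (2/(2+α)+1) := by
    nlinarith
  simpa [hJdef] using h3
end

section
/- Asymptotic velocity direction at a collision: let y be an isolated collision solution at the origin, let θ₋, θ₊ ∈ ℝ be such that y(t)/|y(t)| → e^{iθ∓} as t → 0∓, and set μ = (α+2)·√(m₁/(2α)). Then lim_{t → 0⁺} ẏ(t)·|y(t)|^{α/2} = (2μ/(2+α))·e^{iθ₊} and lim_{t → 0⁻} ẏ(t)·|y(t)|^{α/2} = −(2μ/(2+α))·e^{iθ₋}. -/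
open Filter Topology

private lemma normsq_eq' (z : ℂ) : ‖z‖^2 = z.re*z.re + z.im*z.im := by
  rw [Complex.sq_norm, Complex.normSq_apply]

private lemma hasDerivAt_cre {y : ℝ → ℂ} {v : ℂ} {t : ℝ} (hy : HasDerivAt y v t) :
    HasDerivAt (fun s => (y s).re) v.re t := by
  simpa [Function.comp_def] using (Complex.reCLM.hasFDerivAt (x := y t)).comp_hasDerivAt t hy

private lemma hasDerivAt_cim {y : ℝ → ℂ} {v : ℂ} {t : ℝ} (hy : HasDerivAt y v t) :
    HasDerivAt (fun s => (y s).im) v.im t := by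
  simpa [Function.comp_def] using (Complex.imCLM.hasFDerivAt (x := y t)).comp_hasDerivAt t hy

private lemma rpow_add_eq {R : ℝ} (hR : 0 < R) {a b c : ℝ} (h : a + b = c) :
    R ^ a * R ^ b = R ^ c := by rw [← Real.rpow_add hR, h]

private lemma pow_two_rpow (R : ℝ) : R^2 = R^((2:ℝ)) := by
  rw [show ((2:ℝ)) = ((2:ℕ):ℝ) by norm_num, Real.rpow_natCast]

private noncomputable def pp (y : ℝ → ℂ) (t : ℝ) : ℝ :=
  (y t).re * (deriv y t).re + (y t).im * (deriv y t).im

private noncomputable def LL (y : ℝ → ℂ) (t : ℝ) : ℝ :=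
  (y t).re * (deriv y t).im - (y t).im * (deriv y t).re

private def gg (y : ℝ → ℂ) (t : ℝ) : ℝ := (y t).re*(y t).re + (y t).im*(y t).im

set_option maxHeartbeats 1000000 in
private lemma aux_right
    (m₀ h K α : ℝ) (hm₀ : 0 < m₀) (hα1 : 1 ≤ α) (hα2 : α < 2) (hK : 0 ≤ K)
    (ε : ℝ) (hε : 0 < ε) (y F : ℝ → ℂ)
    (hylim : Tendsto y (𝓝[>] (0:ℝ)) (𝓝 0))
    (hyne : ∀ t ∈ Set.Ioc (0:ℝ) ε, y t ≠ 0)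
    (hd1 : ∀ t ∈ Set.Ioc (0:ℝ) ε, DifferentiableAt ℝ y t)
    (hd2 : ∀ t ∈ Set.Ioc (0:ℝ) ε, DifferentiableAt ℝ (deriv y) t)
    (heq : ∀ t ∈ Set.Ioc (0:ℝ) ε,
      deriv (deriv y) t = -((m₀ / (‖y t‖ ^ (α+2) : ℝ)) • y t) + F t)
    (hF : ∀ t ∈ Set.Ioc (0:ℝ) ε, ‖F t‖ ≤ K)
    (hen : ∀ t ∈ Set.Ioc (0:ℝ) ε,
      |(1/2) * ‖deriv y t‖^2 - m₀ / (α * ‖y t‖ ^ α) - h| ≤ K)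
    (θ : ℝ)
    (hθ : Tendsto (fun t : ℝ => y t / ((‖y t‖ : ℝ) : ℂ)) (𝓝[>] (0:ℝ))
      (𝓝 (Complex.exp ((θ:ℂ) * Complex.I)))) :
    Tendsto (fun t : ℝ => deriv y t * ((‖y t‖ ^ (α/2) : ℝ) : ℂ)) (𝓝[>] (0:ℝ))
      (𝓝 (((Real.sqrt (2*m₀/α) : ℝ) : ℂ) * Complex.exp ((θ:ℂ) * Complex.I))) := by
  have hα0 : (0:ℝ) < α := lt_of_lt_of_le one_pos hα1
  have hrpos : ∀ t ∈ Set.Ioc (0:ℝ) ε, 0 < ‖y t‖ := fun t ht => norm_pos_iff.2 (hyne t ht)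
  have hHy : ∀ t ∈ Set.Ioc (0:ℝ) ε, HasDerivAt y (deriv y t) t :=
    fun t ht => (hd1 t ht).hasDerivAt
  have hHv : ∀ t ∈ Set.Ioc (0:ℝ) ε, HasDerivAt (deriv y) (deriv (deriv y) t) t :=
    fun t ht => (hd2 t ht).hasDerivAt
  have hgval : ∀ t, gg y t = ‖y t‖^2 := fun t => (normsq_eq' (y t)).symm
  have hMg : ∀ t ∈ Set.Ioc (0:ℝ) ε, HasDerivAt (gg y) (2 * pp y t) t := by
    intro t ht
    have h1 := ((hasDerivAt_cre (hHy t ht)).mul (hasDerivAt_cre (hHy t ht))).add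
      ((hasDerivAt_cim (hHy t ht)).mul (hasDerivAt_cim (hHy t ht)))
    convert h1 using 1
    · rfl
    · rfl
    · rfl
    simp only [pp]; ring
  have hMp : ∀ t ∈ Set.Ioc (0:ℝ) ε, HasDerivAt (pp y)
      (‖deriv y t‖^2 - m₀ / ‖y t‖ ^ (α+2) * gg y t
        + ((y t).re * (F t).re + (y t).im * (F t).im)) t := by
    intro t ht
    have h1 := ((hasDerivAt_cre (hHy t ht)).mul (hasDerivAt_cre (hHv t ht))).add
      ((hasDerivAt_cim (hHy t ht)).mul (hasDerivAt_cim (hHv t ht)))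
    convert h1 using 1
    · rfl
    · rfl
    · rfl
    have hare : (deriv (deriv y) t).re = -(m₀ / ‖y t‖ ^ (α+2)) * (y t).re + (F t).re := by
      rw [heq t ht]; simp [Complex.smul_re, smul_eq_mul]
    have haim : (deriv (deriv y) t).im = -(m₀ / ‖y t‖ ^ (α+2)) * (y t).im + (F t).im := by
      rw [heq t ht]; simp [Complex.smul_im, smul_eq_mul]
    rw [hare, haim, normsq_eq']
    simp only [gg]; ring
  have hML : ∀ t ∈ Set.Ioc (0:ℝ) ε, HasDerivAt (LL y)
      ((y t).re * (F t).im - (y t).im * (F t).re) t := by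
    intro t ht
    have h1 := ((hasDerivAt_cre (hHy t ht)).mul (hasDerivAt_cim (hHv t ht))).sub
      ((hasDerivAt_cim (hHy t ht)).mul (hasDerivAt_cre (hHv t ht)))
    convert h1 using 1
    · rfl
    · rfl
    · rfl
    have hare : (deriv (deriv y) t).re = -(m₀ / ‖y t‖ ^ (α+2)) * (y t).re + (F t).re := by
      rw [heq t ht]; simp [Complex.smul_re, smul_eq_mul]
    have haim : (deriv (deriv y) t).im = -(m₀ / ‖y t‖ ^ (α+2)) * (y t).im + (F t).im := by
      rw [heq t ht]; simp [Complex.smul_im, smul_eq_mul]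
    rw [hare, haim]
    ring
  have hRFb : ∀ t ∈ Set.Ioc (0:ℝ) ε,
      |(y t).re * (F t).re + (y t).im * (F t).im| ≤ ‖y t‖ * K := by
    intro t ht
    have h1 : (y t).re * (F t).re + (y t).im * (F t).im
        = ((starRingEnd ℂ) (y t) * F t).re := by
      simp [Complex.mul_re]; try ring
    rw [h1]
    calc |((starRingEnd ℂ) (y t) * F t).re| ≤ ‖(starRingEnd ℂ) (y t) * F t‖ :=
          Complex.abs_re_le_norm _
      _ = ‖y t‖ * ‖F t‖ := by
          rw [norm_mul, Complex.norm_conj]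
      _ ≤ ‖y t‖ * K := mul_le_mul_of_nonneg_left (hF t ht) (norm_nonneg _)
  have hIFb : ∀ t ∈ Set.Ioc (0:ℝ) ε,
      |(y t).re * (F t).im - (y t).im * (F t).re| ≤ ‖y t‖ * K := by
    intro t ht
    have h1 : (y t).re * (F t).im - (y t).im * (F t).re
        = ((starRingEnd ℂ) (y t) * F t).im := by
      simp [Complex.mul_im]; try ring
    rw [h1]
    calc |((starRingEnd ℂ) (y t) * F t).im| ≤ ‖(starRingEnd ℂ) (y t) * F t‖ :=
          Complex.abs_im_le_norm _
      _ = ‖y t‖ * ‖F t‖ := by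
          rw [norm_mul, Complex.norm_conj]
      _ ≤ ‖y t‖ * K := mul_le_mul_of_nonneg_left (hF t ht) (norm_nonneg _)
  have hLabs : ∀ t, |LL y t| ≤ ‖y t‖ * ‖deriv y t‖ := by
    intro t
    have h1 : LL y t = ((starRingEnd ℂ) (y t) * deriv y t).im := by
      simp [LL, Complex.mul_im]; try ring
    rw [h1]
    calc |((starRingEnd ℂ) (y t) * deriv y t).im|
        ≤ ‖(starRingEnd ℂ) (y t) * deriv y t‖ := Complex.abs_im_le_norm _
      _ = ‖y t‖ * ‖deriv y t‖ := by
          rw [norm_mul, Complex.norm_conj]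
  have hEn : ∀ t ∈ Set.Ioc (0:ℝ) ε,
      |‖deriv y t‖^2 - 2*(m₀ / (α * ‖y t‖ ^ α)) - 2*h| ≤ 2*K := by
    intro t ht
    have h1 := hen t ht
    rw [abs_le] at h1 ⊢
    constructor
    · linarith [h1.1]
    · linarith [h1.2]
  have hIocmem : Set.Ioc (0:ℝ) ε ∈ 𝓝[>] (0:ℝ) := Ioc_mem_nhdsGT_of_mem ⟨le_rfl, hε⟩
  have hrlim : Tendsto (fun t => ‖y t‖) (𝓝[>] (0:ℝ)) (𝓝 0) := by
    simpa using hylim.norm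
  have hrpowlim : ∀ β : ℝ, 0 < β → Tendsto (fun t => ‖y t‖ ^ β) (𝓝[>] (0:ℝ)) (𝓝 0) := by
    intro β hβ
    have hc : ContinuousAt (fun x : ℝ => x ^ β) 0 := Real.continuousAt_rpow_const 0 β (Or.inr hβ.le)
    have h2 := hc.tendsto.comp hrlim
    simpa [Real.zero_rpow hβ.ne', Function.comp_def] using h2
  have hinv : Tendsto (fun t => (‖y t‖ ^ α)⁻¹) (𝓝[>] (0:ℝ)) atTop := by
    apply Tendsto.inv_tendsto_nhdsGT_zero
    apply tendsto_nhdsWithin_of_tendsto_nhds_of_eventually_within _ (hrpowlim α hα0)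
    filter_upwards [hIocmem] with t ht
    exact Real.rpow_pos_of_pos (hrpos t ht) α
  set D : ℝ := (2 - α)/α * m₀ with hD_def
  have hD : 0 < D := mul_pos (div_pos (by linarith) hα0) hm₀
  have hev : ∀ᶠ t in 𝓝[>] (0:ℝ),
      t ∈ Set.Ioc (0:ℝ) ε ∧ ‖y t‖ < 1 ∧ (2*|h| + 3*K + 1)/D < (‖y t‖ ^ α)⁻¹ := by
    filter_upwards [hIocmem, hrlim.eventually_lt_const one_pos,
      hinv.eventually_gt_atTop ((2*|h| + 3*K + 1)/D)] with t h1 h2 h3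
    exact ⟨h1, h2, h3⟩
  obtain ⟨ε₁, hε₁mem, hsubS⟩ := mem_nhdsGT_iff_exists_Ioc_subset.1 hev
  have hε₁ : 0 < ε₁ := hε₁mem
  have hS : ∀ t ∈ Set.Ioc (0:ℝ) ε₁,
      t ∈ Set.Ioc (0:ℝ) ε ∧ ‖y t‖ < 1 ∧ (2*|h|+3*K+1)/D < (‖y t‖^α)⁻¹ := fun t ht => hsubS ht
  have hsub1 : Set.Ioc (0:ℝ) ε₁ ⊆ Set.Ioc (0:ℝ) ε := fun t ht => (hS t ht).1
  have hPPpos : ∀ t ∈ Set.Ioc (0:ℝ) ε₁,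
      0 < ‖deriv y t‖^2 - m₀ / ‖y t‖ ^ (α+2) * gg y t
        + ((y t).re * (F t).re + (y t).im * (F t).im) := by
    intro t ht
    obtain ⟨htε, hr1, hC⟩ := hS t ht
    have hrp := hrpos t htε
    have hXpos : 0 < (‖y t‖ ^ α)⁻¹ := inv_pos.2 (Real.rpow_pos_of_pos hrp α)
    have he1 : m₀ / ‖y t‖ ^ (α+2) * gg y t = m₀ * (‖y t‖ ^ α)⁻¹ := by
      rw [hgval, pow_two_rpow, div_mul_eq_mul_div, mul_div_assoc, ← Real.rpow_sub hrp,
        show (2:ℝ) - (α+2) = -α by ring, Real.rpow_neg hrp.le]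
    have hC' : 2*|h| + 3*K + 1 < D * (‖y t‖ ^ α)⁻¹ := by
      have h2 := (div_lt_iff₀ hD).1 hC
      linarith [h2]
    have hsplit : 2 * (m₀ / (α * ‖y t‖ ^ α)) - m₀ * (‖y t‖^α)⁻¹ = D * (‖y t‖^α)⁻¹ := by
      have hc1 : α * α⁻¹ = 1 := mul_inv_cancel₀ hα0.ne'
      rw [hD_def]
      linear_combination m₀ * (‖y t‖^α)⁻¹ * hc1
    have hE := hEn t htε
    rw [abs_le] at hE
    have hRF := hRFb t htε
    rw [abs_le] at hRF
    have hyK : ‖y t‖ * K ≤ K := by nlinarith [norm_nonneg (y t)]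
    rw [he1]
    have hh1 : -|h| ≤ h := neg_abs_le h
    linarith [hE.1, hRF.1]
  have hppos : ∀ t ∈ Set.Ioc (0:ℝ) ε₁, 0 < pp y t := by
    intro t ht
    by_contra hcon
    push_neg at hcon
    have hxneg : ∀ x ∈ Set.Ioo (0:ℝ) t, pp y x < 0 := by
      intro x hx
      have hIccsub : Set.Icc x t ⊆ Set.Ioc (0:ℝ) ε₁ :=
        fun z hz => ⟨lt_of_lt_of_le hx.1 hz.1, le_trans hz.2 ht.2⟩
      have hcont : ContinuousOn (pp y) (Set.Icc x t) :=
        fun z hz => ((hMp z (hsub1 (hIccsub hz))).continuousAt).continuousWithinAt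
      have hderiv : ∀ z ∈ interior (Set.Icc x t), 0 < deriv (pp y) z := by
        intro z hz
        rw [interior_Icc] at hz
        have hz' : z ∈ Set.Ioc (0:ℝ) ε₁ := hIccsub ⟨hz.1.le, hz.2.le⟩
        rw [(hMp z (hsub1 hz')).deriv]
        exact hPPpos z hz'
      have hmono := strictMonoOn_of_deriv_pos (convex_Icc x t) hcont hderiv
      have h3 := hmono (Set.left_mem_Icc.2 hx.2.le) (Set.right_mem_Icc.2 hx.2.le) hx.2
      linarith
    have hanti : ∀ x ∈ Set.Ioo (0:ℝ) t, gg y t < gg y x := by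
      intro x hx
      have hIccsub : Set.Icc x t ⊆ Set.Ioc (0:ℝ) ε₁ :=
        fun z hz => ⟨lt_of_lt_of_le hx.1 hz.1, le_trans hz.2 ht.2⟩
      have hcont : ContinuousOn (gg y) (Set.Icc x t) :=
        fun z hz => ((hMg z (hsub1 (hIccsub hz))).continuousAt).continuousWithinAt
      have hderiv : ∀ z ∈ interior (Set.Icc x t), deriv (gg y) z < 0 := by
        intro z hz
        rw [interior_Icc] at hz
        have hz0 : z ∈ Set.Ioo (0:ℝ) t := ⟨lt_trans hx.1 hz.1, hz.2⟩
        have hz' : z ∈ Set.Ioc (0:ℝ) ε₁ := hIccsub ⟨hz.1.le, hz.2.le⟩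
        rw [(hMg z (hsub1 hz')).deriv]
        have hppz := hxneg z hz0
        linarith
      have hantiOn := strictAntiOn_of_deriv_neg (convex_Icc x t) hcont hderiv
      exact hantiOn (Set.left_mem_Icc.2 hx.2.le) (Set.right_mem_Icc.2 hx.2.le) hx.2
    have hglim : Tendsto (gg y) (𝓝[>] (0:ℝ)) (𝓝 0) := by
      have h2 : Tendsto (fun s => ‖y s‖^2) (𝓝[>] (0:ℝ)) (𝓝 0) := by
        have h3 := hrlim.pow 2
        simpa using h3
      exact h2.congr (fun s => (hgval s).symm)
    have hgle : gg y t ≤ 0 := by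
      apply ge_of_tendsto hglim
      filter_upwards [Ioo_mem_nhdsGT_of_mem (show (0:ℝ) ∈ Set.Ico (0:ℝ) t from ⟨le_rfl, ht.1⟩)]
        with x hx2
      exact (hanti x hx2).le
    have hgpos : 0 < gg y t := by
      rw [hgval]
      have := hrpos t (hsub1 ht)
      positivity
    linarith
  have hgmono : ∀ s t : ℝ, s ∈ Set.Ioc (0:ℝ) ε₁ → t ∈ Set.Ioc (0:ℝ) ε₁ → s ≤ t →
      ‖y s‖ ≤ ‖y t‖ := by
    intro s t hs ht hst
    have hIccsub : Set.Icc s t ⊆ Set.Ioc (0:ℝ) ε₁ :=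
      fun z hz => ⟨lt_of_lt_of_le hs.1 hz.1, le_trans hz.2 ht.2⟩
    have hcont : ContinuousOn (gg y) (Set.Icc s t) :=
      fun z hz => ((hMg z (hsub1 (hIccsub hz))).continuousAt).continuousWithinAt
    have hdiff : DifferentiableOn ℝ (gg y) (interior (Set.Icc s t)) := by
      intro z hz
      rw [interior_Icc] at hz
      exact ((hMg z (hsub1 (hIccsub ⟨hz.1.le, hz.2.le⟩))).differentiableAt).differentiableWithinAt
    have hderiv : ∀ z ∈ interior (Set.Icc s t), 0 ≤ deriv (gg y) z := by
      intro z hz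
      rw [interior_Icc] at hz
      have hz' := hIccsub ⟨hz.1.le, hz.2.le⟩
      rw [(hMg z (hsub1 hz')).deriv]
      have := hppos z hz'
      linarith
    have hm := monotoneOn_of_deriv_nonneg (convex_Icc s t) hcont hdiff hderiv
    have hgle := hm (Set.left_mem_Icc.2 hst) (Set.right_mem_Icc.2 hst) hst
    rw [hgval s, hgval t] at hgle
    exact le_of_pow_le_pow_left₀ two_ne_zero (norm_nonneg _) hgle
  have hrv0 : Tendsto (fun s => ‖y s‖ * ‖deriv y s‖) (𝓝[>] (0:ℝ)) (𝓝 0) := by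
    have hsq : Tendsto (fun s => (‖y s‖ * ‖deriv y s‖)^2) (𝓝[>] (0:ℝ)) (𝓝 0) := by
      apply squeeze_zero' (g := fun s => 2*(m₀/α) * ‖y s‖^((2:ℝ)-α) + (2*|h|+2*K) * ‖y s‖^2)
      · filter_upwards with s
        positivity
      · filter_upwards [hIocmem] with s hs
        have hrp := hrpos s hs
        have hE := hEn s hs
        rw [abs_le] at hE
        have h2 : ‖deriv y s‖^2 ≤ 2*(m₀/(α*‖y s‖^α)) + 2*h + 2*K := by linarith [hE.2]
        have hkey : ‖y s‖^2 * (m₀/(α * ‖y s‖^α)) = m₀/α * ‖y s‖^((2:ℝ)-α) := by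
          rw [pow_two_rpow, Real.rpow_sub hrp]
          ring
        calc (‖y s‖*‖deriv y s‖)^2 = ‖y s‖^2 * ‖deriv y s‖^2 := by ring
          _ ≤ ‖y s‖^2 * (2*(m₀/(α*‖y s‖^α)) + 2*h + 2*K) :=
              mul_le_mul_of_nonneg_left h2 (by positivity)
          _ = 2*(m₀/α) * ‖y s‖^((2:ℝ)-α) + (2*h+2*K) * ‖y s‖^2 := by
              linear_combination 2*hkey
          _ ≤ 2*(m₀/α) * ‖y s‖^((2:ℝ)-α) + (2*|h|+2*K) * ‖y s‖^2 := by
              nlinarith [le_abs_self h, sq_nonneg ‖y s‖]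
      · have h1 := hrpowlim ((2:ℝ)-α) (by linarith)
        have h2 : Tendsto (fun s => ‖y s‖^2) (𝓝[>] (0:ℝ)) (𝓝 0) := by
          simpa using hrlim.pow 2
        have h3 := (h1.const_mul (2*(m₀/α))).add (h2.const_mul (2*|h|+2*K))
        simpa using h3
    have hnn : ∀ s, 0 ≤ ‖y s‖ * ‖deriv y s‖ := fun s => by positivity
    have h4 : Tendsto (fun s => Real.sqrt ((‖y s‖ * ‖deriv y s‖)^2)) (𝓝[>] (0:ℝ))
        (𝓝 (Real.sqrt 0)) := (Real.continuous_sqrt.tendsto 0).comp hsq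
    rw [Real.sqrt_zero] at h4
    exact h4.congr (fun s => Real.sqrt_sq (hnn s))
  have hL0 : Tendsto (LL y) (𝓝[>] (0:ℝ)) (𝓝 0) := by
    apply squeeze_zero_norm' _ hrv0
    filter_upwards with s
    simpa [Real.norm_eq_abs] using hLabs s
  have hLb : ∀ t ∈ Set.Ioc (0:ℝ) ε₁, |LL y t| ≤ K * ‖y t‖ * t := by
    intro t ht
    have key : ∀ s ∈ Set.Ioo (0:ℝ) t, |LL y t| ≤ K * ‖y t‖ * t + |LL y s| := by
      intro s hs
      have hIccsub : Set.Icc s t ⊆ Set.Ioc (0:ℝ) ε₁ :=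
        fun z hz => ⟨lt_of_lt_of_le hs.1 hz.1, le_trans hz.2 ht.2⟩
      have hdW : ∀ z ∈ Set.Icc s t, HasDerivWithinAt (LL y)
          ((y z).re * (F z).im - (y z).im * (F z).re) (Set.Icc s t) z :=
        fun z hz => (hML z (hsub1 (hIccsub hz))).hasDerivWithinAt
      have hbW : ∀ z ∈ Set.Icc s t, ‖(y z).re * (F z).im - (y z).im * (F z).re‖ ≤ K * ‖y t‖ := by
        intro z hz
        have hz' := hIccsub hz
        have h1 := hIFb z (hsub1 hz')
        have h2 : ‖y z‖ ≤ ‖y t‖ := hgmono z t hz' ht hz.2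
        rw [Real.norm_eq_abs]
        calc |(y z).re * (F z).im - (y z).im * (F z).re| ≤ ‖y z‖ * K := h1
          _ ≤ ‖y t‖ * K := mul_le_mul_of_nonneg_right h2 hK
          _ = K * ‖y t‖ := mul_comm _ _
      have hMVT := Convex.norm_image_sub_le_of_norm_hasDerivWithin_le hdW hbW (convex_Icc s t)
        (Set.left_mem_Icc.2 hs.2.le) (Set.right_mem_Icc.2 hs.2.le)
      have hts : ‖t - s‖ ≤ t := by
        rw [Real.norm_eq_abs, abs_of_nonneg (by linarith [hs.2.le] : (0:ℝ) ≤ t - s)]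
        linarith [hs.1]
      have habs : |LL y t - LL y s| ≤ K * ‖y t‖ * t := by
        have hKy : (0:ℝ) ≤ K * ‖y t‖ := by positivity
        have h5 : |LL y t - LL y s| ≤ K * ‖y t‖ * ‖t - s‖ := by
          simpa [Real.norm_eq_abs] using hMVT
        calc |LL y t - LL y s| ≤ K * ‖y t‖ * ‖t - s‖ := h5
          _ ≤ K * ‖y t‖ * t := mul_le_mul_of_nonneg_left hts hKy
      calc |LL y t| = |(LL y t - LL y s) + LL y s| := by ring_nf
        _ ≤ |LL y t - LL y s| + |LL y s| := abs_add_le _ _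
        _ ≤ K * ‖y t‖ * t + |LL y s| := by linarith [habs]
    have hlim : Tendsto (fun s => K * ‖y t‖ * t + |LL y s|) (𝓝[>] (0:ℝ))
        (𝓝 (K * ‖y t‖ * t + 0)) := by
      apply tendsto_const_nhds.add
      simpa using hL0.abs
    have hev2 : ∀ᶠ s in 𝓝[>] (0:ℝ), |LL y t| ≤ K * ‖y t‖ * t + |LL y s| := by
      filter_upwards [Ioo_mem_nhdsGT_of_mem
        (show (0:ℝ) ∈ Set.Ico (0:ℝ) t from ⟨le_rfl, ht.1⟩)] with s hs
      exact key s hs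
    have h6 := ge_of_tendsto hlim hev2
    simpa using h6
  have hε₁mem' : Set.Ioc (0:ℝ) ε₁ ∈ 𝓝[>] (0:ℝ) := Ioc_mem_nhdsGT_of_mem ⟨le_rfl, hε₁⟩
  have hEfull : Tendsto (fun t => ‖deriv y t‖^2 * ‖y t‖ ^ α) (𝓝[>] (0:ℝ)) (𝓝 (2*m₀/α)) := by
    have hdiff : Tendsto (fun t => ‖deriv y t‖^2 * ‖y t‖^α - 2*m₀/α) (𝓝[>] (0:ℝ)) (𝓝 0) := by
      apply squeeze_zero_norm' (a := fun t => (2*K + 2*|h|) * ‖y t‖^α)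
      · filter_upwards [hIocmem] with t ht
        have hrp := hrpos t ht
        have hE := hEn t ht
        have hra : (0:ℝ) ≤ ‖y t‖^α := (Real.rpow_pos_of_pos hrp α).le
        have hrane : ‖y t‖ ^ α ≠ 0 := (Real.rpow_pos_of_pos hrp α).ne'
        have hid : m₀ / (α * ‖y t‖^α) * ‖y t‖^α = m₀ / α := by
          rw [← div_div]
          exact div_mul_cancel₀ _ hrane
        have h1 : ‖deriv y t‖^2 * ‖y t‖^α - 2*m₀/α
            = (‖deriv y t‖^2 - 2*(m₀/(α*‖y t‖^α)) - 2*h) * ‖y t‖^α + 2*h*‖y t‖^α := by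
          linear_combination 2 * hid
        rw [Real.norm_eq_abs, h1]
        have e1 : |(‖deriv y t‖^2 - 2*(m₀/(α*‖y t‖^α)) - 2*h) * ‖y t‖^α|
            = |‖deriv y t‖^2 - 2*(m₀/(α*‖y t‖^α)) - 2*h| * ‖y t‖^α := by
          rw [abs_mul, abs_of_nonneg hra]
        have e2 : |2*h*‖y t‖^α| = 2 * |h| * ‖y t‖^α := by
          rw [abs_mul, abs_of_nonneg hra, abs_mul]
          norm_num
        have e3 := abs_add_le ((‖deriv y t‖^2 - 2*(m₀/(α*‖y t‖^α)) - 2*h) * ‖y t‖^α) (2*h*‖y t‖^α)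
        rw [e1, e2] at e3
        have h7 := mul_le_mul_of_nonneg_right hE hra
        calc |(‖deriv y t‖^2 - 2*(m₀/(α*‖y t‖^α)) - 2*h) * ‖y t‖^α + 2*h*‖y t‖^α|
            ≤ |‖deriv y t‖^2 - 2*(m₀/(α*‖y t‖^α)) - 2*h| * ‖y t‖^α + 2 * |h| * ‖y t‖^α := e3
          _ ≤ (2*K + 2*|h|) * ‖y t‖^α := by linarith [h7]
      · have h3 := (hrpowlim α hα0).const_mul (2*K + 2*|h|)
        simpa using h3
    have h4 := hdiff.add_const (2*m₀/α)
    simpa using h4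
  have hB : Tendsto (fun t => |LL y t| * ‖y t‖ ^ (α/2 - 1)) (𝓝[>] (0:ℝ)) (𝓝 0) := by
    have hbnd : Tendsto (fun t => K * t * ‖y t‖ ^ (α/2)) (𝓝[>] (0:ℝ)) (𝓝 0) := by
      have h1 : Tendsto (fun t : ℝ => t) (𝓝[>] (0:ℝ)) (𝓝 0) :=
        tendsto_id.mono_right nhdsWithin_le_nhds
      have h2 := (h1.const_mul K).mul (hrpowlim (α/2) (by linarith))
      simpa using h2
    apply squeeze_zero_norm' _ hbnd
    filter_upwards [hε₁mem'] with t ht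
    have hrp := hrpos t (hsub1 ht)
    have h1 := hLb t ht
    have hr2 : ‖y t‖ * ‖y t‖^(α/2 - 1) = ‖y t‖^(α/2) := by
      have h3 := Real.rpow_add_one hrp.ne' (α/2 - 1)
      rw [show α/2 - 1 + 1 = α/2 by ring] at h3
      rw [mul_comm]
      exact h3.symm
    have hnn : (0:ℝ) ≤ ‖y t‖^(α/2-1) := (Real.rpow_pos_of_pos hrp _).le
    rw [Real.norm_eq_abs, abs_of_nonneg (by positivity)]
    calc |LL y t| * ‖y t‖^(α/2-1) ≤ (K * ‖y t‖ * t) * ‖y t‖^(α/2-1) :=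
          mul_le_mul_of_nonneg_right h1 hnn
      _ = K * t * (‖y t‖ * ‖y t‖^(α/2-1)) := by ring
      _ = K * t * ‖y t‖^(α/2) := by rw [hr2]
  have hA : Tendsto (fun t => pp y t * ‖y t‖ ^ (α/2 - 1)) (𝓝[>] (0:ℝ))
      (𝓝 (Real.sqrt (2*m₀/α))) := by
    have hsqlim : Tendsto (fun t => (pp y t * ‖y t‖ ^ (α/2 - 1))^2) (𝓝[>] (0:ℝ))
        (𝓝 (2*m₀/α)) := by
      have h1 : Tendsto (fun t => ‖deriv y t‖^2 * ‖y t‖^α - (|LL y t| * ‖y t‖^(α/2-1))^2)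
          (𝓝[>] (0:ℝ)) (𝓝 (2*m₀/α)) := by
        have h2 := hEfull.sub (hB.pow 2)
        simpa using h2
      apply Tendsto.congr' _ h1
      filter_upwards [hε₁mem'] with t ht
      have hrp := hrpos t (hsub1 ht)
      have hC : pp y t^2 + LL y t^2 = gg y t * ‖deriv y t‖^2 := by
        rw [normsq_eq' (deriv y t)]
        simp only [pp, LL, gg]
        ring
      have hc2 : (‖y t‖^(α/2-1))^2 = ‖y t‖^(α - 2) := by
        rw [sq]; exact rpow_add_eq hrp (by ring)
      have hgr : gg y t * ‖y t‖^(α-2) = ‖y t‖^α := by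
        rw [hgval, pow_two_rpow]; exact rpow_add_eq hrp (by ring)
      have habs2 : |LL y t|^2 = LL y t^2 := sq_abs _
      calc ‖deriv y t‖^2 * ‖y t‖^α - (|LL y t| * ‖y t‖^(α/2-1))^2
          = ‖deriv y t‖^2 * (gg y t * ‖y t‖^(α-2)) - LL y t^2 * ‖y t‖^(α-2) := by
            rw [hgr, mul_pow, habs2, hc2]
        _ = pp y t^2 * ‖y t‖^(α-2) := by linear_combination (-(‖y t‖^(α-2))) * hC
        _ = (pp y t * ‖y t‖^(α/2-1))^2 := by rw [mul_pow, hc2]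
    have h2 : Tendsto (fun t => Real.sqrt ((pp y t * ‖y t‖ ^ (α/2 - 1))^2)) (𝓝[>] (0:ℝ))
        (𝓝 (Real.sqrt (2*m₀/α))) := (Real.continuous_sqrt.tendsto _).comp hsqlim
    apply Tendsto.congr' _ h2
    filter_upwards [hε₁mem'] with t ht
    have hp := hppos t ht
    have hrp := hrpos t (hsub1 ht)
    have hnn : 0 ≤ pp y t * ‖y t‖^(α/2-1) :=
      mul_nonneg hp.le (Real.rpow_pos_of_pos hrp _).le
    exact Real.sqrt_sq hnn
  have hwlim : Tendsto
      (fun t => (deriv y t - ((pp y t / gg y t : ℝ) : ℂ) * y t) * ((‖y t‖ ^ (α/2) : ℝ) : ℂ))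
      (𝓝[>] (0:ℝ)) (𝓝 0) := by
    apply squeeze_zero_norm' _ hB
    filter_upwards [hε₁mem'] with t ht
    have hrp := hrpos t (hsub1 ht)
    have hgpos : 0 < gg y t := by
      rw [hgval]; positivity
    rw [norm_mul, Complex.norm_real, Real.norm_eq_abs,
      abs_of_nonneg (Real.rpow_pos_of_pos hrp (α/2)).le]
    have hq2 : (‖y t‖^(α/2))^2 = gg y t * ‖y t‖^(α-2) := by
      rw [sq, rpow_add_eq hrp (show α/2 + α/2 = α by ring), hgval, pow_two_rpow ‖y t‖,
        rpow_add_eq hrp (show (2:ℝ) + (α-2) = α by ring)]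
    have hc2 : (‖y t‖^(α/2-1))^2 = ‖y t‖^(α - 2) := by
      rw [sq]; exact rpow_add_eq hrp (by ring)
    have hwsq : ‖deriv y t - ((pp y t / gg y t : ℝ):ℂ) * y t‖^2 * gg y t = LL y t^2 := by
      rw [normsq_eq']
      simp only [Complex.sub_re, Complex.sub_im, Complex.mul_re, Complex.mul_im,
        Complex.ofReal_re, Complex.ofReal_im]
      have hgne : gg y t ≠ 0 := hgpos.ne'
      field_simp
      simp only [pp, LL, gg]
      ring
    have hsq : (‖deriv y t - ((pp y t / gg y t : ℝ):ℂ) * y t‖ * ‖y t‖^(α/2))^2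
        = (|LL y t| * ‖y t‖^(α/2-1))^2 := by
      calc (‖deriv y t - ((pp y t / gg y t : ℝ):ℂ) * y t‖ * ‖y t‖^(α/2))^2
          = ‖deriv y t - ((pp y t / gg y t : ℝ):ℂ) * y t‖^2 * (‖y t‖^(α/2))^2 := by ring
        _ = (‖deriv y t - ((pp y t / gg y t : ℝ):ℂ) * y t‖^2 * gg y t) * ‖y t‖^(α-2) := by
            rw [hq2]; ring
        _ = LL y t^2 * ‖y t‖^(α-2) := by rw [hwsq]
        _ = |LL y t|^2 * (‖y t‖^(α/2-1))^2 := by rw [sq_abs, hc2]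
        _ = (|LL y t| * ‖y t‖^(α/2-1))^2 := by ring
    have hnn1 : 0 ≤ ‖deriv y t - ((pp y t / gg y t : ℝ):ℂ) * y t‖ * ‖y t‖^(α/2) := by positivity
    have hnn2 : 0 ≤ |LL y t| * ‖y t‖^(α/2-1) := by positivity
    have heq2 : ‖deriv y t - ((pp y t / gg y t : ℝ):ℂ) * y t‖ * ‖y t‖^(α/2)
        = |LL y t| * ‖y t‖^(α/2-1) := by
      calc ‖deriv y t - ((pp y t / gg y t : ℝ):ℂ) * y t‖ * ‖y t‖^(α/2)
          = Real.sqrt ((‖deriv y t - ((pp y t / gg y t : ℝ):ℂ) * y t‖ * ‖y t‖^(α/2))^2) :=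
            (Real.sqrt_sq hnn1).symm
        _ = Real.sqrt ((|LL y t| * ‖y t‖^(α/2-1))^2) := by rw [hsq]
        _ = |LL y t| * ‖y t‖^(α/2-1) := Real.sqrt_sq hnn2
    exact le_of_eq heq2
  have hS1 : Tendsto (fun t => (pp y t * ‖y t‖^(α/2-1)) • (y t / ((‖y t‖:ℝ):ℂ)))
      (𝓝[>] (0:ℝ)) (𝓝 ((Real.sqrt (2*m₀/α)) • Complex.exp ((θ:ℂ)*Complex.I))) :=
    hA.smul hθ
  have hfinal := hS1.add hwlim
  rw [add_zero, Complex.real_smul] at hfinal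
  apply hfinal.congr'
  filter_upwards [hε₁mem'] with t ht
  have hrp := hrpos t (hsub1 ht)
  have hgpos : 0 < gg y t := by rw [hgval]; positivity
  have hrne : ((‖y t‖:ℝ):ℂ) ≠ 0 := by
    rw [Complex.ofReal_ne_zero]; exact hrp.ne'
  have hgneC : ((gg y t:ℝ):ℂ) ≠ 0 := by
    rw [Complex.ofReal_ne_zero]; exact hgpos.ne'
  have hkey : (pp y t * ‖y t‖^(α/2-1)) * gg y t = pp y t * ‖y t‖^(α/2) * ‖y t‖ := by
    rw [hgval]
    have e1 : ‖y t‖^(α/2-1) * ‖y t‖^2 = ‖y t‖^(α/2) * ‖y t‖ := by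
      rw [pow_two_rpow]
      rw [rpow_add_eq hrp (show α/2-1 + 2 = α/2 + 1 by ring)]
      rw [Real.rpow_add_one hrp.ne' (α/2)]
    linear_combination pp y t * e1
  show (pp y t * ‖y t‖^(α/2-1)) • (y t / ((‖y t‖:ℝ):ℂ))
      + (deriv y t - ((pp y t / gg y t : ℝ):ℂ) * y t) * ((‖y t‖^(α/2) : ℝ):ℂ)
      = deriv y t * ((‖y t‖^(α/2) : ℝ):ℂ)
  rw [Complex.real_smul]
  have hsc : (pp y t * ‖y t‖^(α/2-1))/‖y t‖ = pp y t / gg y t * ‖y t‖^(α/2) := by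
    rw [div_mul_eq_mul_div, div_eq_div_iff hrp.ne' hgpos.ne']
    linear_combination hkey
  have hstep : ((pp y t * ‖y t‖^(α/2-1) : ℝ) : ℂ) * (y t / ((‖y t‖:ℝ):ℂ))
      = ((pp y t / gg y t : ℝ):ℂ) * y t * ((‖y t‖^(α/2) : ℝ):ℂ) := by
    calc ((pp y t * ‖y t‖^(α/2-1) : ℝ) : ℂ) * (y t / ((‖y t‖:ℝ):ℂ))
        = (((pp y t * ‖y t‖^(α/2-1) : ℝ) : ℂ) / ((‖y t‖:ℝ):ℂ)) * y t := by ring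
      _ = (((pp y t * ‖y t‖^(α/2-1))/‖y t‖ : ℝ) : ℂ) * y t := by rw [Complex.ofReal_div]
      _ = ((pp y t / gg y t * ‖y t‖^(α/2) : ℝ) : ℂ) * y t := by rw [hsc]
      _ = ((pp y t / gg y t : ℝ):ℂ) * y t * ((‖y t‖^(α/2) : ℝ):ℂ) := by
          rw [Complex.ofReal_mul]; ring
  rw [hstep]; ring






set_option maxHeartbeats 1000000 in
private lemma aux_left
    (m₀ h K α : ℝ) (hm₀ : 0 < m₀) (hα1 : 1 ≤ α) (hα2 : α < 2) (hK : 0 ≤ K)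
    (ε : ℝ) (hε : 0 < ε) (y F : ℝ → ℂ)
    (hylim : Tendsto y (𝓝[<] (0:ℝ)) (𝓝 0))
    (hyne : ∀ t ∈ Set.Ioo (-ε) (0:ℝ), y t ≠ 0)
    (hd1 : ∀ t ∈ Set.Ioo (-ε) (0:ℝ), DifferentiableAt ℝ y t)
    (hd2 : ∀ t ∈ Set.Ioo (-ε) (0:ℝ), DifferentiableAt ℝ (deriv y) t)
    (heq : ∀ t ∈ Set.Ioo (-ε) (0:ℝ),
      deriv (deriv y) t = -((m₀ / (‖y t‖ ^ (α+2) : ℝ)) • y t) + F t)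
    (hF : ∀ t ∈ Set.Ioo (-ε) (0:ℝ), ‖F t‖ ≤ K)
    (hen : ∀ t ∈ Set.Ioo (-ε) (0:ℝ),
      |(1/2) * ‖deriv y t‖^2 - m₀ / (α * ‖y t‖ ^ α) - h| ≤ K)
    (θ : ℝ)
    (hθ : Tendsto (fun t : ℝ => y t / ((‖y t‖ : ℝ) : ℂ)) (𝓝[<] (0:ℝ))
      (𝓝 (Complex.exp ((θ:ℂ) * Complex.I)))) :
    Tendsto (fun t : ℝ => deriv y t * ((‖y t‖ ^ (α/2) : ℝ) : ℂ)) (𝓝[<] (0:ℝ))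
      (𝓝 (-(((Real.sqrt (2*m₀/α) : ℝ) : ℂ) * Complex.exp ((θ:ℂ) * Complex.I)))) := by
  have hnegR : Tendsto (fun t : ℝ => -t) (𝓝[>] (0:ℝ)) (𝓝[<] (0:ℝ)) := by
    apply tendsto_nhdsWithin_of_tendsto_nhds_of_eventually_within
    · have h1 : Tendsto (fun t : ℝ => -t) (𝓝 (0:ℝ)) (𝓝 (-(0:ℝ))) := (continuous_neg).tendsto 0
      simpa using h1.mono_left nhdsWithin_le_nhds
    · filter_upwards [self_mem_nhdsWithin] with t ht
      simpa using (show (0:ℝ) < t from ht)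
  have hnegL : Tendsto (fun t : ℝ => -t) (𝓝[<] (0:ℝ)) (𝓝[>] (0:ℝ)) := by
    apply tendsto_nhdsWithin_of_tendsto_nhds_of_eventually_within
    · have h1 : Tendsto (fun t : ℝ => -t) (𝓝 (0:ℝ)) (𝓝 (-(0:ℝ))) := (continuous_neg).tendsto 0
      simpa using h1.mono_left nhdsWithin_le_nhds
    · filter_upwards [self_mem_nhdsWithin] with t ht
      simpa using (show t < (0:ℝ) from ht)
  set z : ℝ → ℂ := fun t => y (-t) with hz_def
  have hmem : ∀ s ∈ Set.Ioo (0:ℝ) ε, -s ∈ Set.Ioo (-ε) (0:ℝ) :=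
    fun s hs => ⟨by linarith [hs.2], by linarith [hs.1]⟩
  have hHz : ∀ s ∈ Set.Ioo (0:ℝ) ε, HasDerivAt z (-(deriv y (-s))) s := by
    intro s hs
    have h1 := ((hd1 (-s) (hmem s hs)).hasDerivAt).scomp s (hasDerivAt_neg s)
    simpa [Function.comp_def] using h1
  have hzderiv : ∀ s ∈ Set.Ioo (0:ℝ) ε, deriv z s = -(deriv y (-s)) :=
    fun s hs => (hHz s hs).deriv
  have hmem2 : ∀ t ∈ Set.Ioc (0:ℝ) (ε/2), t ∈ Set.Ioo (0:ℝ) ε :=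
    fun t ht => ⟨ht.1, lt_of_le_of_lt ht.2 (by linarith)⟩
  have hev : ∀ t ∈ Set.Ioc (0:ℝ) (ε/2), deriv z =ᶠ[𝓝 t] fun s => -(deriv y (-s)) := by
    intro t ht
    have hopen : Set.Ioo (0:ℝ) ε ∈ 𝓝 t := isOpen_Ioo.mem_nhds (hmem2 t ht)
    filter_upwards [hopen] with s hs
    exact hzderiv s hs
  have hHz2 : ∀ t ∈ Set.Ioc (0:ℝ) (ε/2),
      HasDerivAt (fun s => -(deriv y (-s))) (deriv (deriv y) (-t)) t := by
    intro t ht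
    have h1 := ((hd2 (-t) (hmem t (hmem2 t ht))).hasDerivAt).scomp t (hasDerivAt_neg t)
    have h2 := h1.neg
    simpa [Function.comp_def, Pi.neg_def] using h2
  have hdz2 : ∀ t ∈ Set.Ioc (0:ℝ) (ε/2),
      deriv (deriv z) t = deriv (deriv y) (-t) := by
    intro t ht
    rw [Filter.EventuallyEq.deriv_eq (hev t ht)]
    exact (hHz2 t ht).deriv
  have hzval : ∀ t, z t = y (-t) := fun t => rfl
  have R := aux_right m₀ h K α hm₀ hα1 hα2 hK (ε/2) (by linarith) z (fun t => F (-t))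
    (hylim.comp hnegR)
    (fun t ht => hyne (-t) (hmem t (hmem2 t ht)))
    (fun t ht => (hHz t (hmem2 t ht)).differentiableAt)
    (fun t ht => ((hHz2 t ht).differentiableAt).congr_of_eventuallyEq (hev t ht))
    (by
      intro t ht
      rw [hdz2 t ht, heq (-t) (hmem t (hmem2 t ht))])
    (fun t ht => hF (-t) (hmem t (hmem2 t ht)))
    (by
      intro t ht
      rw [hzderiv t (hmem2 t ht), norm_neg]
      exact hen (-t) (hmem t (hmem2 t ht)))
    θ (hθ.comp hnegR)
  have R2 := (R.comp hnegL).neg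
  apply R2.congr'
  filter_upwards [Ioo_mem_nhdsLT_of_mem
    (show (0:ℝ) ∈ Set.Ioc (-(ε/2)) (0:ℝ) from ⟨by linarith, le_rfl⟩)] with s hs
  have hms : -s ∈ Set.Ioc (0:ℝ) (ε/2) := ⟨by linarith [hs.2], by linarith [hs.1]⟩
  show -(deriv z (-s) * ((‖z (-s)‖ ^ (α/2) : ℝ) : ℂ)) = deriv y s * ((‖y s‖ ^ (α/2) : ℝ) : ℂ)
  rw [hzderiv (-s) (hmem2 (-s) hms)]
  have hz2 : z (-s) = y s := by rw [hzval, neg_neg]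
  rw [hz2, neg_neg s]
  ring

set_option maxHeartbeats 1000000 in
/-- asymptotic velocity direction at a collision. -/
theorem stmt_8
    (N : ℕ) (hN : 0 < N) (c : Fin N → ℂ) (m : Fin N → ℝ)
    (hc_inj : Function.Injective c) (hm : ∀ j, 0 < m j)
    (α : ℝ) (hα1 : 1 ≤ α) (hα2 : α < 2)
    (hc1 : c ⟨0, hN⟩ = 0)
    (δ : ℝ) (hδ : 0 < δ) (y : ℝ → ℂ)
    (hy_cont : ContinuousOn y (Set.Icc (-δ) δ))
    (hy0 : y 0 = 0)
    (hy_ne : ∀ t ∈ Set.Icc (-δ) δ, t ≠ 0 → ∀ j, y t ≠ c j)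
    (hy_d1 : ∀ t ∈ Set.Icc (-δ) δ, t ≠ 0 → DifferentiableAt ℝ y t)
    (hy_d2 : ∀ t ∈ Set.Icc (-δ) δ, t ≠ 0 → DifferentiableAt ℝ (deriv y) t)
    (hy_eq : ∀ t ∈ Set.Icc (-δ) δ, t ≠ 0 →
      deriv (deriv y) t = -∑ j, (m j : ℂ) * (y t - c j) / ((‖y t - c j‖ ^ (α + 2) : ℝ) : ℂ))
    (h : ℝ)
    (hy_energy : ∀ t ∈ Set.Icc (-δ) δ, t ≠ 0 →
      (1 / 2) * ‖deriv y t‖ ^ 2 - ∑ j, m j / (α * ‖y t - c j‖ ^ α) = h)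
    (θm θp : ℝ)
    (hθm : Filter.Tendsto (fun t : ℝ => y t / ((‖y t‖ : ℝ) : ℂ)) (𝓝[<] (0 : ℝ))
      (𝓝 (Complex.exp ((θm : ℂ) * Complex.I))))
    (hθp : Filter.Tendsto (fun t : ℝ => y t / ((‖y t‖ : ℝ) : ℂ)) (𝓝[>] (0 : ℝ))
      (𝓝 (Complex.exp ((θp : ℂ) * Complex.I))))
    (μ : ℝ) (hμ : μ = (α + 2) * Real.sqrt (m ⟨0, hN⟩ / (2 * α))) :
    Filter.Tendsto (fun t : ℝ => deriv y t * ((‖y t‖ ^ (α / 2) : ℝ) : ℂ)) (𝓝[>] (0 : ℝ))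
      (𝓝 (((2 * μ / (2 + α) : ℝ) : ℂ) * Complex.exp ((θp : ℂ) * Complex.I))) ∧
    Filter.Tendsto (fun t : ℝ => deriv y t * ((‖y t‖ ^ (α / 2) : ℝ) : ℂ)) (𝓝[<] (0 : ℝ))
      (𝓝 (-(((2 * μ / (2 + α) : ℝ) : ℂ) * Complex.exp ((θm : ℂ) * Complex.I)))) := by
  classical
  have hα0 : (0:ℝ) < α := lt_of_lt_of_le one_pos hα1
  set i0 : Fin N := ⟨0, hN⟩ with hi0
  set m₀ : ℝ := m i0 with hm₀def
  have hm₀ : 0 < m₀ := hm i0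
  -- distance to the other centers
  obtain ⟨d, hd, hdle⟩ : ∃ d : ℝ, 0 < d ∧ ∀ j : Fin N, j ≠ i0 → d ≤ ‖c j‖ := by
    rcases (Finset.univ.erase i0).eq_empty_or_nonempty with hS | hS
    · refine ⟨1, one_pos, fun j hj => absurd (Finset.mem_erase.2 ⟨hj, Finset.mem_univ j⟩) ?_⟩
      simp [hS]
    · refine ⟨(Finset.univ.erase i0).inf' hS (fun j => ‖c j‖), ?_, ?_⟩
      · rw [Finset.lt_inf'_iff]
        intro j hj
        have hcj : c j ≠ 0 := by
          rw [← hc1]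
          exact fun hcj => (Finset.mem_erase.1 hj).1 (hc_inj hcj)
        exact norm_pos_iff.2 hcj
      · intro j hj
        exact Finset.inf'_le _ (Finset.mem_erase.2 ⟨hj, Finset.mem_univ j⟩)
  set K : ℝ := ∑ j ∈ Finset.univ.erase i0,
    (m j * (d/2) ^ (-(α+1)) + m j / (α * (d/2) ^ α)) with hKdef
  have hK0 : 0 ≤ K := by
    apply Finset.sum_nonneg
    intro j hj
    have h1 := (hm j).le
    have h2 : (0:ℝ) < d/2 := by linarith
    positivity
  -- smallness neighborhood
  have hcw : Tendsto y (𝓝[Set.Icc (-δ) δ] (0:ℝ)) (𝓝 0) := by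
    have h1 := hy_cont 0 ⟨by linarith, by linarith⟩
    rw [ContinuousWithinAt, hy0] at h1
    exact h1
  have hball : {t : ℝ | y t ∈ Metric.ball 0 (d/2)} ∈ 𝓝[Set.Icc (-δ) δ] (0:ℝ) :=
    hcw (Metric.ball_mem_nhds _ (by linarith))
  rw [Metric.mem_nhdsWithin_iff] at hball
  obtain ⟨η, hη, hsubη⟩ := hball
  set ε₀ : ℝ := min (η/2) (δ/2) with hε₀def
  have hε₀ : 0 < ε₀ := lt_min (by linarith) (by linarith)
  have hε₀δ : ε₀ < δ := lt_of_le_of_lt (min_le_right _ _) (by linarith)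
  have hε₀η : ε₀ < η := lt_of_le_of_lt (min_le_left _ _) (by linarith)
  have hIcc : ∀ t : ℝ, |t| ≤ ε₀ → t ∈ Set.Icc (-δ) δ := by
    intro t ht
    have h1 := abs_le.1 ht
    exact ⟨by linarith [h1.1], by linarith [h1.2]⟩
  have hsmall : ∀ t : ℝ, |t| ≤ ε₀ → ‖y t‖ ≤ d/2 := by
    intro t htb
    have h1 : t ∈ Metric.ball (0:ℝ) η := by
      rw [Metric.mem_ball, Real.dist_eq, sub_zero]
      exact lt_of_le_of_lt htb hε₀η
    have h2 := hsubη ⟨h1, hIcc t htb⟩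
    simp only [Set.mem_setOf_eq, Metric.mem_ball, dist_zero_right] at h2
    exact h2.le
  -- force remainder
  set F : ℝ → ℂ := fun t => deriv (deriv y) t + (m₀ / (‖y t‖ ^ (α+2) : ℝ)) • y t with hFdef
  have heqF : ∀ t : ℝ, deriv (deriv y) t = -((m₀ / (‖y t‖ ^ (α+2) : ℝ)) • y t) + F t := by
    intro t
    simp only [hFdef]
    abel
  have hXj : ∀ (t : ℝ) (j : Fin N), |t| ≤ ε₀ → j ≠ i0 → d/2 ≤ ‖y t - c j‖ := by
    intro t j htb hj
    have h1 := hdle j hj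
    have h2 := hsmall t htb
    have h3 : ‖c j‖ - ‖y t‖ ≤ ‖c j - y t‖ := norm_sub_norm_le _ _
    rw [norm_sub_rev] at h3
    linarith
  have hFb : ∀ t : ℝ, t ∈ Set.Icc (-δ) δ → t ≠ 0 → |t| ≤ ε₀ → ‖F t‖ ≤ K := by
    intro t htI htne htb
    have hterm0 : (m i0 : ℂ) * (y t - c i0) / ((‖y t - c i0‖ ^ (α + 2) : ℝ) : ℂ)
        = (m₀ / (‖y t‖ ^ (α+2) : ℝ)) • y t := by
      rw [hc1, sub_zero, Complex.real_smul, hm₀def]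
      push_cast
      ring
    have hsplit : ∑ j, (m j : ℂ) * (y t - c j) / ((‖y t - c j‖ ^ (α + 2) : ℝ) : ℂ)
        = (∑ j ∈ Finset.univ.erase i0,
            (m j : ℂ) * (y t - c j) / ((‖y t - c j‖ ^ (α + 2) : ℝ) : ℂ))
          + (m i0 : ℂ) * (y t - c i0) / ((‖y t - c i0‖ ^ (α + 2) : ℝ) : ℂ) :=
      (Finset.sum_erase_add _ _ (Finset.mem_univ i0)).symm
    have hFt : F t = -∑ j ∈ Finset.univ.erase i0,
        (m j : ℂ) * (y t - c j) / ((‖y t - c j‖ ^ (α + 2) : ℝ) : ℂ) := by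
      simp only [hFdef]
      rw [hy_eq t htI htne, hsplit, hterm0]
      abel
    rw [hFt, norm_neg]
    calc ‖∑ j ∈ Finset.univ.erase i0,
        (m j : ℂ) * (y t - c j) / ((‖y t - c j‖ ^ (α + 2) : ℝ) : ℂ)‖
        ≤ ∑ j ∈ Finset.univ.erase i0,
          ‖(m j : ℂ) * (y t - c j) / ((‖y t - c j‖ ^ (α + 2) : ℝ) : ℂ)‖ := norm_sum_le _ _
      _ ≤ K := by
          rw [hKdef]
          apply Finset.sum_le_sum
          intro j hj
          have hjne : j ≠ i0 := (Finset.mem_erase.1 hj).1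
          have hX := hXj t j htb hjne
          have hXpos : (0:ℝ) < ‖y t - c j‖ := by linarith
          have hd2 : (0:ℝ) < d/2 := by linarith
          have hnorm : ‖(m j : ℂ) * (y t - c j) / ((‖y t - c j‖ ^ (α + 2) : ℝ) : ℂ)‖
              = m j * ‖y t - c j‖ / ‖y t - c j‖ ^ (α+2) := by
            rw [norm_div, norm_mul, Complex.norm_real, Complex.norm_real, Real.norm_eq_abs,
              Real.norm_eq_abs, abs_of_pos (hm j), abs_of_nonneg (Real.rpow_pos_of_pos hXpos _).le]
          rw [hnorm]
          have hrw : m j * ‖y t - c j‖ / ‖y t - c j‖ ^ (α+2)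
              = m j * ‖y t - c j‖ ^ (-(α+1)) := by
            have h10 : ‖y t - c j‖ ^ (-(α+1)) = ‖y t - c j‖ ^ ((1:ℝ) - (α+2)) := by congr 1; ring
            rw [h10, Real.rpow_sub hXpos, Real.rpow_one, mul_div_assoc]
          rw [hrw]
          have hle : ‖y t - c j‖ ^ (-(α+1)) ≤ (d/2) ^ (-(α+1)) := by
            rw [Real.rpow_neg hXpos.le, Real.rpow_neg hd2.le]
            apply inv_anti₀ (Real.rpow_pos_of_pos hd2 _)
            exact Real.rpow_le_rpow hd2.le hX (by linarith)
          have h5 : m j * ‖y t - c j‖ ^ (-(α+1)) ≤ m j * (d/2) ^ (-(α+1)) :=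
            mul_le_mul_of_nonneg_left hle (hm j).le
          have h6 : (0:ℝ) ≤ m j / (α * (d/2) ^ α) :=
            div_nonneg (hm j).le (mul_nonneg hα0.le (Real.rpow_pos_of_pos hd2 _).le)
          linarith
  have hEb : ∀ t : ℝ, t ∈ Set.Icc (-δ) δ → t ≠ 0 → |t| ≤ ε₀ →
      |(1/2) * ‖deriv y t‖^2 - m₀ / (α * ‖y t‖ ^ α) - h| ≤ K := by
    intro t htI htne htb
    have hsum := hy_energy t htI htne
    have hterm0 : m i0 / (α * ‖y t - c i0‖ ^ α) = m₀ / (α * ‖y t‖ ^ α) := by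
      rw [hc1, sub_zero, hm₀def]
    have hsplit : ∑ j, m j / (α * ‖y t - c j‖ ^ α)
        = (∑ j ∈ Finset.univ.erase i0, m j / (α * ‖y t - c j‖ ^ α))
          + m i0 / (α * ‖y t - c i0‖ ^ α) :=
      (Finset.sum_erase_add _ _ (Finset.mem_univ i0)).symm
    rw [hsplit, hterm0] at hsum
    have hval : (1/2) * ‖deriv y t‖^2 - m₀ / (α * ‖y t‖ ^ α) - h
        = ∑ j ∈ Finset.univ.erase i0, m j / (α * ‖y t - c j‖ ^ α) := by linarith
    rw [hval]
    have hnn : (0:ℝ) ≤ ∑ j ∈ Finset.univ.erase i0, m j / (α * ‖y t - c j‖ ^ α) := by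
      apply Finset.sum_nonneg
      intro j hj
      have hjne : j ≠ i0 := (Finset.mem_erase.1 hj).1
      have hX := hXj t j htb hjne
      have hXpos : (0:ℝ) < ‖y t - c j‖ := by linarith
      exact div_nonneg (hm j).le (mul_nonneg hα0.le (Real.rpow_pos_of_pos hXpos _).le)
    rw [abs_of_nonneg hnn, hKdef]
    apply Finset.sum_le_sum
    intro j hj
    have hjne : j ≠ i0 := (Finset.mem_erase.1 hj).1
    have hX := hXj t j htb hjne
    have hd2 : (0:ℝ) < d/2 := by linarith
    have hXpos : (0:ℝ) < ‖y t - c j‖ := by linarith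
    have hle : m j / (α * ‖y t - c j‖ ^ α) ≤ m j / (α * (d/2) ^ α) := by
      apply div_le_div_of_nonneg_left (hm j).le (mul_pos hα0 (Real.rpow_pos_of_pos hd2 _))
      exact mul_le_mul_of_nonneg_left (Real.rpow_le_rpow hd2.le hX hα0.le) hα0.le
    have h7 : (0:ℝ) ≤ m j * (d/2) ^ (-(α+1)) :=
      mul_nonneg (hm j).le (Real.rpow_pos_of_pos hd2 _).le
    linarith
  -- constant identity
  have hconst : Real.sqrt (2*m₀/α) = 2 * μ / (2 + α) := by
    rw [hμ]
    have hne : (2 + α) ≠ 0 := by linarith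
    have h8 : 2 * ((α + 2) * Real.sqrt (m i0 / (2 * α))) / (2 + α)
        = 2 * Real.sqrt (m i0 / (2 * α)) := by
      field_simp
      ring
    rw [h8]
    have h9 : 2 * m₀ / α = 4 * (m i0 / (2 * α)) := by
      rw [hm₀def]
      field_simp
      ring
    rw [h9, show (4:ℝ) = 2^2 by norm_num, Real.sqrt_mul (by positivity),
      Real.sqrt_sq (by norm_num : (0:ℝ) ≤ 2)]
  constructor
  · -- right limit
    have hylimR : Tendsto y (𝓝[>] (0:ℝ)) (𝓝 0) := by
      have h1 : Tendsto y (𝓝[Set.Ioc (0:ℝ) δ] (0:ℝ)) (𝓝 0) :=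
        hcw.mono_left (nhdsWithin_mono 0 (fun x hx => ⟨by linarith [hx.1], hx.2⟩))
      rwa [nhdsWithin_Ioc_eq_nhdsGT hδ] at h1
    have HR := aux_right m₀ h K α hm₀ hα1 hα2 hK0 ε₀ hε₀ y F hylimR
      (by
        intro t ht
        have htb : |t| ≤ ε₀ := by rw [abs_of_pos ht.1]; exact ht.2
        have h1 := hy_ne t (hIcc t htb) ht.1.ne' i0
        rwa [hc1] at h1)
      (by
        intro t ht
        have htb : |t| ≤ ε₀ := by rw [abs_of_pos ht.1]; exact ht.2
        exact hy_d1 t (hIcc t htb) ht.1.ne')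
      (by
        intro t ht
        have htb : |t| ≤ ε₀ := by rw [abs_of_pos ht.1]; exact ht.2
        exact hy_d2 t (hIcc t htb) ht.1.ne')
      (fun t _ => heqF t)
      (by
        intro t ht
        have htb : |t| ≤ ε₀ := by rw [abs_of_pos ht.1]; exact ht.2
        exact hFb t (hIcc t htb) ht.1.ne' htb)
      (by
        intro t ht
        have htb : |t| ≤ ε₀ := by rw [abs_of_pos ht.1]; exact ht.2
        exact hEb t (hIcc t htb) ht.1.ne' htb)
      θp hθp
    rwa [hconst] at HR
  · -- left limit
    have hylimL : Tendsto y (𝓝[<] (0:ℝ)) (𝓝 0) := by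
      have h1 : Tendsto y (𝓝[Set.Ico (-δ) (0:ℝ)] (0:ℝ)) (𝓝 0) :=
        hcw.mono_left (nhdsWithin_mono 0 (fun x hx => ⟨hx.1, by linarith [hx.2]⟩))
      rwa [nhdsWithin_Ico_eq_nhdsLT (by linarith : -δ < (0:ℝ))] at h1
    have habsL : ∀ t : ℝ, t ∈ Set.Ioo (-ε₀) (0:ℝ) → |t| ≤ ε₀ := by
      intro t ht
      rw [abs_of_neg ht.2]
      linarith [ht.1]
    have HL := aux_left m₀ h K α hm₀ hα1 hα2 hK0 ε₀ hε₀ y F hylimL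
      (by
        intro t ht
        have htb := habsL t ht
        have h1 := hy_ne t (hIcc t htb) ht.2.ne i0
        rwa [hc1] at h1)
      (by
        intro t ht
        have htb := habsL t ht
        exact hy_d1 t (hIcc t htb) ht.2.ne)
      (by
        intro t ht
        have htb := habsL t ht
        exact hy_d2 t (hIcc t htb) ht.2.ne)
      (fun t _ => heqF t)
      (by
        intro t ht
        have htb := habsL t ht
        exact hFb t (hIcc t htb) ht.2.ne htb)
      (by
        intro t ht
        have htb := habsL t ht
        exact hEb t (hIcc t htb) ht.2.ne htb)
      θm hθm
    rwa [hconst] at HL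
end

section
/- Angular variation of a zero-energy Kepler arc grazing a circle: let α ∈ [1,2), m₁ > 0, ω > 0, 0 < ρ < r*, and let x : [t₁, t₂] → ℂ \ {0} be a C² curve satisfying ω²·ẍ(t) = −m₁ x(t)/|x(t)|^{α+2} and the zero-energy identity ½|ẋ(t)|² = m₁/(ω² α |x(t)|^α) on [t₁, t₂], with |x(t₁)| = ρ, |x(t₂)| = r*, d/dt |x(t)| > 0 for t ∈ (t₁, t₂), and angular momentum Im(conj(x(t))·ẋ(t)) = √(2m₁/(ω²α))·ρ^{(2−α)/2}. Then for every continuous function θ : [t₁, t₂] → ℝ with x(t) = |x(t)|·e^{iθ(t)} one has θ(t₂) − θ(t₁) = (2/(2−α))·(π/2 − arcsin((ρ/r*)^{(2−α)/2})). -/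
open Filter Topology

set_option maxHeartbeats 1000000

lemma norm_hasDerivAt' {x : ℝ → ℂ} {v : ℂ} {t : ℝ} (hv : HasDerivAt x v t) (hx : x t ≠ 0) :
    HasDerivAt (fun s => ‖x s‖) ((((starRingEnd ℂ) (x t)) * v).re / ‖x t‖) t := by
  have hre : HasDerivAt (fun s => (x s).re) v.re t :=
    (Complex.reCLM.hasFDerivAt.comp_hasDerivAt t hv)
  have him : HasDerivAt (fun s => (x s).im) v.im t :=
    (Complex.imCLM.hasFDerivAt.comp_hasDerivAt t hv)
  have hq : HasDerivAt (fun s => Complex.normSq (x s))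
      (2 * (((starRingEnd ℂ) (x t)) * v).re) t := by
    have h1 := (hre.mul hre).add (him.mul him)
    have h2 : (fun s => Complex.normSq (x s)) = fun s => (x s).re * (x s).re + (x s).im * (x s).im :=
      funext fun s => by simp [Complex.normSq_apply]
    rw [h2]
    refine HasDerivAt.congr_deriv h1 ?_
    simp [Complex.mul_re]; ring
  have hq0 : Complex.normSq (x t) ≠ 0 := by
    simpa [Complex.normSq_eq_zero] using hx
  have h3 := hq.sqrt hq0
  have h4 : (fun s => ‖x s‖) = fun s => Real.sqrt (Complex.normSq (x s)) :=
    funext fun s => by rw [Complex.norm_def]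
  have h5 : Real.sqrt (Complex.normSq (x t)) = ‖x t‖ := by
    rw [Complex.norm_def]
  rw [h4]
  convert h3 using 1
  rw [h5]; ring

lemma alg1 {a b e f s R k ρ p : ℝ} (hR : R ≠ 0) (hs : s ≠ 0) (he : e ≠ 0) (hρ : ρ ≠ 0)
    (hp : p ≠ 0) (hb : b ≠ 0)
    (hfa : f * ρ = a) (heb : e * R = b) :
    k * a / R ^ 2 = 2 / (2 * p) * -(1 / (s / b) * (-(ρ * (k * s / R)) / R ^ 2 * p * (f / e))) := by
  rw [← hfa, ← heb]
  field_simp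

lemma alg2 {v B Rc X A are am I : ℂ} (hRc : Rc ≠ 0)
    (hkey : v * Rc ^ 2 = X * A) (hA : are + am * I = A) :
    ((v * B + X * (B * (-(am / Rc ^ 2) * I))) * Rc - X * B * (are / Rc)) / Rc ^ 2 = 0 := by
  rw [div_eq_zero_iff]
  left
  field_simp
  linear_combination B * hkey - B * X * hA

/-- angular variation of a zero-energy Kepler arc grazing a circle of radius ρ. -/
theorem stmt_11 (α m₁ ω ρ rstar t₁ t₂ : ℝ)
    (hα1 : 1 ≤ α) (hα2 : α < 2) (hm : 0 < m₁) (hω : 0 < ω)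
    (hρ : 0 < ρ) (hρr : ρ < rstar) (ht : t₁ < t₂)
    (x : ℝ → ℂ)
    (hx_ne : ∀ t ∈ Set.Icc t₁ t₂, x t ≠ 0)
    (hx_d1 : ∀ t ∈ Set.Icc t₁ t₂, DifferentiableAt ℝ x t)
    (hx_d2 : ∀ t ∈ Set.Icc t₁ t₂, DifferentiableAt ℝ (deriv x) t)
    (hx_c2 : ContinuousOn (deriv (deriv x)) (Set.Icc t₁ t₂))
    (hx_eq : ∀ t ∈ Set.Icc t₁ t₂,
      ((ω ^ 2 : ℝ) : ℂ) * deriv (deriv x) t = -(m₁ : ℂ) * x t / ((‖x t‖ ^ (α + 2) : ℝ) : ℂ))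
    (hx_en : ∀ t ∈ Set.Icc t₁ t₂,
      (1 / 2) * ‖deriv x t‖ ^ 2 = m₁ / (ω ^ 2 * α * ‖x t‖ ^ α))
    (hx_r1 : ‖x t₁‖ = ρ) (hx_r2 : ‖x t₂‖ = rstar)
    (hx_mono : ∀ t ∈ Set.Ioo t₁ t₂, 0 < deriv (fun s => ‖x s‖) t)
    (hx_am : ∀ t ∈ Set.Icc t₁ t₂,
      ((starRingEnd ℂ) (x t) * deriv x t).im
        = Real.sqrt (2 * m₁ / (ω ^ 2 * α)) * ρ ^ ((2 - α) / 2)) :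
    ∀ θ : ℝ → ℝ, ContinuousOn θ (Set.Icc t₁ t₂) →
      (∀ t ∈ Set.Icc t₁ t₂, x t = ((‖x t‖ : ℝ) : ℂ) * Complex.exp ((θ t : ℂ) * Complex.I)) →
      θ t₂ - θ t₁ = (2 / (2 - α)) * (Real.pi / 2 - Real.arcsin ((ρ / rstar) ^ ((2 - α) / 2))) := by
  intro θ hθc hθl
  have hα0 : (0:ℝ) < α := lt_of_lt_of_le one_pos hα1
  set p : ℝ := (2 - α) / 2 with hpdef
  have hp : 0 < p := by rw [hpdef]; linarith
  set k : ℝ := Real.sqrt (2 * m₁ / (ω ^ 2 * α)) with hkdef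
  have hden : (0:ℝ) < ω ^ 2 * α := by positivity
  have hk : 0 < k := Real.sqrt_pos.2 (by positivity)
  have hk2 : k ^ 2 = 2 * m₁ / (ω ^ 2 * α) := Real.sq_sqrt (by positivity)
  set r : ℝ → ℝ := fun s => ‖x s‖ with hrdef
  have hr_pos : ∀ t ∈ Set.Icc t₁ t₂, 0 < r t := fun t ht' => norm_pos_iff.2 (hx_ne t ht')
  have hx_cont : ContinuousOn x (Set.Icc t₁ t₂) :=
    fun t ht' => (hx_d1 t ht').continuousAt.continuousWithinAt
  have hr_cont : ContinuousOn r (Set.Icc t₁ t₂) := hx_cont.norm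
  have hr_deriv : ∀ t ∈ Set.Icc t₁ t₂,
      HasDerivAt r ((((starRingEnd ℂ) (x t)) * deriv x t).re / r t) t :=
    fun t ht' => norm_hasDerivAt' (hx_d1 t ht').hasDerivAt (hx_ne t ht')
  have hr_mono : StrictMonoOn r (Set.Icc t₁ t₂) := by
    apply strictMonoOn_of_deriv_pos (convex_Icc t₁ t₂) hr_cont
    intro s hs
    rw [interior_Icc] at hs
    exact hx_mono s hs
  have hρ_lt : ∀ t ∈ Set.Ioo t₁ t₂, ρ < r t := by
    intro t ht'
    have := hr_mono (Set.left_mem_Icc.2 ht.le) (Set.mem_Icc_of_Ioo ht') ht'.1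
    rwa [show r t₁ = ρ from hx_r1] at this
  -- real positivity of A.re on Ioo
  have hre_pos : ∀ t ∈ Set.Ioo t₁ t₂, 0 < (((starRingEnd ℂ) (x t)) * deriv x t).re := by
    intro t ht'
    have h1 := hx_mono t ht'
    have h2 := (hr_deriv t (Set.mem_Icc_of_Ioo ht')).deriv
    rw [h2] at h1
    have hRpos := hr_pos t (Set.mem_Icc_of_Ioo ht')
    exact (div_pos_iff.1 h1).resolve_right (fun h => absurd hRpos (by linarith [h.2])) |>.1
  -- the re of angular momentum on Ioo
  have hre_eq : ∀ t ∈ Set.Ioo t₁ t₂,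
      (((starRingEnd ℂ) (x t)) * deriv x t).re
        = k * Real.sqrt ((r t ^ p) ^ 2 - (ρ ^ p) ^ 2) := by
    intro t ht'
    have ht'' := Set.mem_Icc_of_Ioo ht'
    have hR0 : 0 < r t := hr_pos t ht''
    have hRρ : ρ < r t := hρ_lt t ht'
    set v : ℂ := deriv x t with hvdef
    set A : ℂ := (starRingEnd ℂ) (x t) * v with hAdef
    have hA_norm : A.re ^ 2 + A.im ^ 2 = (r t) ^ 2 * ‖v‖ ^ 2 := by
      have h1 : ‖A‖ = r t * ‖v‖ := by
        rw [hAdef, norm_mul, RCLike.norm_conj]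
      have h2 : A.re ^ 2 + A.im ^ 2 = ‖A‖ ^ 2 := by
        rw [Complex.sq_norm, Complex.normSq_apply]; ring
      rw [h2, h1]; ring
    have hRα : (0:ℝ) < r t ^ α := Real.rpow_pos_of_pos hR0 α
    have hv2 : ‖v‖ ^ 2 * r t ^ α = k ^ 2 := by
      have hen := hx_en t ht''
      rw [show ‖x t‖ = r t from rfl, show deriv x t = v from rfl] at hen
      have h3 : ‖v‖ ^ 2 = 2 * (m₁ / (ω ^ 2 * α * r t ^ α)) := by linarith
      rw [hk2, h3]
      field_simp
    have hR2p : (r t ^ p) ^ 2 * r t ^ α = r t ^ 2 := by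
      rw [← Real.rpow_natCast (r t ^ p) 2, ← Real.rpow_mul hR0.le, ← Real.rpow_add hR0]
      rw [show p * ((2:ℕ):ℝ) + α = ((2:ℕ):ℝ) by push_cast; rw [hpdef]; ring]
      rw [Real.rpow_natCast]
    have hAim : A.im = k * ρ ^ p := hx_am t ht''
    have e1 : (r t) ^ 2 * ‖v‖ ^ 2 = k ^ 2 * (r t ^ p) ^ 2 := by
      calc (r t) ^ 2 * ‖v‖ ^ 2 = (r t ^ p) ^ 2 * r t ^ α * ‖v‖ ^ 2 := by rw [hR2p]
        _ = (r t ^ p) ^ 2 * (‖v‖ ^ 2 * r t ^ α) := by ring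
        _ = (r t ^ p) ^ 2 * k ^ 2 := by rw [hv2]
        _ = k ^ 2 * (r t ^ p) ^ 2 := by ring
    have hre2 : A.re ^ 2 = k ^ 2 * ((r t ^ p) ^ 2 - (ρ ^ p) ^ 2) := by
      rw [hAim] at hA_norm
      linear_combination hA_norm + e1
    have hpos := hre_pos t ht'
    have hab : ρ ^ p < r t ^ p := Real.rpow_lt_rpow hρ.le hRρ hp
    have hW : 0 < (r t ^ p) ^ 2 - (ρ ^ p) ^ 2 := by
      have h0 : 0 < ρ ^ p := Real.rpow_pos_of_pos hρ p
      nlinarith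
    have := Real.sqrt_sq hpos.le
    rw [← this, hre2, Real.sqrt_mul (sq_nonneg k), Real.sqrt_sq hk.le]
  -- θ₀ definition
  set θ₀ : ℝ → ℝ := fun s => θ t₁ + (2 / (2 - α)) * (Real.pi / 2 - Real.arcsin ((ρ / r s) ^ p))
    with hθ₀def
  have hθ₀_t₁ : θ₀ t₁ = θ t₁ := by
    have : r t₁ = ρ := hx_r1
    simp [hθ₀def, this, div_self hρ.ne', Real.one_rpow, Real.arcsin_one]
  have hθ₀_cont : ContinuousOn θ₀ (Set.Icc t₁ t₂) := by
    apply continuousOn_const.add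
    apply continuousOn_const.mul
    apply continuousOn_const.sub
    apply Real.continuous_arcsin.comp_continuousOn
    exact (continuousOn_const.div hr_cont (fun t ht' => (hr_pos t ht').ne')).rpow_const
      (fun t ht' => Or.inr hp.le)
  have hθ₀_deriv : ∀ t ∈ Set.Ioo t₁ t₂,
      HasDerivAt θ₀ ((((starRingEnd ℂ) (x t)) * deriv x t).im / (r t) ^ 2) t := by
    intro t ht'
    have ht'' := Set.mem_Icc_of_Ioo ht'
    have hR0 : 0 < r t := hr_pos t ht''
    have hRρ : ρ < r t := hρ_lt t ht'
    have hab : ρ ^ p < r t ^ p := Real.rpow_lt_rpow hρ.le hRρ hp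
    have ha0 : 0 < ρ ^ p := Real.rpow_pos_of_pos hρ p
    have hb0 : 0 < r t ^ p := Real.rpow_pos_of_pos hR0 p
    have hW : 0 < (r t ^ p) ^ 2 - (ρ ^ p) ^ 2 := by nlinarith
    have hs0 : 0 < Real.sqrt ((r t ^ p) ^ 2 - (ρ ^ p) ^ 2) := Real.sqrt_pos.2 hW
    have hu_eq : (ρ / r t) ^ p = ρ ^ p / r t ^ p := Real.div_rpow hρ.le hR0.le p
    have hu0 : 0 < (ρ / r t) ^ p := by rw [hu_eq]; positivity
    have hu1 : (ρ / r t) ^ p < 1 := by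
      rw [hu_eq]
      exact (div_lt_one hb0).2 hab
    -- derivative of the inner function
    have hr' : HasDerivAt r ((((starRingEnd ℂ) (x t)) * deriv x t).re / r t) t :=
      hr_deriv t ht''
    have hdiv : HasDerivAt (fun s => ρ / r s)
        (-(ρ * ((((starRingEnd ℂ) (x t)) * deriv x t).re / r t)) / r t ^ 2) t := by
      have h := (hasDerivAt_const t ρ).div hr' hR0.ne'
      exact h.congr_deriv (by ring)
    have hrpow : HasDerivAt (fun s => (ρ / r s) ^ p)
        ((-(ρ * ((((starRingEnd ℂ) (x t)) * deriv x t).re / r t)) / r t ^ 2) * p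
          * (ρ / r t) ^ (p - 1)) t :=
      hdiv.rpow_const (Or.inl (by positivity))
    have harc : HasDerivAt (fun s => Real.arcsin ((ρ / r s) ^ p))
        ((1 / Real.sqrt (1 - ((ρ / r t) ^ p) ^ 2))
          * ((-(ρ * ((((starRingEnd ℂ) (x t)) * deriv x t).re / r t)) / r t ^ 2) * p
            * (ρ / r t) ^ (p - 1))) t :=
      (Real.hasDerivAt_arcsin (by linarith) (by linarith)).comp t hrpow
    have hfull := ((harc.const_sub (Real.pi / 2)).const_mul (2 / (2 - α))).const_add (θ t₁)
    refine hfull.congr_deriv ?_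
    symm
    -- now prove the value equality
    have h_re : (((starRingEnd ℂ) (x t)) * deriv x t).re
        = k * Real.sqrt ((r t ^ p) ^ 2 - (ρ ^ p) ^ 2) := hre_eq t ht'
    have h_im : (((starRingEnd ℂ) (x t)) * deriv x t).im = k * ρ ^ p := hx_am t ht''
    have hsq : Real.sqrt (1 - ((ρ / r t) ^ p) ^ 2)
        = Real.sqrt ((r t ^ p) ^ 2 - (ρ ^ p) ^ 2) / r t ^ p := by
      rw [hu_eq]
      rw [show (1 : ℝ) - (ρ ^ p / r t ^ p) ^ 2 = ((r t ^ p) ^ 2 - (ρ ^ p) ^ 2) / (r t ^ p) ^ 2 by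
        field_simp]
      rw [Real.sqrt_div hW.le, Real.sqrt_sq hb0.le]
    have hdivp : (ρ / r t) ^ (p - 1) = ρ ^ (p - 1) / r t ^ (p - 1) :=
      Real.div_rpow hρ.le hR0.le (p - 1)
    have hfa : ρ ^ (p - 1) * ρ = ρ ^ p := by
      rw [← Real.rpow_add_one hρ.ne' (p - 1)]
      norm_num
    have heb : r t ^ (p - 1) * r t = r t ^ p := by
      rw [← Real.rpow_add_one hR0.ne' (p - 1)]
      norm_num
    have he0 : 0 < r t ^ (p - 1) := Real.rpow_pos_of_pos hR0 _
    have hf0 : 0 < ρ ^ (p - 1) := Real.rpow_pos_of_pos hρ _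
    have hq2p : (2:ℝ) - α = 2 * p := by rw [hpdef]; ring
    rw [h_re, h_im, hsq, hdivp, hq2p]
    exact alg1 hR0.ne' hs0.ne' he0.ne' hρ.ne' hp.ne' hb0.ne' hfa heb
  -- the gauge function g
  set g : ℝ → ℂ := fun s => x s * Complex.exp (-(θ₀ s : ℂ) * Complex.I) / ((r s : ℝ) : ℂ)
    with hgdef
  have hg_cont : ContinuousOn g (Set.Icc t₁ t₂) := by
    apply ContinuousOn.div
    · exact hx_cont.mul (Complex.continuous_exp.comp_continuousOn
        (((Complex.continuous_ofReal.comp_continuousOn hθ₀_cont).neg).mul continuousOn_const))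
    · exact Complex.continuous_ofReal.comp_continuousOn hr_cont
    · intro t ht'
      simpa using (hr_pos t ht').ne'
  have hg_deriv : ∀ t ∈ Set.Ioo t₁ t₂, HasDerivAt g 0 t := by
    intro t ht'
    have ht'' := Set.mem_Icc_of_Ioo ht'
    have hR0 : 0 < r t := hr_pos t ht''
    have hRc : ((r t : ℝ) : ℂ) ≠ 0 := by exact_mod_cast hR0.ne'
    set v : ℂ := deriv x t with hvdef
    set A : ℂ := (starRingEnd ℂ) (x t) * v with hAdef
    have hxd : HasDerivAt x v t := (hx_d1 t ht'').hasDerivAt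
    have hθd : HasDerivAt θ₀ (A.im / r t ^ 2) t := hθ₀_deriv t ht'
    have hθC : HasDerivAt (fun s => ((θ₀ s : ℝ) : ℂ)) (((A.im / r t ^ 2 : ℝ) : ℂ)) t :=
      Complex.ofRealCLM.hasFDerivAt.comp_hasDerivAt t hθd
    have hexp : HasDerivAt (fun s => Complex.exp (-(θ₀ s : ℂ) * Complex.I))
        (Complex.exp (-(θ₀ t : ℂ) * Complex.I) * (-((A.im / r t ^ 2 : ℝ) : ℂ) * Complex.I)) t :=
      (hθC.neg.mul_const Complex.I).cexp
    have hrC : HasDerivAt (fun s => ((r s : ℝ) : ℂ)) (((A.re / r t : ℝ) : ℂ)) t :=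
      Complex.ofRealCLM.hasFDerivAt.comp_hasDerivAt t (hr_deriv t ht'')
    have hdiv := (hxd.mul hexp).div hrC hRc
    have hxc : x t * (starRingEnd ℂ) (x t) = ((r t : ℝ) : ℂ) ^ 2 := by
      rw [Complex.mul_conj, Complex.normSq_eq_norm_sq]
      push_cast
      rw [show ‖x t‖ = r t from rfl]
    have hkey : v * ((r t : ℝ) : ℂ) ^ 2 = x t * A := by
      rw [hAdef, ← mul_assoc, hxc]
      ring
    have hzero : ((v * Complex.exp (-(θ₀ t : ℂ) * Complex.I)
          + x t * (Complex.exp (-(θ₀ t : ℂ) * Complex.I) * (-((A.im / r t ^ 2 : ℝ) : ℂ) * Complex.I)))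
            * ((r t : ℝ) : ℂ)
          - x t * Complex.exp (-(θ₀ t : ℂ) * Complex.I) * ((A.re / r t : ℝ) : ℂ))
          / ((r t : ℝ) : ℂ) ^ 2 = 0 := by
      have hc1 : ((A.im / r t ^ 2 : ℝ) : ℂ) = (A.im : ℂ) / ((r t : ℝ) : ℂ) ^ 2 := by
        push_cast; ring
      have hc2 : ((A.re / r t : ℝ) : ℂ) = (A.re : ℂ) / ((r t : ℝ) : ℂ) := by
        push_cast; ring
      rw [hc1, hc2]
      exact alg2 hRc hkey (Complex.re_add_im A)
    rw [← hzero]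
    exact hdiv
  -- g is constant on Icc
  have hg_const : ∀ t ∈ Set.Icc t₁ t₂, g t = g t₁ := by
    have hmem : ∀ t ∈ Set.Icc t₁ t₂, True := fun _ _ => trivial
    have hIoo : interior (Set.Icc t₁ t₂) = Set.Ioo t₁ t₂ := interior_Icc
    have key : ∀ (f : ℝ → ℝ), ContinuousOn f (Set.Icc t₁ t₂) →
        (∀ t ∈ Set.Ioo t₁ t₂, HasDerivAt f 0 t) → ∀ t ∈ Set.Icc t₁ t₂, f t = f t₁ := by
      intro f hfc hfd t ht'
      have hmono : MonotoneOn f (Set.Icc t₁ t₂) := by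
        apply monotoneOn_of_hasDerivWithinAt_nonneg (convex_Icc t₁ t₂) hfc (f' := fun _ => 0)
        · intro s hs; rw [hIoo] at hs ⊢; exact (hfd s hs).hasDerivWithinAt
        · intro s hs; exact le_refl 0
      have hanti : AntitoneOn f (Set.Icc t₁ t₂) := by
        apply antitoneOn_of_hasDerivWithinAt_nonpos (convex_Icc t₁ t₂) hfc (f' := fun _ => 0)
        · intro s hs; rw [hIoo] at hs ⊢; exact (hfd s hs).hasDerivWithinAt
        · intro s hs; exact le_refl 0
      have h1 : f t₁ ≤ f t := hmono (Set.left_mem_Icc.2 ht.le) ht' ht'.1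
      have h2 : f t ≤ f t₁ := hanti (Set.left_mem_Icc.2 ht.le) ht' ht'.1
      linarith
    intro t ht'
    have hre := key (fun s => (g s).re) (Complex.continuous_re.comp_continuousOn hg_cont)
      (fun s hs => by
        exact (Complex.reCLM.hasFDerivAt.comp_hasDerivAt s (hg_deriv s hs)).congr_deriv (by simp)) t ht'
    have him := key (fun s => (g s).im) (Complex.continuous_im.comp_continuousOn hg_cont)
      (fun s hs => by
        exact (Complex.imCLM.hasFDerivAt.comp_hasDerivAt s (hg_deriv s hs)).congr_deriv (by simp)) t ht'
    exact Complex.ext hre him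
  have hg_t₁ : g t₁ = 1 := by
    have hx1 := hθl t₁ (Set.left_mem_Icc.2 ht.le)
    rw [hgdef]
    simp only
    rw [hθ₀_t₁, hx1, hx_r1]
    rw [mul_assoc, ← Complex.exp_add]
    simp only [neg_mul]
    rw [add_neg_cancel, Complex.exp_zero, mul_one]
    rw [show r t₁ = ρ from hx_r1]
    exact div_self (by exact_mod_cast hρ.ne')
  -- x t = r t * exp(θ₀ t * I)
  have hx_polar : ∀ t ∈ Set.Icc t₁ t₂, x t = ((r t : ℝ) : ℂ) * Complex.exp ((θ₀ t : ℂ) * Complex.I) := by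
    intro t ht'
    have h1 : g t = 1 := (hg_const t ht').trans hg_t₁
    have hr0 : ((r t : ℝ) : ℂ) ≠ 0 := by simpa using (hr_pos t ht').ne'
    have h2 : x t * Complex.exp (-(θ₀ t : ℂ) * Complex.I) = ((r t : ℝ) : ℂ) := by
      rw [div_eq_one_iff_eq hr0] at h1; exact h1
    have h3 : Complex.exp (-(θ₀ t : ℂ) * Complex.I) * Complex.exp ((θ₀ t : ℂ) * Complex.I) = 1 := by
      rw [← Complex.exp_add]
      simp only [neg_mul]
      rw [neg_add_cancel, Complex.exp_zero]
    calc x t = x t * (Complex.exp (-(θ₀ t : ℂ) * Complex.I) * Complex.exp ((θ₀ t : ℂ) * Complex.I)) := by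
          rw [h3, mul_one]
      _ = (x t * Complex.exp (-(θ₀ t : ℂ) * Complex.I)) * Complex.exp ((θ₀ t : ℂ) * Complex.I) := by ring
      _ = ((r t : ℝ) : ℂ) * Complex.exp ((θ₀ t : ℂ) * Complex.I) := by rw [h2]
  -- θ and θ₀ differ by a constant multiple of 2π
  have hlift : ∀ t ∈ Set.Icc t₁ t₂, ∃ n : ℤ, θ t - θ₀ t = n * (2 * Real.pi) := by
    intro t ht'
    have h1 := hθl t ht'
    have h2 := hx_polar t ht'
    have hr0 : ((r t : ℝ) : ℂ) ≠ 0 := by simpa using (hr_pos t ht').ne'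
    have h4 : ((r t : ℝ) : ℂ) * Complex.exp ((θ₀ t : ℂ) * Complex.I)
        = ((r t : ℝ) : ℂ) * Complex.exp ((θ t : ℂ) * Complex.I) := h2.symm.trans h1
    have h3 : Complex.exp ((θ₀ t : ℂ) * Complex.I) = Complex.exp ((θ t : ℂ) * Complex.I) :=
      mul_left_cancel₀ hr0 h4
    rw [Complex.exp_eq_exp_iff_exists_int] at h3
    obtain ⟨n, hn⟩ := h3
    refine ⟨-n, ?_⟩
    have := congrArg Complex.im hn
    simp [Complex.mul_im, Complex.mul_re] at this
    push_cast
    linarith [this]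
  -- conclude equality of differences by IVT
  have hD_eq : θ t₂ - θ₀ t₂ = θ t₁ - θ₀ t₁ := by
    obtain ⟨n₂, hn₂⟩ := hlift t₂ (Set.right_mem_Icc.2 ht.le)
    obtain ⟨n₁, hn₁⟩ := hlift t₁ (Set.left_mem_Icc.2 ht.le)
    have hDc : ContinuousOn (fun s => θ s - θ₀ s) (Set.Icc t₁ t₂) := hθc.sub hθ₀_cont
    by_contra hne
    have hπ : (0:ℝ) < Real.pi := Real.pi_pos
    have hne' : n₁ ≠ n₂ := by
      intro h; apply hne; rw [hn₁, hn₂, h]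
    rcases lt_or_gt_of_ne hne' with hlt | hgt
    · have hw : (n₁ * (2 * Real.pi) + Real.pi) ∈
          Set.Icc ((fun s => θ s - θ₀ s) t₁) ((fun s => θ s - θ₀ s) t₂) := by
        have m1 : θ t₁ - θ₀ t₁ ≤ (n₁ : ℝ) * (2 * Real.pi) + Real.pi := by
          rw [hn₁]; nlinarith
        have m2 : (n₁ : ℝ) * (2 * Real.pi) + Real.pi ≤ θ t₂ - θ₀ t₂ := by
          rw [hn₂]
          have : (n₁ : ℝ) + 1 ≤ n₂ := by exact_mod_cast hlt
          nlinarith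
        exact ⟨m1, m2⟩
      obtain ⟨s, hs, hws⟩ := intermediate_value_Icc ht.le hDc hw
      obtain ⟨m, hm⟩ := hlift s hs
      have hws : θ s - θ₀ s = (n₁ : ℝ) * (2 * Real.pi) + Real.pi := hws
      rw [hm] at hws
      have : (2 * m : ℝ) = 2 * n₁ + 1 := by nlinarith [hπ]
      have : (2 * m : ℤ) = 2 * n₁ + 1 := by exact_mod_cast this
      omega
    · have hw : (n₂ * (2 * Real.pi) + Real.pi) ∈
          Set.Icc ((fun s => θ s - θ₀ s) t₂) ((fun s => θ s - θ₀ s) t₁) := by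
        have m1 : θ t₂ - θ₀ t₂ ≤ (n₂ : ℝ) * (2 * Real.pi) + Real.pi := by
          rw [hn₂]; nlinarith
        have m2 : (n₂ : ℝ) * (2 * Real.pi) + Real.pi ≤ θ t₁ - θ₀ t₁ := by
          rw [hn₁]
          have : (n₂ : ℝ) + 1 ≤ n₁ := by exact_mod_cast hgt
          nlinarith
        exact ⟨m1, m2⟩
      obtain ⟨s, hs, hws⟩ := intermediate_value_Icc' ht.le hDc hw
      obtain ⟨m, hm⟩ := hlift s hs
      have hws : θ s - θ₀ s = (n₂ : ℝ) * (2 * Real.pi) + Real.pi := hws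
      rw [hm] at hws
      have : (2 * m : ℝ) = 2 * n₂ + 1 := by nlinarith [hπ]
      have : (2 * m : ℤ) = 2 * n₂ + 1 := by exact_mod_cast this
      omega
  -- final computation
  have hfinal : θ t₂ - θ t₁ = θ₀ t₂ - θ₀ t₁ := by linarith [hD_eq]
  rw [hfinal, hθ₀_t₁, hθ₀def]
  simp only
  rw [show r t₂ = rstar from hx_r2]
  ring
end
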